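/- arXiv:1210.4710 — 3 statements merged into one kernel-verified Lean document; each statement's English description precedes it below -/
import Mathlib

section
/- Let Δ ≥ 2 be even and let G be a simple graph with no isolated vertices satisfying ν(G) = Δ/2, Δ(G) = Δ, and |E(G)| = (Δ+1)Δ/2. Then G is isomorphic to the complete graph K_{Δ+1}. -/
open scoped Classical

/-- `M` is a matching of `G`, given as a finite set of edges. -/
def IsMatchingFinset {V : Type*} (G : SimpleGraph V) (M : Finset (Sym2 V)) : Prop :=
  (M : Set (Sym2 V)) ⊆ G.edgeSet ∧
    ∀ e ∈ M, ∀ f ∈ M, e ≠ f → ∀ v : V, ¬(v ∈ e ∧ v ∈ f)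

/-- ν(G): the maximum size of a matching of `G`. -/
noncomputable def matchingNumber {V : Type*} (G : SimpleGraph V) : ℕ :=
  sSup {n | ∃ M : Finset (Sym2 V), IsMatchingFinset G M ∧ M.card = n}

/-- A proper edge coloring of `G` using colors `< n`. -/
def IsProperEdgeColoring {V : Type*} (G : SimpleGraph V) (n : ℕ) (c : Sym2 V → ℕ) : Prop :=
  (∀ e ∈ G.edgeSet, c e < n) ∧
    ∀ e ∈ G.edgeSet, ∀ f ∈ G.edgeSet, e ≠ f → (∃ v : V, v ∈ e ∧ v ∈ f) → c e ≠ c f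

/-- χ'(G): the edge chromatic index of `G`. -/
noncomputable def chromaticIndex {V : Type*} (G : SimpleGraph V) : ℕ :=
  sInf {n | ∃ c : Sym2 V → ℕ, IsProperEdgeColoring G n c}

/-- `G` is friendly-edge-colorable: its edge set is partitioned into maximum matchings. -/
noncomputable def Friendly {V : Type*} [Fintype V] (G : SimpleGraph V) : Prop :=
  ∃ P : Finset (Finset (Sym2 V)),
    (∀ M ∈ P, IsMatchingFinset G M ∧ M.card = matchingNumber G) ∧
    (∀ e, e ∈ G.edgeFinset ↔ ∃ M ∈ P, e ∈ M) ∧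
    ∀ M ∈ P, ∀ N ∈ P, M ≠ N → Disjoint M N

/-- The graph `G` with vertex `x` deleted. -/
def delVert {V : Type*} (G : SimpleGraph V) (x : V) : SimpleGraph {v : V // v ≠ x} :=
  G.induce {v : V | v ≠ x}

/-- `G` has a perfect matching. -/
def HasPerfectMatchingFinset {V : Type*} (G : SimpleGraph V) : Prop :=
  ∃ M : Finset (Sym2 V), IsMatchingFinset G M ∧ ∀ v : V, ∃ e ∈ M, v ∈ e

/-- `G` is factor-critical. -/
def FactorCritical {V : Type*} (G : SimpleGraph V) : Prop :=
  G.Connected ∧ ∀ x : V, HasPerfectMatchingFinset (delVert G x)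



namespace CHaux
variable {V : Type*}

noncomputable def pairFinset (e : Sym2 V) : Finset V :=
  Sym2.lift ⟨fun a b => {a, b}, fun a b => Finset.pair_comm a b⟩ e

@[simp] lemma mem_pairFinset {v : V} {e : Sym2 V} : v ∈ pairFinset e ↔ v ∈ e := by
  induction e using Sym2.ind with
  | _ a b => simp [pairFinset, Sym2.mem_iff, Finset.mem_insert]

lemma card_pairFinset_le (e : Sym2 V) : (pairFinset e).card ≤ 2 := by
  induction e using Sym2.ind with
  | _ a b =>
    simp only [pairFinset, Sym2.lift_mk]
    exact (Finset.card_insert_le _ _).trans (by simp)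

noncomputable def mcover (M : Finset (Sym2 V)) : Finset V := M.biUnion pairFinset

lemma mem_mcover {v : V} {M : Finset (Sym2 V)} : v ∈ mcover M ↔ ∃ e ∈ M, v ∈ e := by
  simp [mcover, Finset.mem_biUnion]

lemma card_mcover_le (M : Finset (Sym2 V)) : (mcover M).card ≤ 2 * M.card := by
  refine (Finset.card_biUnion_le).trans ?_
  calc ∑ e ∈ M, (pairFinset e).card ≤ ∑ _e ∈ M, 2 :=
        Finset.sum_le_sum fun e _ => card_pairFinset_le e
    _ = 2 * M.card := by rw [Finset.sum_const, smul_eq_mul, mul_comm]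

lemma mcover_mono {M N : Finset (Sym2 V)} (h : M ⊆ N) : mcover M ⊆ mcover N := by
  intro v hv; rw [mem_mcover] at *; obtain ⟨e, he, hve⟩ := hv; exact ⟨e, h he, hve⟩

variable {G : SimpleGraph V}

lemma matching_subset {M N : Finset (Sym2 V)} (h : N ⊆ M) (hM : IsMatchingFinset G M) :
    IsMatchingFinset G N :=
  ⟨fun e he => hM.1 (h he), fun e he f hf => hM.2 e (h he) f (h hf)⟩

lemma matching_unique {M : Finset (Sym2 V)} (hM : IsMatchingFinset G M) {e f : Sym2 V} {v : V}
    (he : e ∈ M) (hf : f ∈ M) (hve : v ∈ e) (hvf : v ∈ f) : e = f := by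
  by_contra h
  exact hM.2 e he f hf h v ⟨hve, hvf⟩

lemma matching_edge {M : Finset (Sym2 V)} (hM : IsMatchingFinset G M) {e : Sym2 V} {y : V}
    (he : e ∈ M) (hy : y ∈ e) : ∃ v, e = s(y, v) ∧ G.Adj y v := by
  obtain ⟨v, rfl⟩ := Sym2.mem_iff_exists.1 hy
  exact ⟨v, rfl, (G.mem_edgeSet).1 (hM.1 he)⟩

lemma matching_insert {M : Finset (Sym2 V)} (hM : IsMatchingFinset G M) {a b : V}
    (hab : G.Adj a b) (ha : a ∉ mcover M) (hb : b ∉ mcover M) :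
    IsMatchingFinset G (insert s(a, b) M) ∧ (insert s(a, b) M).card = M.card + 1 := by
  have hnotmem : s(a, b) ∉ M := fun h => ha (mem_mcover.2 ⟨_, h, by simp⟩)
  constructor
  · constructor
    · intro e he
      rcases Finset.mem_insert.1 he with rfl | he
      · exact (G.mem_edgeSet).2 hab
      · exact hM.1 he
    · intro e he f hf hef v hv
      rcases Finset.mem_insert.1 he with he1 | he1
      · rcases Finset.mem_insert.1 hf with hf1 | hf1
        · exact hef (he1.trans hf1.symm)
        · have hva : v = a ∨ v = b := Sym2.mem_iff.1 (he1 ▸ hv.1)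
          rcases hva with rfl | rfl
          · exact ha (mem_mcover.2 ⟨f, hf1, hv.2⟩)
          · exact hb (mem_mcover.2 ⟨f, hf1, hv.2⟩)
      · rcases Finset.mem_insert.1 hf with hf1 | hf1
        · have hva : v = a ∨ v = b := Sym2.mem_iff.1 (hf1 ▸ hv.2)
          rcases hva with rfl | rfl
          · exact ha (mem_mcover.2 ⟨e, he1, hv.1⟩)
          · exact hb (mem_mcover.2 ⟨e, he1, hv.1⟩)
        · exact hM.2 e he1 f hf1 hef v hv
  · rw [Finset.card_insert_of_notMem hnotmem]

lemma mcover_insert {M : Finset (Sym2 V)} {a b : V} :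
    mcover (insert s(a, b) M) ⊆ insert a (insert b (mcover M)) := by
  intro v hv
  rw [mem_mcover] at hv
  obtain ⟨e, he, hve⟩ := hv
  rcases Finset.mem_insert.1 he with rfl | he
  · rcases Sym2.mem_iff.1 hve with rfl | rfl <;> simp
  · simp [Finset.mem_insert, mem_mcover]
    tauto

lemma matching_union {M N : Finset (Sym2 V)} (hM : IsMatchingFinset G M)
    (hN : IsMatchingFinset G N) (hd : ∀ v, v ∈ mcover M → v ∉ mcover N) :
    IsMatchingFinset G (M ∪ N) ∧ (M ∪ N).card = M.card + N.card := by
  have hdis : Disjoint M N := by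
    rw [Finset.disjoint_left]
    intro e heM heN
    induction e using Sym2.ind with
    | _ a b =>
      exact hd a (mem_mcover.2 ⟨_, heM, by simp⟩) (mem_mcover.2 ⟨_, heN, by simp⟩)
  refine ⟨⟨?_, ?_⟩, Finset.card_union_of_disjoint hdis⟩
  · intro e he
    rcases Finset.mem_union.1 he with he | he
    · exact hM.1 he
    · exact hN.1 he
  · intro e he f hf hef v hv
    rcases Finset.mem_union.1 he with he | he <;> rcases Finset.mem_union.1 hf with hf | hf
    · exact hM.2 e he f hf hef v hv
    · exact hd v (mem_mcover.2 ⟨e, he, hv.1⟩) (mem_mcover.2 ⟨f, hf, hv.2⟩)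
    · exact hd v (mem_mcover.2 ⟨f, hf, hv.2⟩) (mem_mcover.2 ⟨e, he, hv.1⟩)
    · exact hN.2 e he f hf hef v hv

end CHaux
namespace CHaux
variable {V : Type*} {G : SimpleGraph V}

lemma exchange (G : SimpleGraph V) : ∀ (n : ℕ) (M₁ M₂ : Finset (Sym2 V)), M₁.card ≤ n →
    IsMatchingFinset G M₁ → IsMatchingFinset G M₂ → ∀ y, y ∉ mcover M₂ →
    (∃ N, IsMatchingFinset G N ∧ N.card = M₂.card + 1 ∧
      mcover N ⊆ mcover M₁ ∪ mcover M₂) ∨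
    (∃ M₃ t, IsMatchingFinset G M₃ ∧ M₃.card = M₁.card ∧ y ∉ mcover M₃ ∧
      mcover M₃ ⊆ mcover M₁ ∪ mcover M₂ ∧ ∀ a ∈ mcover M₃, a ∈ mcover M₁ ∨ a = t) := by
  intro n
  induction n with
  | zero =>
    intro M₁ M₂ hn h1 h2 y hy
    right
    refine ⟨M₁, y, h1, rfl, ?_, Finset.subset_union_left, fun a ha => Or.inl ha⟩
    rw [Nat.le_zero] at hn
    rw [Finset.card_eq_zero] at hn
    subst hn
    simp [mcover]
  | succ n ih =>
    intro M₁ M₂ hn h1 h2 y hy2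
    by_cases hy1 : y ∈ mcover M₁
    · obtain ⟨e, heM, hye⟩ := mem_mcover.1 hy1
      obtain ⟨v, rfl, hadj⟩ := matching_edge h1 heM hye
      have hyv : y ≠ v := hadj.ne
      have hvM1 : v ∈ mcover M₁ := mem_mcover.2 ⟨_, heM, by simp⟩
      by_cases hv2 : v ∈ mcover M₂
      · obtain ⟨f, hfM, hvf⟩ := mem_mcover.1 hv2
        obtain ⟨v', rfl, hadj'⟩ := matching_edge h2 hfM hvf
        have hvv' : v ≠ v' := hadj'.ne
        have hv'y : v' ≠ y := by
          rintro rfl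
          exact hy2 (mem_mcover.2 ⟨_, hfM, by simp⟩)
        have hv'2 : v' ∈ mcover M₂ := mem_mcover.2 ⟨_, hfM, by simp⟩
        -- vertices y, v covered only by e in M₁; v, v' only by f in M₂
        have hyonly : ∀ g ∈ M₁, y ∈ g → g = s(y, v) := fun g hg hyg =>
          matching_unique h1 hg heM hyg (by simp)
        have hvonly1 : ∀ g ∈ M₁, v ∈ g → g = s(y, v) := fun g hg hvg =>
          matching_unique h1 hg heM hvg (by simp)
        have hvonly2 : ∀ g ∈ M₂, v ∈ g → g = s(v, v') := fun g hg hvg =>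
          matching_unique h2 hg hfM hvg (by simp)
        have hv'only2 : ∀ g ∈ M₂, v' ∈ g → g = s(v, v') := fun g hg hvg =>
          matching_unique h2 hg hfM hvg (by simp)
        have hyE : y ∉ mcover (M₁.erase s(y, v)) := by
          intro h
          obtain ⟨g, hg, hyg⟩ := mem_mcover.1 h
          exact (Finset.mem_erase.1 hg).1 (hyonly g (Finset.mem_erase.1 hg).2 hyg)
        have hvE1 : v ∉ mcover (M₁.erase s(y, v)) := by
          intro h
          obtain ⟨g, hg, hvg⟩ := mem_mcover.1 h
          exact (Finset.mem_erase.1 hg).1 (hvonly1 g (Finset.mem_erase.1 hg).2 hvg)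
        have hvE2 : v ∉ mcover (M₂.erase s(v, v')) := by
          intro h
          obtain ⟨g, hg, hvg⟩ := mem_mcover.1 h
          exact (Finset.mem_erase.1 hg).1 (hvonly2 g (Finset.mem_erase.1 hg).2 hvg)
        have hv'E2 : v' ∉ mcover (M₂.erase s(v, v')) := by
          intro h
          obtain ⟨g, hg, hvg⟩ := mem_mcover.1 h
          exact (Finset.mem_erase.1 hg).1 (hv'only2 g (Finset.mem_erase.1 hg).2 hvg)
        by_cases hv'1 : v' ∈ mcover M₁
        · -- recurse
          have hcard : (M₁.erase s(y, v)).card ≤ n := by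
            rw [Finset.card_erase_of_mem heM]
            omega
          have h1' : IsMatchingFinset G (M₁.erase s(y, v)) :=
            matching_subset (Finset.erase_subset _ _) h1
          have h2' : IsMatchingFinset G (M₂.erase s(v, v')) :=
            matching_subset (Finset.erase_subset _ _) h2
          have hsub1 : mcover (M₁.erase s(y, v)) ⊆ mcover M₁ := mcover_mono (Finset.erase_subset _ _)
          have hsub2 : mcover (M₂.erase s(v, v')) ⊆ mcover M₂ := mcover_mono (Finset.erase_subset _ _)
          rcases ih (M₁.erase s(y, v)) (M₂.erase s(v, v')) hcard h1' h2' v' hv'E2 with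
            ⟨N, hN, hNc, hNs⟩ | ⟨M₃, t, hM₃, hM₃c, hvM₃, hM₃s, hM₃t⟩
          · -- win : add edge y v
            left
            have hyN : y ∉ mcover N := by
              intro h
              rcases Finset.mem_union.1 (hNs h) with h' | h'
              · exact hyE h'
              · exact hy2 (hsub2 h')
            have hvN : v ∉ mcover N := by
              intro h
              rcases Finset.mem_union.1 (hNs h) with h' | h'
              · exact hvE1 h'
              · exact hvE2 h'
            obtain ⟨hNm, hNcard⟩ := matching_insert hN hadj hyN hvN
            refine ⟨_, hNm, ?_, ?_⟩
            · rw [hNcard, hNc, Finset.card_erase_of_mem hfM]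
              have : 1 ≤ M₂.card := Finset.card_pos.2 ⟨_, hfM⟩
              omega
            · refine (mcover_insert).trans ?_
              intro a ha
              rcases Finset.mem_insert.1 ha with rfl | ha
              · exact Finset.mem_union.2 (Or.inl hy1)
              rcases Finset.mem_insert.1 ha with rfl | ha
              · exact Finset.mem_union.2 (Or.inl hvM1)
              rcases Finset.mem_union.1 (hNs ha) with h' | h'
              · exact Finset.mem_union.2 (Or.inl (hsub1 h'))
              · exact Finset.mem_union.2 (Or.inr (hsub2 h'))
          · -- lose : add edge v v'
            right
            have hvM₃' : v ∉ mcover M₃ := by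
              intro h
              rcases Finset.mem_union.1 (hM₃s h) with h' | h'
              · exact hvE1 h'
              · exact hvE2 h'
            obtain ⟨hm, hc⟩ := matching_insert hM₃ hadj' hvM₃' hvM₃
            refine ⟨_, t, hm, ?_, ?_, ?_, ?_⟩
            · rw [hc, hM₃c, Finset.card_erase_of_mem heM]
              have : 1 ≤ M₁.card := Finset.card_pos.2 ⟨_, heM⟩
              omega
            · intro h
              rcases Finset.mem_insert.1 (mcover_insert h) with rfl | h'
              · exact hyv rfl
              rcases Finset.mem_insert.1 h' with rfl | h''
              · exact hv'y rfl
              rcases Finset.mem_union.1 (hM₃s h'') with h3 | h3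
              · exact hyE h3
              · exact hy2 (hsub2 h3)
            · intro a ha
              rcases Finset.mem_insert.1 (mcover_insert ha) with rfl | h'
              · exact Finset.mem_union.2 (Or.inl hvM1)
              rcases Finset.mem_insert.1 h' with rfl | h''
              · exact Finset.mem_union.2 (Or.inl hv'1)
              rcases Finset.mem_union.1 (hM₃s h'') with h3 | h3
              · exact Finset.mem_union.2 (Or.inl (hsub1 h3))
              · exact Finset.mem_union.2 (Or.inr (hsub2 h3))
            · intro a ha
              rcases Finset.mem_insert.1 (mcover_insert ha) with rfl | h'
              · exact Or.inl hvM1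
              rcases Finset.mem_insert.1 h' with rfl | h''
              · exact Or.inl hv'1
              rcases hM₃t a h'' with h3 | h3
              · exact Or.inl (mcover_mono (Finset.erase_subset _ _) h3)
              · exact Or.inr h3
        · -- terminate: M₃ := insert s(v,v') (M₁.erase s(y,v)), t := v'
          right
          have h1' : IsMatchingFinset G (M₁.erase s(y, v)) :=
            matching_subset (Finset.erase_subset _ _) h1
          have hv'E1 : v' ∉ mcover (M₁.erase s(y, v)) :=
            fun h => hv'1 (mcover_mono (Finset.erase_subset _ _) h)
          obtain ⟨hm, hc⟩ := matching_insert h1' hadj' hvE1 hv'E1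
          refine ⟨_, v', hm, ?_, ?_, ?_, ?_⟩
          · rw [hc, Finset.card_erase_of_mem heM]
            have : 1 ≤ M₁.card := Finset.card_pos.2 ⟨_, heM⟩
            omega
          · intro h
            rcases Finset.mem_insert.1 (mcover_insert h) with rfl | h'
            · exact hyv rfl
            rcases Finset.mem_insert.1 h' with rfl | h''
            · exact hv'y rfl
            · exact hyE h''
          · intro a ha
            rcases Finset.mem_insert.1 (mcover_insert ha) with rfl | h'
            · exact Finset.mem_union.2 (Or.inl hvM1)
            rcases Finset.mem_insert.1 h' with rfl | h''
            · exact Finset.mem_union.2 (Or.inr hv'2)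
            · exact Finset.mem_union.2 (Or.inl (mcover_mono (Finset.erase_subset _ _) h''))
          · intro a ha
            rcases Finset.mem_insert.1 (mcover_insert ha) with rfl | h'
            · exact Or.inl hvM1
            rcases Finset.mem_insert.1 h' with rfl | h''
            · exact Or.inr rfl
            · exact Or.inl (mcover_mono (Finset.erase_subset _ _) h'')
      · -- win immediately: add s(y,v) to M₂
        left
        obtain ⟨hm, hc⟩ := matching_insert h2 hadj hy2 hv2
        refine ⟨_, hm, hc, ?_⟩
        intro a ha
        rcases Finset.mem_insert.1 (mcover_insert ha) with rfl | h'
        · exact Finset.mem_union.2 (Or.inl hy1)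
        rcases Finset.mem_insert.1 h' with rfl | h''
        · exact Finset.mem_union.2 (Or.inl hvM1)
        · exact Finset.mem_union.2 (Or.inr h'')
    · right
      exact ⟨M₁, y, h1, rfl, hy1, Finset.subset_union_left, fun a ha => Or.inl ha⟩

end CHaux
namespace CHaux
variable {V : Type*}

def IsNuLe (H : SimpleGraph V) (k : ℕ) : Prop :=
  ∀ M : Finset (Sym2 V), IsMatchingFinset H M → M.card ≤ k

lemma exists_maximal [Fintype V] (G : SimpleGraph V) (k : ℕ) (hG : IsNuLe G k) :
    ∃ H, G ≤ H ∧ IsNuLe H k ∧ ∀ x y : V, x ≠ y → ¬H.Adj x y →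
      ¬IsNuLe (H ⊔ SimpleGraph.fromEdgeSet {s(x, y)}) k := by
  classical
  obtain ⟨H, hH, hmax⟩ := Finset.exists_max_image
    ((Finset.univ : Finset (SimpleGraph V)).filter fun H => G ≤ H ∧ IsNuLe H k)
    (fun H => H.edgeSet.ncard)
    ⟨G, Finset.mem_filter.2 ⟨Finset.mem_univ _, le_refl _, hG⟩⟩
  obtain ⟨-, hGH, hHk⟩ := Finset.mem_filter.1 hH
  refine ⟨H, hGH, hHk, ?_⟩
  intro x y hxy hnadj hk'
  have hle : H ≤ H ⊔ SimpleGraph.fromEdgeSet {s(x, y)} := le_sup_left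
  have hmem : (H ⊔ SimpleGraph.fromEdgeSet {s(x, y)}) ∈
      (Finset.univ : Finset (SimpleGraph V)).filter (fun H => G ≤ H ∧ IsNuLe H k) :=
    Finset.mem_filter.2 ⟨Finset.mem_univ _, hGH.trans hle, hk'⟩
  have hcard := hmax _ hmem
  have hss : H.edgeSet ⊂ (H ⊔ SimpleGraph.fromEdgeSet {s(x, y)}).edgeSet := by
    rw [SimpleGraph.edgeSet_sup, SimpleGraph.edgeSet_fromEdgeSet]
    constructor
    · exact fun e he => Or.inl he
    · intro hsup
      have : s(x, y) ∈ H.edgeSet := hsup (Or.inr ⟨rfl, by simp [hxy]⟩)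
      exact hnadj ((SimpleGraph.mem_edgeSet H).1 this)
  have hlt := Set.ncard_lt_ncard hss (Set.toFinite _)
  omega

lemma matching_of_sup_edge {H : SimpleGraph V} {x y : V} {M : Finset (Sym2 V)}
    (hM : IsMatchingFinset (H ⊔ SimpleGraph.fromEdgeSet {s(x, y)}) M)
    (hxy : s(x, y) ∉ M) : IsMatchingFinset H M := by
  refine ⟨?_, hM.2⟩
  intro e he
  have := hM.1 he
  rw [SimpleGraph.edgeSet_sup, SimpleGraph.edgeSet_fromEdgeSet] at this
  rcases this with h | h
  · exact h
  · exact absurd (h.1 ▸ he : s(x,y) ∈ M) hxy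

/-- From maximality at a non-edge (x,y): a matching of `H` of size ≥ k missing x and y. -/
lemma matching_avoiding {H : SimpleGraph V} {k : ℕ} (hH : IsNuLe H k) {x y : V}
    (hxy : x ≠ y) (hnadj : ¬H.Adj x y)
    (hmax : ¬IsNuLe (H ⊔ SimpleGraph.fromEdgeSet {s(x, y)}) k) :
    ∃ M, IsMatchingFinset H M ∧ k ≤ M.card ∧ x ∉ mcover M ∧ y ∉ mcover M := by
  rw [IsNuLe] at hmax
  push_neg at hmax
  obtain ⟨M, hM, hMc⟩ := hmax
  have hmem : s(x, y) ∈ M := by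
    by_contra h
    exact absurd (hH M (matching_of_sup_edge hM h)) (by omega)
  refine ⟨M.erase s(x, y), ?_, ?_, ?_, ?_⟩
  · refine matching_of_sup_edge (matching_subset (Finset.erase_subset _ _) hM) ?_
    simp
  · rw [Finset.card_erase_of_mem hmem]
    omega
  · intro h
    obtain ⟨g, hg, hxg⟩ := mem_mcover.1 h
    exact (Finset.mem_erase.1 hg).1
      (matching_unique hM (Finset.mem_erase.1 hg).2 hmem hxg (by simp))
  · intro h
    obtain ⟨g, hg, hyg⟩ := mem_mcover.1 h
    exact (Finset.mem_erase.1 hg).1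
      (matching_unique hM (Finset.mem_erase.1 hg).2 hmem hyg (by simp))

lemma clique_of_nondominating {H : SimpleGraph V} {k : ℕ} (hH : IsNuLe H k)
    (hmax : ∀ x y : V, x ≠ y → ¬H.Adj x y →
      ¬IsNuLe (H ⊔ SimpleGraph.fromEdgeSet {s(x, y)}) k)
    {y w x z : V} (hw : w ≠ y) (hwn : ¬H.Adj y w)
    (hx : H.Adj x y) (hz : H.Adj y z) (hxz : x ≠ z) : H.Adj x z := by
  by_contra hc
  obtain ⟨M₁, hM₁, hM₁c, hxM₁, hzM₁⟩ := matching_avoiding hH hxz hc (hmax x z hxz hc)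
  obtain ⟨M₂, hM₂, hM₂c, hyM₂, hwM₂⟩ := matching_avoiding hH (fun h => hw h.symm) hwn
    (hmax y w (fun h => hw h.symm) hwn)
  rcases exchange H M₁.card M₁ M₂ le_rfl hM₁ hM₂ y hyM₂ with
    ⟨N, hN, hNc, -⟩ | ⟨M₃, t, hM₃, hM₃c, hyM₃, -, hM₃t⟩
  · have := hH N hN
    omega
  · have hone : x ∉ mcover M₃ ∨ z ∉ mcover M₃ := by
      by_contra h
      push_neg at h
      rcases hM₃t x h.1 with h1 | h1
      · exact hxM₁ h1
      rcases hM₃t z h.2 with h2 | h2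
      · exact hzM₁ h2
      exact hxz (h1.trans h2.symm)
    rcases hone with h | h
    · obtain ⟨hm, hcard⟩ := matching_insert hM₃ hx h hyM₃
      have := hH _ hm
      omega
    · obtain ⟨hm, hcard⟩ := matching_insert hM₃ hz.symm h hyM₃
      have := hH _ hm
      omega

end CHaux
namespace CHaux
variable {V : Type*}

lemma clique_matching (H : SimpleGraph V) : ∀ (n : ℕ) (C : Finset V), C.card ≤ n →
    (∀ x ∈ C, ∀ y ∈ C, x ≠ y → H.Adj x y) →
    ∃ M, IsMatchingFinset H M ∧ (∀ v ∈ mcover M, v ∈ C) ∧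
      C.card ≤ 2 * M.card + 1 ∧ 2 * M.card ≤ C.card := by
  intro n
  induction n with
  | zero =>
    intro C hC _
    refine ⟨∅, ⟨by simp, by simp⟩, by simp [mcover], by omega, by simp [mcover]⟩
  | succ n ih =>
    intro C hC hclique
    by_cases h1 : C.card ≤ 1
    · refine ⟨∅, ⟨by simp, by simp⟩, by simp [mcover], by omega, by simp [mcover]⟩
    · obtain ⟨x, hx, y, hy, hxy⟩ := Finset.one_lt_card.1 (show 1 < C.card by omega)
      set C' := (C.erase x).erase y with hC'
      have hyx : y ∈ C.erase x := Finset.mem_erase.2 ⟨fun h => hxy h.symm, hy⟩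
      have hcard' : C'.card = C.card - 2 := by
        rw [hC', Finset.card_erase_of_mem hyx, Finset.card_erase_of_mem hx]
        omega
      have hsub : C' ⊆ C := (Finset.erase_subset _ _).trans (Finset.erase_subset _ _)
      have hC'n : C'.card ≤ n := by omega
      obtain ⟨M', hM', hMc', hub, hlb⟩ := ih C' hC'n
        (fun a ha b hb hab => hclique a (hsub ha) b (hsub hb) hab)
      have hxM : x ∉ mcover M' := fun h => by
        have := hMc' x h
        rw [hC'] at this
        exact (Finset.mem_erase.1 (Finset.mem_of_mem_erase this)).1 rfl
      have hyM : y ∉ mcover M' := fun h => by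
        have := hMc' y h
        rw [hC'] at this
        exact (Finset.mem_erase.1 this).1 rfl
      obtain ⟨hm, hc⟩ := matching_insert hM' (hclique x hx y hy hxy) hxM hyM
      refine ⟨_, hm, ?_, ?_, ?_⟩
      · intro v hv
        rcases Finset.mem_insert.1 (mcover_insert hv) with rfl | h'
        · exact hx
        rcases Finset.mem_insert.1 h' with rfl | h''
        · exact hy
        · exact hsub (hMc' v h'')
      · rw [hc]; omega
      · rw [hc]; omega

lemma choose2_odd (m : ℕ) : (2 * m + 1).choose 2 = m * (2 * m + 1) := by
  rw [Nat.choose_two_right]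
  have : (2 * m + 1) * (2 * m + 1 - 1) = 2 * (m * (2 * m + 1)) := by
    rw [Nat.add_sub_cancel]; ring
  rw [this, Nat.mul_div_cancel_left _ (by norm_num : 0 < 2)]

lemma choose2_even (m : ℕ) : (2 * m).choose 2 = m * (2 * m - 1) := by
  rw [Nat.choose_two_right]
  have : (2 * m) * (2 * m - 1) = 2 * (m * (2 * m - 1)) := by ring
  rw [this, Nat.mul_div_cancel_left _ (by norm_num : 0 < 2)]

/-- Edges of `G` with both endpoints in `C`. -/
noncomputable def edgesIn [Fintype V] (G : SimpleGraph V) (C : Finset V) : Finset (Sym2 V) :=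
  G.edgeFinset.filter fun e => ∀ v ∈ e, v ∈ C

lemma edgesIn_card_le [Fintype V] (G : SimpleGraph V) (C : Finset V) :
    (edgesIn G C).card ≤ C.card.choose 2 := by
  classical
  have hsub : edgesIn G C ⊆ C.sym2 \ C.diag.image (Sym2.mk (α := V)).uncurry := by
    intro e he
    rw [edgesIn, Finset.mem_filter] at he
    rw [Finset.mem_sdiff]
    constructor
    · exact Finset.mem_sym2_iff.2 he.2
    · intro hmem
      obtain ⟨p, hp, hpe⟩ := Finset.mem_image.1 hmem
      have : ((Sym2.mk (α := V)).uncurry p).IsDiag := Finset.isDiag_mk_of_mem_diag hp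
      rw [hpe] at this
      exact (G.not_isDiag_of_mem_edgeSet (SimpleGraph.mem_edgeFinset.1 he.1)) this
  have hdiagsub : C.diag.image (Sym2.mk (α := V)).uncurry ⊆ C.sym2 := by
    intro e he
    obtain ⟨p, hp, rfl⟩ := Finset.mem_image.1 he
    rw [Finset.mem_sym2_iff]
    intro a ha
    rw [Finset.mem_diag] at hp
    rcases Sym2.mem_iff.1 ha with rfl | rfl
    · exact hp.1
    · exact hp.2 ▸ hp.1
  have hinj : (C.diag.image (Sym2.mk (α := V)).uncurry).card = C.card := by
    rw [Finset.card_image_of_injOn, Finset.diag_card]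
    rintro ⟨a, b⟩ hp ⟨c, d⟩ hq hpq
    have hp' : (a, b) ∈ C.diag := hp
    have hq' : (c, d) ∈ C.diag := hq
    rw [Finset.mem_diag] at hp' hq'
    simp only at hp' hq'
    obtain rfl : a = b := hp'.2
    obtain rfl : c = d := hq'.2
    simp only [Function.uncurry_apply_pair, Sym2.eq_iff] at hpq
    rcases hpq with h | h
    · rw [h.1]
    · rw [h.1]
  calc (edgesIn G C).card ≤ (C.sym2 \ C.diag.image (Sym2.mk (α := V)).uncurry).card := Finset.card_le_card hsub
    _ = C.sym2.card - C.card := by rw [Finset.card_sdiff_of_subset hdiagsub, hinj]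
    _ = (C.card + 1).choose 2 - C.card := by rw [Finset.card_sym2]
    _ = C.card.choose 2 := by
        have h : (C.card + 1).choose 2 = C.card.choose 1 + C.card.choose 2 :=
          Nat.choose_succ_succ _ _
        rw [h, Nat.choose_one_right]
        omega

end CHaux
namespace CHaux
variable {V : Type*}

lemma edgesIn_mono [Fintype V] {G : SimpleGraph V} {C W : Finset V} (h : C ⊆ W) :
    edgesIn G C ⊆ edgesIn G W := by
  intro e he
  rw [edgesIn, Finset.mem_filter] at *
  exact ⟨he.1, fun v hv => h (he.2 v hv)⟩

lemma count [Fintype V] (G H : SimpleGraph V) (k : ℕ) (hGH : G ≤ H) (hPH : IsNuLe H k) :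
    ∀ (n : ℕ) (W : Finset V), W.card ≤ n →
    (∀ y ∈ W, ∀ x z, H.Adj x y → H.Adj y z → x ≠ z → H.Adj x z) →
    ∃ M, IsMatchingFinset H M ∧ (∀ v ∈ mcover M, v ∈ W) ∧
      (edgesIn G W).card ≤ (2 * k + 1) * M.card ∧
      ((∀ y ∈ W, ∃ z ∈ W, H.Adj y z) → (edgesIn G W).card = (2 * k + 1) * M.card →
        k * W.card ≤ (2 * k + 1) * M.card) := by
  intro n
  induction n with
  | zero =>
    intro W hW _
    rw [Nat.le_zero, Finset.card_eq_zero] at hW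
    subst hW
    have hempty : edgesIn G (∅ : Finset V) = ∅ := by
      rw [Finset.eq_empty_iff_forall_notMem]
      intro e he
      rw [edgesIn, Finset.mem_filter] at he
      induction e using Sym2.ind with
      | _ a b => exact absurd (he.2 a (by simp)) (by simp)
    exact ⟨∅, ⟨by simp, by simp⟩, by simp [mcover], by simp [hempty], by simp⟩
  | succ n ih =>
    intro W hW hF1
    rcases Finset.eq_empty_or_nonempty W with rfl | ⟨y, hyW⟩
    · have hempty : edgesIn G (∅ : Finset V) = ∅ := by
        rw [Finset.eq_empty_iff_forall_notMem]
        intro e he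
        rw [edgesIn, Finset.mem_filter] at he
        induction e using Sym2.ind with
        | _ a b => exact absurd (he.2 a (by simp)) (by simp)
      exact ⟨∅, ⟨by simp, by simp⟩, by simp [mcover], by simp [hempty], by simp⟩
    · set C := W.filter (fun z => z = y ∨ H.Adj y z) with hC
      have hCW : C ⊆ W := Finset.filter_subset _ _
      have hyC : y ∈ C := Finset.mem_filter.2 ⟨hyW, Or.inl rfl⟩
      have hmemC : ∀ z, z ∈ C ↔ z ∈ W ∧ (z = y ∨ H.Adj y z) := by
        intro z; rw [hC, Finset.mem_filter]
      have hclq : ∀ a ∈ C, ∀ b ∈ C, a ≠ b → H.Adj a b := by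
        intro a ha b hb hab
        obtain ⟨haW, ha'⟩ := (hmemC a).1 ha
        obtain ⟨hbW, hb'⟩ := (hmemC b).1 hb
        rcases ha' with rfl | ha' 
        · rcases hb' with rfl | hb'
          · exact absurd rfl hab
          · exact hb'
        · rcases hb' with rfl | hb'
          · exact ha'.symm
          · exact hF1 y hyW a b ha'.symm hb' hab
      have hsep : ∀ u ∈ C, ∀ z ∈ W, z ∉ C → ¬H.Adj u z := by
        intro u hu z hzW hzC hadj
        obtain ⟨huW, hu'⟩ := (hmemC u).1 hu
        have hzy : z ≠ y := fun h => hzC (h ▸ hyC)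
        rcases hu' with rfl | hu'
        · exact hzC ((hmemC z).2 ⟨hzW, Or.inr hadj⟩)
        · have : H.Adj y z := hF1 u huW y z hu' hadj (fun h => hzC (h ▸ hyC))
          exact hzC ((hmemC z).2 ⟨hzW, Or.inr this⟩)
      set W' := W \ C with hW'
      have hW'sub : W' ⊆ W := Finset.sdiff_subset
      have hW'card : W'.card = W.card - C.card := Finset.card_sdiff_of_subset hCW
      have hCpos : 1 ≤ C.card := Finset.card_pos.2 ⟨y, hyC⟩
      have hWcard : W.card = C.card + W'.card := by
        rw [hW'card]
        have := Finset.card_le_card hCW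
        omega
      obtain ⟨M', hM', hMc', hE', hEq'⟩ := ih W' (by omega)
        (fun a ha => hF1 a (hW'sub ha))
      obtain ⟨MC, hMC, hMCc, hub, hlb⟩ := clique_matching H C.card C le_rfl hclq
      have hmk : MC.card ≤ k := hPH MC hMC
      have hd : ∀ v, v ∈ mcover MC → v ∉ mcover M' := by
        intro v hv hv'
        have h1 : v ∈ C := hMCc v hv
        have h2 : v ∈ W' := hMc' v hv'
        rw [hW', Finset.mem_sdiff] at h2
        exact h2.2 h1
      obtain ⟨hM, hMcard⟩ := matching_union hMC hM' hd
      have hcover : ∀ v ∈ mcover (MC ∪ M'), v ∈ W := by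
        intro v hv
        obtain ⟨e, he, hve⟩ := mem_mcover.1 hv
        rcases Finset.mem_union.1 he with he | he
        · exact hCW (hMCc v (mem_mcover.2 ⟨e, he, hve⟩))
        · exact hW'sub (hMc' v (mem_mcover.2 ⟨e, he, hve⟩))
      -- edge split
      have hsplit : edgesIn G W = edgesIn G C ∪ edgesIn G W' := by
        apply Finset.Subset.antisymm
        · intro e he
          have he' := he
          rw [edgesIn, Finset.mem_filter] at he'
          induction e using Sym2.ind with
          | _ a b =>
            have hadjG : G.Adj a b := (G.mem_edgeSet).1 (SimpleGraph.mem_edgeFinset.1 he'.1)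
            have hadjH : H.Adj a b := hGH hadjG
            have haW : a ∈ W := he'.2 a (by simp)
            have hbW : b ∈ W := he'.2 b (by simp)
            by_cases haC : a ∈ C
            · have hbC : b ∈ C := by
                by_contra hbC
                exact hsep a haC b hbW hbC hadjH
              refine Finset.mem_union_left _ ?_
              rw [edgesIn, Finset.mem_filter]
              refine ⟨he'.1, ?_⟩
              intro v hv
              rcases Sym2.mem_iff.1 hv with rfl | rfl <;> assumption
            · have hbC : b ∉ C := by
                intro hbC
                exact hsep b hbC a haW haC hadjH.symm
              refine Finset.mem_union_right _ ?_
              rw [edgesIn, Finset.mem_filter]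
              refine ⟨he'.1, ?_⟩
              intro v hv
              rw [hW', Finset.mem_sdiff]
              rcases Sym2.mem_iff.1 hv with rfl | rfl
              · exact ⟨haW, haC⟩
              · exact ⟨hbW, hbC⟩
        · intro e he
          rcases Finset.mem_union.1 he with he | he
          · exact edgesIn_mono hCW he
          · exact edgesIn_mono hW'sub he
      have hdisj : Disjoint (edgesIn G C) (edgesIn G W') := by
        rw [Finset.disjoint_left]
        intro e he1 he2
        rw [edgesIn, Finset.mem_filter] at he1 he2
        induction e using Sym2.ind with
        | _ a b =>
          have h1 : a ∈ C := he1.2 a (by simp)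
          have h2 : a ∈ W' := he2.2 a (by simp)
          rw [hW', Finset.mem_sdiff] at h2
          exact h2.2 h1
      have hcard_split : (edgesIn G W).card = (edgesIn G C).card + (edgesIn G W').card := by
        rw [hsplit, Finset.card_union_of_disjoint hdisj]
      -- bound for the clique C
      have hEC : (edgesIn G C).card ≤ (2 * MC.card + 1).choose 2 :=
        (edgesIn_card_le G C).trans (Nat.choose_le_choose 2 hub)
      have hECk : (edgesIn G C).card ≤ (2 * k + 1) * MC.card := by
        refine hEC.trans ?_
        rw [choose2_odd]
        calc MC.card * (2 * MC.card + 1) ≤ MC.card * (2 * k + 1) :=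
              Nat.mul_le_mul_left _ (by omega)
          _ = (2 * k + 1) * MC.card := Nat.mul_comm _ _
      have hdist : (2 * k + 1) * (MC ∪ M').card
          = (2 * k + 1) * MC.card + (2 * k + 1) * M'.card := by
        rw [hMcard, Nat.mul_add]
      refine ⟨MC ∪ M', hM, hcover, ?_, ?_⟩
      · omega
      · intro hsing heq
        -- Hsing for W'
        have hsing' : ∀ a ∈ W', ∃ z ∈ W', H.Adj a z := by
          intro a ha
          obtain ⟨z, hzW, hz⟩ := hsing a (hW'sub ha)
          have haC : a ∉ C := by
            rw [hW', Finset.mem_sdiff] at ha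
            exact ha.2
          have hzC : z ∉ C := by
            intro hzC
            exact hsep z hzC a (hW'sub ha) haC hz.symm
          exact ⟨z, by rw [hW', Finset.mem_sdiff]; exact ⟨hzW, hzC⟩, hz⟩
        -- equalities
        have heqC : (edgesIn G C).card = (2 * k + 1) * MC.card := by omega
        have heqW' : (edgesIn G W').card = (2 * k + 1) * M'.card := by omega
        -- C has at least 2 elements
        have hC2 : 2 ≤ C.card := by
          obtain ⟨z, hzW, hz⟩ := hsing y hyW
          have hzC : z ∈ C := (hmemC z).2 ⟨hzW, Or.inr hz⟩
          have : y ≠ z := hz.ne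
          exact Finset.one_lt_card.2 ⟨y, hyC, z, hzC, this⟩
        have hm1 : 1 ≤ MC.card := by omega
        -- case analysis on parity of C.card
        have hkC : k * C.card ≤ (2 * k + 1) * MC.card := by
          have hcases : C.card = 2 * MC.card ∨ C.card = 2 * MC.card + 1 := by omega
          rcases hcases with hcc | hcc
          · exfalso
            have h1 : (edgesIn G C).card ≤ MC.card * (2 * MC.card - 1) := by
              have := (edgesIn_card_le G C)
              rw [hcc, choose2_even] at this
              exact this
            rw [heqC] at h1
            have h2 : MC.card * (2 * k + 1) ≤ MC.card * (2 * MC.card - 1) := by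
              calc MC.card * (2 * k + 1) = (2 * k + 1) * MC.card := Nat.mul_comm _ _
                _ ≤ MC.card * (2 * MC.card - 1) := h1
            have h3 : 2 * k + 1 ≤ 2 * MC.card - 1 :=
              Nat.le_of_mul_le_mul_left h2 hm1
            omega
          · have h1 : (edgesIn G C).card ≤ MC.card * (2 * MC.card + 1) := by
              have := (edgesIn_card_le G C)
              rw [hcc, choose2_odd] at this
              exact this
            rw [heqC] at h1
            have h2 : MC.card * (2 * k + 1) ≤ MC.card * (2 * MC.card + 1) := by
              calc MC.card * (2 * k + 1) = (2 * k + 1) * MC.card := Nat.mul_comm _ _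
                _ ≤ MC.card * (2 * MC.card + 1) := h1
            have h3 : 2 * k + 1 ≤ 2 * MC.card + 1 :=
              Nat.le_of_mul_le_mul_left h2 hm1
            have hmck : MC.card = k := by omega
            rw [hcc, hmck]
            have : k * (2 * k + 1) = (2 * k + 1) * k := Nat.mul_comm _ _
            omega
        have hkW' : k * W'.card ≤ (2 * k + 1) * M'.card := hEq' hsing' heqW'
        have hfin : k * W.card = k * C.card + k * W'.card := by
          rw [hWcard, Nat.mul_add]
        omega

end CHaux
namespace CHaux
variable {V : Type*}

lemma dominating_boost [Fintype V] {H : SimpleGraph V} {k : ℕ} (hPH : IsNuLe H k)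
    (A : Finset V) (hdom : ∀ a ∈ A, ∀ b, b ≠ a → H.Adj a b)
    (M : Finset (Sym2 V)) (hM : IsMatchingFinset H M)
    (hAM : ∀ a ∈ A, a ∉ mcover M) (hn : 2 * k + 2 ≤ Fintype.card V) :
    A.card + M.card ≤ k := by
  classical
  by_contra hcon
  push_neg at hcon
  have hMk : M.card ≤ k := hPH M hM
  set r := k + 1 - M.card with hr
  have hr1 : 1 ≤ r := by omega
  have hrA : r ≤ A.card := by omega
  set U := (Finset.univ : Finset V) \ mcover M with hU
  have hAU : A ⊆ U := by
    intro a ha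
    rw [hU, Finset.mem_sdiff]
    exact ⟨Finset.mem_univ _, hAM a ha⟩
  have hUcard : 2 * r ≤ U.card := by
    rw [hU, Finset.card_sdiff_of_subset (Finset.subset_univ _), Finset.card_univ]
    have := card_mcover_le M
    omega
  obtain ⟨A0, hA0A, hA0c⟩ := Finset.exists_subset_card_eq hrA
  have hA0U : A0 ⊆ U := hA0A.trans hAU
  have hD : r ≤ (U \ A0).card := by
    rw [Finset.card_sdiff_of_subset hA0U]
    omega
  obtain ⟨D0, hD0, hD0c⟩ := Finset.exists_subset_card_eq hD
  have hA0D0 : ∀ x, x ∈ A0 → x ∉ D0 := by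
    intro x hx hxD
    exact (Finset.mem_sdiff.1 (hD0 hxD)).2 hx
  have hf : ∃ f : {x // x ∈ A0} ≃ {x // x ∈ D0}, True := by
    refine ⟨Finset.equivOfCardEq ?_, trivial⟩
    rw [hA0c, hD0c]
  obtain ⟨f, -⟩ := hf
  set N' := Finset.image (fun a : {x // x ∈ A0} => s((a : V), ((f a : {x // x ∈ D0}) : V)))
    Finset.univ with hN'
  have hedge : ∀ a : {x // x ∈ A0}, H.Adj (a : V) ((f a : {x // x ∈ D0}) : V) := by
    intro a
    refine hdom (a : V) (hA0A a.2) _ ?_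
    intro h
    exact hA0D0 (a : V) a.2 (h ▸ (f a).2)
  have hmemN' : ∀ e ∈ N', ∃ a : {x // x ∈ A0}, e = s((a : V), ((f a : {x // x ∈ D0}) : V)) := by
    intro e he
    obtain ⟨a, -, rfl⟩ := Finset.mem_image.1 he
    exact ⟨a, rfl⟩
  have hN'm : IsMatchingFinset H N' := by
    constructor
    · intro e he
      obtain ⟨a, rfl⟩ := hmemN' e he
      exact (SimpleGraph.mem_edgeSet H).2 (hedge a)
    · intro e he g hg hne v hv
      obtain ⟨a, rfl⟩ := hmemN' e he
      obtain ⟨b, rfl⟩ := hmemN' g hg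
      obtain ⟨hv1, hv2⟩ := hv
      have h1 := Sym2.mem_iff.1 hv1
      have h2 := Sym2.mem_iff.1 hv2
      rcases h1 with h1 | h1 <;> rcases h2 with h2 | h2
      · have hab : a = b := Subtype.ext (h1.symm.trans h2)
        exact hne (by rw [hab])
      · have : (a : V) ∈ D0 := by rw [h1.symm.trans h2]; exact (f b).2
        exact hA0D0 _ a.2 this
      · have : (b : V) ∈ D0 := by rw [h2.symm.trans h1]; exact (f a).2
        exact hA0D0 _ b.2 this
      · have hab : f a = f b := Subtype.ext (h1.symm.trans h2)
        exact hne (by rw [f.injective hab])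
  have hN'card : N'.card = r := by
    rw [hN']
    rw [Finset.card_image_of_injective _ ?_]
    · rw [Finset.card_univ, Fintype.card_coe, hA0c]
    · intro a b hab
      rw [Sym2.eq_iff] at hab
      rcases hab with ⟨h1, -⟩ | ⟨h1, h2⟩
      · exact Subtype.ext h1
      · exact absurd (h1 ▸ (f b).2) (hA0D0 (a : V) a.2)
  have hcovN' : ∀ v ∈ mcover N', v ∈ U := by
    intro v hv
    obtain ⟨e, he, hve⟩ := mem_mcover.1 hv
    obtain ⟨a, rfl⟩ := hmemN' e he
    rcases Sym2.mem_iff.1 hve with rfl | rfl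
    · exact hA0U a.2
    · exact (Finset.mem_sdiff.1 (hD0 (f a).2)).1
  have hdisj : ∀ v, v ∈ mcover M → v ∉ mcover N' := by
    intro v hv hv'
    have := hcovN' v hv'
    rw [hU, Finset.mem_sdiff] at this
    exact this.2 hv
  obtain ⟨hNm, hNc⟩ := matching_union hM hN'm hdisj
  have := hPH _ hNm
  rw [hNc, hN'card] at this
  omega

end CHaux

theorem stmt_4 {V : Type*} [Fintype V] (G : SimpleGraph V) (Δ : ℕ) (hΔ : 2 ≤ Δ)
    (heven : Even Δ)
    (hiso : ∀ v : V, 0 < G.degree v)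
    (hν : matchingNumber G = Δ / 2)
    (hmax : G.maxDegree = Δ)
    (hE : G.edgeFinset.card = (Δ + 1) * Δ / 2) :
    Nonempty (G ≃g (⊤ : SimpleGraph (Fin (Δ + 1)))) := by
  classical
  obtain ⟨k, hk⟩ := heven
  have hΔ2 : Δ = 2 * k := by omega
  have hk1 : 1 ≤ k := by omega
  have hνk : matchingNumber G = k := by rw [hν]; omega
  have hGnu : CHaux.IsNuLe G k := by
    intro M hM
    have hbdd : BddAbove {n | ∃ M : Finset (Sym2 V), IsMatchingFinset G M ∧ M.card = n} := by
      refine ⟨Fintype.card (Sym2 V), ?_⟩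
      rintro n ⟨M, -, rfl⟩
      exact Finset.card_le_univ M
    have h2 : M.card ≤ matchingNumber G := by
      rw [matchingNumber]
      exact le_csSup hbdd ⟨M, hM, rfl⟩
    omega
  obtain ⟨H, hGH, hPH, hmaxH⟩ := CHaux.exists_maximal G k hGnu
  have hdegle : ∀ v, G.degree v ≤ 2 * k := by
    intro v
    have := G.degree_le_maxDegree v
    omega
  have hEcard : G.edgeFinset.card = (2 * k + 1) * k := by
    rw [hE, hΔ2]
    have h1 : (2 * k + 1) * (2 * k) = 2 * ((2 * k + 1) * k) := by ring
    rw [h1, Nat.mul_div_cancel_left _ (by norm_num : 0 < 2)]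
  have hsum : ∑ v, G.degree v = 2 * ((2 * k + 1) * k) := by
    rw [G.sum_degrees_eq_twice_card_edges, hEcard]
  have hnlow : 2 * k + 1 ≤ Fintype.card V := by
    by_contra h
    push_neg at h
    have hle : ∑ v, G.degree v ≤ (Fintype.card V) * (2 * k) := by
      calc ∑ v, G.degree v ≤ ∑ _v : V, 2 * k := Finset.sum_le_sum (fun v _ => hdegle v)
        _ = (Fintype.card V) * (2 * k) := by
            rw [Finset.sum_const, Finset.card_univ, smul_eq_mul]
    have h1 : (Fintype.card V) * (2 * k) ≤ (2 * k) * (2 * k) :=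
      Nat.mul_le_mul_right _ (by omega)
    have h4 : 2 * ((2 * k + 1) * k) = (2 * k) * (2 * k) + 2 * k := by ring
    omega
  have hnhigh : Fintype.card V ≤ 2 * k + 1 := by
    by_contra hcon
    push_neg at hcon
    have hn2 : 2 * k + 2 ≤ Fintype.card V := hcon
    set A := Finset.univ.filter (fun a : V => ∀ b, b ≠ a → H.Adj a b) with hA
    set B := Finset.univ \ A with hB
    have hF1 : ∀ y ∈ B, ∀ x z, H.Adj x y → H.Adj y z → x ≠ z → H.Adj x z := by
      intro y hy x z hxy hyz hxz
      rw [hB, Finset.mem_sdiff, hA, Finset.mem_filter] at hy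
      have hny : ¬(∀ b, b ≠ y → H.Adj y b) := fun h => hy.2 ⟨Finset.mem_univ _, h⟩
      push_neg at hny
      obtain ⟨w, hw, hwn⟩ := hny
      exact CHaux.clique_of_nondominating hPH hmaxH hw hwn hxy hyz hxz
    obtain ⟨M, hM, hMcov, hE1, hE3⟩ := CHaux.count G H k hGH hPH B.card B le_rfl hF1
    have hMk : M.card ≤ k := hPH M hM
    have hdomA : ∀ a ∈ A, ∀ b, b ≠ a → H.Adj a b := by
      intro a ha
      rw [hA, Finset.mem_filter] at ha
      exact ha.2
    have hAM : ∀ a ∈ A, a ∉ CHaux.mcover M := by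
      intro a ha hc
      have h1 := hMcov a hc
      rw [hB, Finset.mem_sdiff] at h1
      exact h1.2 ha
    have hboost : A.card + M.card ≤ k := CHaux.dominating_boost hPH A hdomA M hM hAM hn2
    have hsplitE : G.edgeFinset.card ≤ 2 * k * A.card + (CHaux.edgesIn G B).card := by
      have hpart := Finset.card_filter_add_card_filter_not
        (s := G.edgeFinset) (p := fun e => ∃ v ∈ e, v ∈ A)
      have hmeet : (G.edgeFinset.filter (fun e => ∃ v ∈ e, v ∈ A)) ⊆
          A.biUnion (fun a => G.incidenceFinset a) := by
        intro e he
        rw [Finset.mem_filter] at he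
        obtain ⟨v, hv, hvA⟩ := he.2
        refine Finset.mem_biUnion.2 ⟨v, hvA, ?_⟩
        rw [SimpleGraph.mem_incidenceFinset]
        exact ⟨SimpleGraph.mem_edgeFinset.1 he.1, hv⟩
      have hmeetcard : (G.edgeFinset.filter (fun e => ∃ v ∈ e, v ∈ A)).card ≤ 2 * k * A.card := by
        calc (G.edgeFinset.filter (fun e => ∃ v ∈ e, v ∈ A)).card
            ≤ (A.biUnion (fun a => G.incidenceFinset a)).card := Finset.card_le_card hmeet
          _ ≤ ∑ a ∈ A, (G.incidenceFinset a).card := Finset.card_biUnion_le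
          _ ≤ ∑ _a ∈ A, 2 * k := by
              refine Finset.sum_le_sum fun a _ => ?_
              rw [G.card_incidenceFinset_eq_degree]
              exact hdegle a
          _ = A.card * (2 * k) := by rw [Finset.sum_const, smul_eq_mul]
          _ = 2 * k * A.card := Nat.mul_comm _ _
      have hrest : (G.edgeFinset.filter (fun e => ¬∃ v ∈ e, v ∈ A)) ⊆ CHaux.edgesIn G B := by
        intro e he
        rw [Finset.mem_filter] at he
        rw [CHaux.edgesIn, Finset.mem_filter]
        refine ⟨he.1, ?_⟩
        intro v hv
        rw [hB, Finset.mem_sdiff]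
        exact ⟨Finset.mem_univ _, fun hvA => he.2 ⟨v, hv, hvA⟩⟩
      have := Finset.card_le_card hrest
      omega
    by_cases hA0 : A.card = 0
    · have hBuniv : B = Finset.univ := by
        rw [hB, Finset.card_eq_zero.1 hA0]
        simp
      have hEB : CHaux.edgesIn G B = G.edgeFinset := by
        rw [hBuniv, CHaux.edgesIn]
        apply Finset.filter_true_of_mem
        intro e _ v _
        exact Finset.mem_univ v
      have hle : (2 * k + 1) * k ≤ (2 * k + 1) * M.card := by
        rw [← hEcard, ← hEB]
        exact hE1
      have hMk' : k ≤ M.card := Nat.le_of_mul_le_mul_left hle (by omega)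
      have hMke : M.card = k := le_antisymm hMk hMk'
      have heq : (CHaux.edgesIn G B).card = (2 * k + 1) * M.card := by
        rw [hEB, hEcard, hMke]
      have hsing : ∀ y ∈ B, ∃ z ∈ B, H.Adj y z := by
        intro y _
        obtain ⟨z, hz⟩ := (G.degree_pos_iff_exists_adj y).1 (hiso y)
        exact ⟨z, by rw [hBuniv]; exact Finset.mem_univ z, hGH hz⟩
      have h3 := hE3 hsing heq
      rw [hBuniv, Finset.card_univ, hMke] at h3
      have h4 : k * Fintype.card V ≤ k * (2 * k + 1) := by
        calc k * Fintype.card V ≤ (2 * k + 1) * k := h3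
          _ = k * (2 * k + 1) := Nat.mul_comm _ _
      have h5 : Fintype.card V ≤ 2 * k + 1 := Nat.le_of_mul_le_mul_left h4 (by omega)
      omega
    · have h5 : (2 * k + 1) * M.card + (2 * k + 1) * A.card ≤ (2 * k + 1) * k := by
        calc (2 * k + 1) * M.card + (2 * k + 1) * A.card
            = (2 * k + 1) * (M.card + A.card) := (Nat.mul_add _ _ _).symm
          _ ≤ (2 * k + 1) * k := Nat.mul_le_mul_left _ (by omega)
      have h6 : (2 * k + 1) * A.card = 2 * k * A.card + A.card := by ring
      omega
  have hn : Fintype.card V = 2 * k + 1 := le_antisymm hnhigh hnlow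
  have hdeg : ∀ v, G.degree v = 2 * k := by
    by_contra h
    push_neg at h
    obtain ⟨v, hv⟩ := h
    have hlt : G.degree v < 2 * k := lt_of_le_of_ne (hdegle v) hv
    have hsl : ∑ u, G.degree u < ∑ _u : V, 2 * k :=
      Finset.sum_lt_sum (fun u _ => hdegle u) ⟨v, Finset.mem_univ v, hlt⟩
    rw [hsum, Finset.sum_const, Finset.card_univ, hn, smul_eq_mul] at hsl
    have h1 : 2 * ((2 * k + 1) * k) = (2 * k + 1) * (2 * k) := by ring
    omega
  have hadj : ∀ u v : V, u ≠ v → G.Adj u v := by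
    intro u v huv
    have hsub : G.neighborFinset v ⊆ Finset.univ.erase v := by
      intro w hw
      rw [SimpleGraph.mem_neighborFinset] at hw
      rw [Finset.mem_erase]
      exact ⟨fun hwv => G.irrefl (hwv ▸ hw), Finset.mem_univ _⟩
    have hcard : (Finset.univ.erase v).card ≤ (G.neighborFinset v).card := by
      rw [Finset.card_erase_of_mem (Finset.mem_univ v), Finset.card_univ, hn]
      have h2 : (G.neighborFinset v).card = G.degree v := rfl
      rw [h2, hdeg v]
      omega
    have heq : G.neighborFinset v = Finset.univ.erase v :=
      Finset.eq_of_subset_of_card_le hsub hcard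
    have hu : u ∈ G.neighborFinset v := by
      rw [heq]
      exact Finset.mem_erase.2 ⟨huv, Finset.mem_univ _⟩
    rw [SimpleGraph.mem_neighborFinset] at hu
    exact hu.symm
  have hcardV : Fintype.card V = Δ + 1 := by omega
  have e := Fintype.equivFinOfCardEq hcardV
  refine ⟨⟨e, ?_⟩⟩
  intro a b
  simp only [SimpleGraph.top_adj, ne_eq, EmbeddingLike.apply_eq_iff_eq]
  constructor
  · intro hab
    exact hadj a b hab
  · intro hab
    exact hab.ne
end

section
/- Let G be a simple graph with Δ := Δ(G) ≥ 2, ν := ν(G), such that ⌈Δ/2⌉ divides ν and |E(G)| = Δν + (ν/⌈Δ/2⌉)·⌊Δ/2⌋. Then for every vertex x of G, ν(G \ x) = ν(G). -/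
open scoped Classical

set_option linter.unusedSectionVars false
set_option linter.unusedVariables false
set_option linter.unnecessarySimpa false
set_option maxHeartbeats 1000000

namespace CH

variable {V : Type*} [Fintype V]



variable {V : Type*} [Fintype V]

def cov (M : Finset (Sym2 V)) (v : V) : Prop := ∃ e ∈ M, v ∈ e

/-- all edges of `M` have both endpoints in `s`. -/
def suppIn (s : Finset V) (M : Finset (Sym2 V)) : Prop := ∀ e ∈ M, ∀ v, v ∈ e → v ∈ s

/-- matching number of the induced subgraph on `s`. -/
noncomputable def nu (G : SimpleGraph V) (s : Finset V) : ℕ :=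
  sSup {n | ∃ M : Finset (Sym2 V), IsMatchingFinset G M ∧ suppIn s M ∧ M.card = n}

lemma matching_unique {G : SimpleGraph V} {M : Finset (Sym2 V)} (hM : IsMatchingFinset G M)
    {e f : Sym2 V} (he : e ∈ M) (hf : f ∈ M) {v : V} (hve : v ∈ e) (hvf : v ∈ f) : e = f := by
  by_contra hne
  exact hM.2 e he f hf hne v ⟨hve, hvf⟩

lemma matching_not_diag {G : SimpleGraph V} {M : Finset (Sym2 V)} (hM : IsMatchingFinset G M)
    {v : V} (h : s(v, v) ∈ M) : False := by
  have := hM.1 h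
  rw [SimpleGraph.mem_edgeSet] at this
  exact G.loopless.irrefl v this

lemma empty_matching (G : SimpleGraph V) : IsMatchingFinset G (∅ : Finset (Sym2 V)) := by
  constructor
  · simp
  · intro e he; simp at he

lemma nu_set_nonempty (G : SimpleGraph V) (s : Finset V) :
    {n | ∃ M : Finset (Sym2 V), IsMatchingFinset G M ∧ suppIn s M ∧ M.card = n}.Nonempty :=
  ⟨0, ∅, empty_matching G, by intro e he; simp at he, rfl⟩

lemma matching_subset_edgeFinset {G : SimpleGraph V} {M : Finset (Sym2 V)}
    (hM : IsMatchingFinset G M) : M ⊆ G.edgeFinset := by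
  intro e he
  rw [SimpleGraph.mem_edgeFinset]
  exact hM.1 he

lemma nu_set_bddAbove (G : SimpleGraph V) (s : Finset V) :
    BddAbove {n | ∃ M : Finset (Sym2 V), IsMatchingFinset G M ∧ suppIn s M ∧ M.card = n} := by
  refine ⟨G.edgeFinset.card, ?_⟩
  rintro n ⟨M, hM, _, rfl⟩
  exact Finset.card_le_card (matching_subset_edgeFinset hM)

lemma exists_max_matching (G : SimpleGraph V) (s : Finset V) :
    ∃ M : Finset (Sym2 V), IsMatchingFinset G M ∧ suppIn s M ∧ M.card = nu G s :=
  Nat.sSup_mem (nu_set_nonempty G s) (nu_set_bddAbove G s)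

lemma card_le_nu {G : SimpleGraph V} {s : Finset V} {M : Finset (Sym2 V)}
    (hM : IsMatchingFinset G M) (hs : suppIn s M) : M.card ≤ nu G s :=
  le_csSup (nu_set_bddAbove G s) ⟨M, hM, hs, rfl⟩

lemma matchingNumber_eq_nu_univ (G : SimpleGraph V) : matchingNumber G = nu G Finset.univ := by
  unfold matchingNumber nu
  congr 1
  ext n
  constructor
  · rintro ⟨M, hM, rfl⟩
    exact ⟨M, hM, fun e _ v _ => Finset.mem_univ v, rfl⟩
  · rintro ⟨M, hM, _, rfl⟩
    exact ⟨M, hM, rfl⟩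

/-- The edges of `G` with both endpoints in `s`. -/
noncomputable def edgesIn (G : SimpleGraph V) (s : Finset V) : Finset (Sym2 V) :=
  G.edgeFinset.filter (fun e => ∀ v, v ∈ e → v ∈ s)

/-- Degree of `v` inside `s`. -/
noncomputable def degIn (G : SimpleGraph V) (s : Finset V) (v : V) : ℕ :=
  ((edgesIn G s).filter (fun e => v ∈ e)).card

lemma mem_edgesIn {G : SimpleGraph V} {s : Finset V} {e : Sym2 V} :
    e ∈ edgesIn G s ↔ e ∈ G.edgeSet ∧ ∀ v, v ∈ e → v ∈ s := by
  simp [edgesIn, SimpleGraph.mem_edgeFinset]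

lemma filter_mem_pair {s : Finset V} {a b : V} (hab : a ≠ b) (ha : a ∈ s) (hb : b ∈ s) :
    (s.filter (fun v => v ∈ s(a, b))).card = 2 := by
  have : s.filter (fun v => v ∈ s(a, b)) = {a, b} := by
    ext v
    simp only [Finset.mem_filter, Sym2.mem_iff, Finset.mem_insert, Finset.mem_singleton]
    constructor
    · rintro ⟨_, h⟩; exact h
    · rintro (rfl | rfl)
      · exact ⟨ha, Or.inl rfl⟩
      · exact ⟨hb, Or.inr rfl⟩
  rw [this, Finset.card_pair hab]

lemma edge_filter_card {G : SimpleGraph V} {s : Finset V} {e : Sym2 V}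
    (he : e ∈ G.edgeSet) (hs : ∀ v, v ∈ e → v ∈ s) :
    (s.filter (fun v => v ∈ e)).card = 2 := by
  induction e with
  | _ a b =>
    rw [SimpleGraph.mem_edgeSet] at he
    have hab : a ≠ b := G.ne_of_adj he
    exact filter_mem_pair hab (hs a (by simp)) (hs b (by simp))

lemma handshake (G : SimpleGraph V) (s : Finset V) :
    ∑ v ∈ s, degIn G s v = 2 * (edgesIn G s).card := by
  unfold degIn
  have h1 : ∀ v, ((edgesIn G s).filter (fun e => v ∈ e)).card
      = ∑ e ∈ edgesIn G s, if v ∈ e then 1 else 0 := by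
    intro v; rw [Finset.card_filter]
  simp_rw [h1]
  rw [Finset.sum_comm]
  have h2 : ∀ e ∈ edgesIn G s, (∑ v ∈ s, if v ∈ e then 1 else 0) = 2 := by
    intro e he
    rw [← Finset.card_filter]
    exact edge_filter_card (mem_edgesIn.mp he).1 (mem_edgesIn.mp he).2
  rw [Finset.sum_congr rfl h2, Finset.sum_const, smul_eq_mul, mul_comm]

lemma degIn_le_degree (G : SimpleGraph V) (s : Finset V) (v : V) :
    degIn G s v ≤ G.degree v := by
  rw [← SimpleGraph.card_neighborFinset_eq_degree]
  set f : Sym2 V → V := fun e => if h : v ∈ e then Sym2.Mem.other' h else v with hf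
  have hspec : ∀ e, v ∈ e → s(v, f e) = e := by
    intro e h
    simp only [hf, dif_pos h]
    exact Sym2.other_spec' h
  apply Finset.card_le_card_of_injOn f
  · intro e he
    simp only [Finset.mem_coe, Finset.mem_filter] at he ⊢
    obtain ⟨he1, hv⟩ := he
    rw [SimpleGraph.mem_neighborFinset, ← SimpleGraph.mem_edgeSet, hspec e hv]
    exact (mem_edgesIn.mp he1).1
  · intro e he e' he' hfe
    rw [Finset.mem_coe, Finset.mem_filter] at he he'
    rw [← hspec e he.2, ← hspec e' he'.2, hfe]

lemma degIn_le_erase_card (G : SimpleGraph V) (s : Finset V) (v : V) :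
    degIn G s v ≤ (s.erase v).card := by
  set f : Sym2 V → V := fun e => if h : v ∈ e then Sym2.Mem.other' h else v with hf
  have hspec : ∀ e, v ∈ e → s(v, f e) = e := by
    intro e h
    simp only [hf, dif_pos h]
    exact Sym2.other_spec' h
  apply Finset.card_le_card_of_injOn f
  · intro e he
    simp only [Finset.mem_coe, Finset.mem_filter] at he ⊢
    obtain ⟨he1, hv⟩ := he
    rw [mem_edgesIn] at he1
    rw [Finset.mem_erase]
    constructor
    · intro hfv
      have h2 := hspec e hv
      rw [hfv] at h2
      have h3 : s(v, v) ∈ G.edgeSet := h2 ▸ he1.1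
      rw [SimpleGraph.mem_edgeSet] at h3
      exact G.loopless.irrefl v h3
    · apply he1.2
      simp only [hf, dif_pos hv]
      exact Sym2.other_mem' hv
  · intro e he e' he' hfe
    rw [Finset.mem_coe, Finset.mem_filter] at he he'
    rw [← hspec e he.2, ← hspec e' he'.2, hfe]

lemma edgesIn_erase (G : SimpleGraph V) (s : Finset V) (v : V) :
    edgesIn G (s.erase v) = (edgesIn G s).filter (fun e => ¬ v ∈ e) := by
  ext e
  simp only [mem_edgesIn, Finset.mem_filter]
  constructor
  · rintro ⟨h1, h2⟩
    refine ⟨⟨h1, fun w hw => Finset.mem_of_mem_erase (h2 w hw)⟩, fun hv => ?_⟩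
    exact Finset.notMem_erase v s (h2 v hv)
  · rintro ⟨⟨h1, h2⟩, hv⟩
    refine ⟨h1, fun w hw => Finset.mem_erase.mpr ⟨?_, h2 w hw⟩⟩
    rintro rfl; exact hv hw

lemma ecard_erase (G : SimpleGraph V) (s : Finset V) (v : V) :
    (edgesIn G s).card = (edgesIn G (s.erase v)).card + degIn G s v := by
  rw [edgesIn_erase, degIn, add_comm]
  exact (Finset.card_filter_add_card_filter_not (p := fun e => v ∈ e)).symm

lemma cov_filter_card {G : SimpleGraph V} {M : Finset (Sym2 V)} (hM : IsMatchingFinset G M)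
    (v : V) : (M.filter (fun e => v ∈ e)).card = if cov M v then 1 else 0 := by
  by_cases h : cov M v
  · rw [if_pos h]
    obtain ⟨e0, he0, hve0⟩ := h
    have : M.filter (fun e => v ∈ e) = {e0} := by
      ext f
      simp only [Finset.mem_filter, Finset.mem_singleton]
      constructor
      · rintro ⟨hf, hvf⟩
        exact matching_unique hM hf he0 hvf hve0
      · rintro rfl; exact ⟨he0, hve0⟩
    rw [this, Finset.card_singleton]
  · rw [if_neg h]
    rw [Finset.card_eq_zero, Finset.filter_eq_empty_iff]
    intro e he hve
    exact h ⟨e, he, hve⟩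

lemma covered_card {G : SimpleGraph V} {s : Finset V} {M : Finset (Sym2 V)}
    (hM : IsMatchingFinset G M) (hs : suppIn s M) :
    (s.filter (fun v => cov M v)).card = 2 * M.card := by
  have key : ∑ v ∈ s, (M.filter (fun e => v ∈ e)).card = 2 * M.card := by
    have h1 : ∀ v, (M.filter (fun e => v ∈ e)).card
        = ∑ e ∈ M, if v ∈ e then 1 else 0 := fun v => Finset.card_filter _ _
    simp_rw [h1]
    rw [Finset.sum_comm]
    have h2 : ∀ e ∈ M, (∑ v ∈ s, if v ∈ e then 1 else 0) = 2 := by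
      intro e he
      rw [← Finset.card_filter]
      exact edge_filter_card (hM.1 he) (hs e he)
    rw [Finset.sum_congr rfl h2, Finset.sum_const, smul_eq_mul, mul_comm]
  rw [← key]
  rw [Finset.card_filter]
  exact Finset.sum_congr rfl fun v _ => (cov_filter_card hM v).symm

lemma exists_two_exposed {G : SimpleGraph V} {s : Finset V} {M : Finset (Sym2 V)}
    (hM : IsMatchingFinset G M) (hs : suppIn s M) (h : 2 * M.card + 2 ≤ s.card) :
    ∃ u ∈ s, ∃ w ∈ s, u ≠ w ∧ ¬cov M u ∧ ¬cov M w := by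
  have hsplit := Finset.card_filter_add_card_filter_not
    (s := s) (p := fun v => cov M v)
  rw [covered_card hM hs] at hsplit
  have h2 : 2 ≤ (s.filter (fun v => ¬cov M v)).card := by omega
  obtain ⟨u, hu, w, hw, huw⟩ := Finset.one_lt_card.mp
    (show 1 < (s.filter (fun v => ¬cov M v)).card by omega)
  rw [Finset.mem_filter] at hu hw
  exact ⟨u, hu.1, w, hw.1, huw, hu.2, hw.2⟩

/-- the partner of `v` in the matching `M`, if `v` is covered. -/
noncomputable def pmate (M : Finset (Sym2 V)) (v : V) : Option V :=
  if h : ∃ e ∈ M, v ∈ e then some (Sym2.Mem.other' h.choose_spec.2) else none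

lemma pmate_eq_none_iff {M : Finset (Sym2 V)} {v : V} :
    pmate M v = none ↔ ¬ cov M v := by
  unfold pmate cov
  by_cases h : ∃ e ∈ M, v ∈ e
  · simp [h]
  · simp [h]

lemma pmate_eq_some_iff {G : SimpleGraph V} {M : Finset (Sym2 V)} (hM : IsMatchingFinset G M)
    {v w : V} : pmate M v = some w ↔ s(v, w) ∈ M := by
  constructor
  · intro h
    unfold pmate at h
    by_cases hc : ∃ e ∈ M, v ∈ e
    · rw [dif_pos hc] at h
      have hspec := Sym2.other_spec' hc.choose_spec.2
      rw [Option.some_inj] at h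
      rw [h] at hspec
      rw [hspec]
      exact hc.choose_spec.1
    · rw [dif_neg hc] at h; exact absurd h (by simp)
  · intro h
    have hc : ∃ e ∈ M, v ∈ e := ⟨s(v, w), h, by simp⟩
    unfold pmate
    rw [dif_pos hc]
    have hspec := Sym2.other_spec' hc.choose_spec.2
    have heq : hc.choose = s(v, w) :=
      matching_unique hM hc.choose_spec.1 h hc.choose_spec.2 (by simp)
    exact congrArg some (Sym2.congr_right.mp (hspec.trans heq))

lemma pmate_symm {G : SimpleGraph V} {M : Finset (Sym2 V)} (hM : IsMatchingFinset G M)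
    {v w : V} (h : pmate M v = some w) : pmate M w = some v := by
  rw [pmate_eq_some_iff hM] at h ⊢
  rwa [Sym2.eq_swap]

lemma pmate_ne {G : SimpleGraph V} {M : Finset (Sym2 V)} (hM : IsMatchingFinset G M)
    {v w : V} (h : pmate M v = some w) : w ≠ v := by
  rintro rfl
  exact matching_not_diag hM ((pmate_eq_some_iff hM).mp h)

lemma pmate_cov {M : Finset (Sym2 V)} {v w : V} (h : pmate M v = some w) : cov M v := by
  by_contra hc
  rw [← pmate_eq_none_iff] at hc
  rw [hc] at h
  exact absurd h (by simp)

/-- one step of the alternating walk. -/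
noncomputable def mstep (M N : Finset (Sym2 V)) (p : Bool × V) : Option (Bool × V) :=
  (pmate (if p.1 then N else M) p.2).map (fun w => (!p.1, w))

/-- the alternating walk starting at `u`, beginning with an `N`-edge. -/
noncomputable def walk (M N : Finset (Sym2 V)) (u : V) : ℕ → Option (Bool × V)
  | 0 => some (true, u)
  | n + 1 => (walk M N u n).bind (mstep M N)

lemma mstep_eq_some_iff {M N : Finset (Sym2 V)} {b : Bool} {v : V} {st : Bool × V} :
    mstep M N (b, v) = some st ↔
      ∃ w, pmate (if b then N else M) v = some w ∧ st = (!b, w) := by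
  unfold mstep
  cases h : pmate (if b then N else M) v with
  | none => simp
  | some w => simp [eq_comm]

lemma mstep_inj {G : SimpleGraph V} {M N : Finset (Sym2 V)}
    (hM : IsMatchingFinset G M) (hN : IsMatchingFinset G N)
    {st1 st2 st : Bool × V} (h1 : mstep M N st1 = some st)
    (h2 : mstep M N st2 = some st) : st1 = st2 := by
  obtain ⟨b1, v1⟩ := st1
  obtain ⟨b2, v2⟩ := st2
  rw [mstep_eq_some_iff] at h1 h2
  obtain ⟨w1, hw1, rfl⟩ := h1
  obtain ⟨w2, hw2, hst⟩ := h2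
  have hb : b1 = b2 := by
    have h := congrArg Prod.fst hst
    cases b1 <;> cases b2 <;> simp_all
  subst hb
  have hw : w1 = w2 := by
    have h := congrArg Prod.snd hst
    simpa using h
  subst hw
  have hm : IsMatchingFinset G (if b1 then N else M) := by
    cases b1
    · simpa
    · simpa
  have e1 := (pmate_eq_some_iff hm).mp hw1
  have e2 := (pmate_eq_some_iff hm).mp hw2
  rw [Sym2.eq_swap] at e1 e2
  have := matching_unique hm e1 e2 (v := w1) (by simp) (by simp)
  have := Sym2.congr_right.mp this
  rw [this]

lemma walk_succ {M N : Finset (Sym2 V)} {u : V} {n : ℕ} {st : Bool × V}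
    (h : walk M N u (n + 1) = some st) :
    ∃ st', walk M N u n = some st' ∧ mstep M N st' = some st := by
  have : walk M N u (n+1) = (walk M N u n).bind (mstep M N) := rfl
  rw [this] at h
  exact Option.bind_eq_some_iff.mp h

lemma walk_back {G : SimpleGraph V} {M N : Finset (Sym2 V)}
    (hM : IsMatchingFinset G M) (hN : IsMatchingFinset G N) {u : V} :
    ∀ i j (st : Bool × V), walk M N u i = some st → walk M N u j = some st → i ≤ j →
      walk M N u (j - i) = some (true, u) := by
  intro i
  induction i with
  | zero =>
    intro j st hi hj _
    have : st = (true, u) := by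
      have : walk M N u 0 = some (true, u) := rfl
      rw [this] at hi; exact (Option.some_inj.mp hi).symm
    rw [this] at hj
    simpa using hj
  | succ i ih =>
    intro j st hi hj hij
    obtain ⟨j', rfl⟩ : ∃ j', j = j' + 1 := ⟨j - 1, by omega⟩
    obtain ⟨st1, hst1, hm1⟩ := walk_succ hi
    obtain ⟨st2, hst2, hm2⟩ := walk_succ hj
    have : st1 = st2 := mstep_inj hM hN hm1 hm2
    rw [this] at hst1
    have := ih j' st2 hst1 hst2 (by omega)
    simpa using this

lemma walk_no_return {G : SimpleGraph V} {M N : Finset (Sym2 V)}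
    (hM : IsMatchingFinset G M) (hN : IsMatchingFinset G N) {u : V} (hu : ¬ cov M u)
    {k : ℕ} (h : walk M N u k = some (true, u)) : k = 0 := by
  cases k with
  | zero => rfl
  | succ n =>
    exfalso
    obtain ⟨⟨b, v⟩, _, hm⟩ := walk_succ h
    rw [mstep_eq_some_iff] at hm
    obtain ⟨w, hw, hst⟩ := hm
    have hb : b = false := by
      have h2 := congrArg Prod.fst hst
      cases b <;> simp_all
    subst hb
    simp only [Bool.false_eq_true, if_false] at hw
    have hwu : w = u := by have h2 := congrArg Prod.snd hst; simpa using h2.symm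
    subst hwu
    exact hu (pmate_cov (pmate_symm hM hw))

lemma walk_state_inj {G : SimpleGraph V} {M N : Finset (Sym2 V)}
    (hM : IsMatchingFinset G M) (hN : IsMatchingFinset G N) {u : V} (hu : ¬ cov M u)
    {i j : ℕ} {st : Bool × V} (hi : walk M N u i = some st)
    (hj : walk M N u j = some st) (hij : i < j) : False := by
  have := walk_back hM hN i j st hi hj (le_of_lt hij)
  have := walk_no_return hM hN hu this
  omega

lemma walk_parity {G : SimpleGraph V} {M N : Finset (Sym2 V)}
    (hM : IsMatchingFinset G M) (hN : IsMatchingFinset G N) {u : V} :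
    ∀ i (b : Bool) (v : V), walk M N u i = some (b, v) → (b = true ↔ Even i) := by
  intro i
  induction i with
  | zero =>
    intro b v h
    have : walk M N u 0 = some (true, u) := rfl
    rw [this] at h
    have h2 : (true, u) = (b, v) := Option.some_inj.mp h
    have hb : b = true := (congrArg Prod.fst h2).symm
    simp [hb]
  | succ i ih =>
    intro b v h
    obtain ⟨⟨b', v'⟩, hst, hm⟩ := walk_succ h
    rw [mstep_eq_some_iff] at hm
    obtain ⟨w, hw, hbw⟩ := hm
    have hb : b = !b' := by have := congrArg Prod.fst hbw; simpa using this
    have := ih b' v' hst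
    rw [Nat.even_add_one]
    subst hb
    cases b' <;> simp_all

lemma walk_vopp {G : SimpleGraph V} {M N : Finset (Sym2 V)}
    (hM : IsMatchingFinset G M) (hN : IsMatchingFinset G N) {u : V} (hu : ¬ cov M u) :
    ∀ d i j (b : Bool) (v : V), j - i = d → i < j →
      walk M N u i = some (b, v) → walk M N u j = some (!b, v) → False := by
  intro d
  induction d using Nat.strong_induction_on with
  | _ d ih =>
    intro i j b v hd hij hi hj
    obtain ⟨j', rfl⟩ : ∃ j', j = j' + 1 := ⟨j - 1, by omega⟩
    obtain ⟨⟨b2, v2⟩, hst2, hm2⟩ := walk_succ hj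
    rw [mstep_eq_some_iff] at hm2
    obtain ⟨w, hw, hbw⟩ := hm2
    have hb2 : b2 = b := by
      have h2 := congrArg Prod.fst hbw
      cases b <;> cases b2 <;> simp_all
    have hwv : w = v := by
      have h2 := congrArg Prod.snd hbw
      simpa using h2.symm
    rw [hb2, hwv] at hw
    rw [hb2] at hst2
    -- hw : pmate mb v2 = some v, hst2 : walk j' = some (b, v2)
    have hmb : IsMatchingFinset G (if b then N else M) := by
      cases b
      · simpa
      · simpa
    have hw' : pmate (if b then N else M) v = some v2 := pmate_symm hmb hw
    have hstep : walk M N u (i + 1) = some (!b, v2) := by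
      have hb3 : walk M N u (i+1) = (walk M N u i).bind (mstep M N) := rfl
      rw [hb3, hi]
      rw [Option.bind_some]
      rw [mstep_eq_some_iff]
      exact ⟨v2, hw', rfl⟩
    by_cases hcase : i + 1 = j' + 1
    · -- j = i+1
      rw [hcase] at hstep
      rw [hstep] at hj
      have hveq : v2 = v := by
        have h2 := congrArg (fun o => Option.map Prod.snd o) hj
        simpa using h2
      rw [hveq] at hw
      exact matching_not_diag hmb ((pmate_eq_some_iff hmb).mp hw)
    · by_cases hcase2 : i + 1 = j'
      · rw [hcase2] at hstep
        rw [hstep] at hst2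
        have h2 : (!b : Bool) = b := by
          have h3 := congrArg (fun o => Option.map Prod.fst o) hst2
          simpa using h3
        cases b <;> simp at h2
      · have hlt : i + 1 < j' := by omega
        have hbb : (b : Bool) = !(!b) := by simp
        rw [hbb] at hst2
        exact ih (j' - (i+1)) (by omega) (i+1) j' (!b) v2 rfl hlt hstep hst2

lemma walk_vtx_inj {G : SimpleGraph V} {M N : Finset (Sym2 V)}
    (hM : IsMatchingFinset G M) (hN : IsMatchingFinset G N) {u : V} (hu : ¬ cov M u)
    {i j : ℕ} {b b' : Bool} {v : V} (hi : walk M N u i = some (b, v))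
    (hj : walk M N u j = some (b', v)) (hij : i < j) : False := by
  by_cases hb : b' = b
  · subst hb
    exact walk_state_inj hM hN hu hi hj hij
  · have : b' = !b := by cases b <;> cases b' <;> simp_all
    subst this
    exact walk_vopp hM hN hu (j - i) i j b v rfl hij hi hj

lemma walk_terminates {G : SimpleGraph V} {M N : Finset (Sym2 V)}
    (hM : IsMatchingFinset G M) (hN : IsMatchingFinset G N) {u : V} (hu : ¬ cov M u) :
    ∃ n, walk M N u n = none := by
  by_contra h
  push_neg at h
  have hex : ∀ n, ∃ st, walk M N u n = some st := by
    intro n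
    cases hw : walk M N u n with
    | none => exact absurd hw (h n)
    | some st => exact ⟨st, rfl⟩
  choose f hf using hex
  obtain ⟨x, y, hxy, hfeq⟩ := Finite.exists_ne_map_eq_of_infinite f
  rcases Nat.lt_or_ge x y with hlt | hge
  · exact walk_state_inj hM hN hu (hf x) (hfeq ▸ hf y) hlt
  · have hlt : y < x := by omega
    exact walk_state_inj hM hN hu (hf y) (hfeq ▸ hf x) hlt

lemma walk_last {G : SimpleGraph V} {M N : Finset (Sym2 V)}
    (hM : IsMatchingFinset G M) (hN : IsMatchingFinset G N) {u : V} (hu : ¬ cov M u)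
    (huN : cov N u) :
    ∃ k, 0 < k ∧ (∀ i, i ≤ k → walk M N u i ≠ none) ∧ walk M N u (k + 1) = none := by
  have hterm := walk_terminates hM hN hu
  set K := Nat.find hterm with hK
  have hKspec : walk M N u K = none := Nat.find_spec hterm
  have hKmin : ∀ m, m < K → walk M N u m ≠ none := fun m hm => Nat.find_min hterm hm
  have h0 : walk M N u 0 = some (true, u) := rfl
  have h1 : walk M N u 1 ≠ none := by
    have hb : walk M N u 1 = (walk M N u 0).bind (mstep M N) := rfl
    rw [hb, h0]
    rw [Option.bind_some]
    unfold mstep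
    cases hp : pmate N u with
    | none => exact absurd (pmate_eq_none_iff.mp hp) (by simpa using huN)
    | some w => simp [hp]
  have hK2 : 2 ≤ K := by
    rcases Nat.lt_or_ge K 2 with h | h
    · interval_cases K
      · exact absurd hKspec (by simp [h0])
      · exact absurd hKspec h1
    · exact h
  refine ⟨K - 1, by omega, fun i hi => hKmin i (by omega), ?_⟩
  have : K - 1 + 1 = K := by omega
  rw [this]
  exact hKspec


lemma sym2_exists_mem (e : Sym2 V) : ∃ v, v ∈ e := by
  induction e with
  | _ a b => exact ⟨a, by simp⟩

lemma matching_mono {G : SimpleGraph V} {M Q : Finset (Sym2 V)} (h : Q ⊆ M)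
    (hM : IsMatchingFinset G M) : IsMatchingFinset G Q := by
  constructor
  · intro e he; exact hM.1 (h (by exact_mod_cast he))
  · intro e he f hf hne v
    exact hM.2 e (h he) f (h hf) hne v

lemma suppIn_mono {s : Finset V} {M Q : Finset (Sym2 V)} (h : Q ⊆ M) (hs : suppIn s M) :
    suppIn s Q := fun e he v hv => hs e (h he) v hv

lemma flip_matching {G : SimpleGraph V} {s : Finset V} {X Q : Finset (Sym2 V)}
    (hX : IsMatchingFinset G X) (hXs : suppIn s X)
    (hQ : IsMatchingFinset G Q) (hQs : suppIn s Q)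
    {P : Finset (Sym2 V)} (hPX : P ⊆ X)
    (hkey : ∀ e ∈ X, ∀ v, v ∈ e → cov Q v → e ∈ P) :
    IsMatchingFinset G ((X \ P) ∪ Q) ∧ suppIn s ((X \ P) ∪ Q) ∧
      ((X \ P) ∪ Q).card = X.card - P.card + Q.card := by
  have hdisj : Disjoint (X \ P) Q := by
    rw [Finset.disjoint_left]
    intro e he heQ
    rw [Finset.mem_sdiff] at he
    obtain ⟨v, hv⟩ := sym2_exists_mem e
    exact he.2 (hkey e he.1 v hv ⟨e, heQ, hv⟩)
  refine ⟨⟨?_, ?_⟩, ?_, ?_⟩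
  · intro e he
    rw [Finset.mem_coe, Finset.mem_union] at he
    rcases he with he | he
    · exact hX.1 (Finset.mem_sdiff.mp he).1
    · exact hQ.1 he
  · intro e he f hf hne v hv
    rw [Finset.mem_union] at he hf
    rcases he with he | he <;> rcases hf with hf | hf
    · rw [Finset.mem_sdiff] at he hf
      exact hX.2 e he.1 f hf.1 hne v hv
    · rw [Finset.mem_sdiff] at he
      exact he.2 (hkey e he.1 v hv.1 ⟨f, hf, hv.2⟩)
    · rw [Finset.mem_sdiff] at hf
      exact hf.2 (hkey f hf.1 v hv.2 ⟨e, he, hv.1⟩)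
    · exact hQ.2 e he f hf hne v hv
  · intro e he v hv
    rw [Finset.mem_union] at he
    rcases he with he | he
    · exact hXs e (Finset.mem_sdiff.mp he).1 v hv
    · exact hQs e he v hv
  · rw [Finset.card_union_of_disjoint hdisj, Finset.card_sdiff_of_subset hPX]

lemma count_mod (n : ℕ) :
    (((Finset.range n).filter (fun i => i % 2 = 0)).card = (n + 1) / 2) ∧
      (((Finset.range n).filter (fun i => ¬ i % 2 = 0)).card = n / 2) := by
  induction n with
  | zero => simp
  | succ n ih =>
    rw [Finset.range_add_one, Finset.filter_insert, Finset.filter_insert]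
    have hnotmem : n ∉ Finset.range n := by simp
    by_cases h : n % 2 = 0
    · rw [if_pos h, if_neg (by simpa using h)]
      rw [Finset.card_insert_of_notMem (fun hc => hnotmem (Finset.mem_filter.mp hc).1)]
      omega
    · rw [if_neg h, if_pos h]
      rw [Finset.card_insert_of_notMem (fun hc => hnotmem (Finset.mem_filter.mp hc).1)]
      omega

/-- The main alternating-path flip lemma. -/
lemma flip_main {G : SimpleGraph V} {s : Finset V} {M N : Finset (Sym2 V)}
    (hM : IsMatchingFinset G M) (hMs : suppIn s M) (hMmax : M.card = nu G s)
    (hN : IsMatchingFinset G N) (hNs : suppIn s N)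
    {u : V} (hu : ¬ cov M u) (huN : cov N u) :
    ∃ t : V, t ≠ u ∧ ¬ cov N t ∧
      (∃ N', IsMatchingFinset G N' ∧ suppIn s N' ∧ N'.card = N.card ∧ ¬ cov N' u ∧
        ∀ z, ¬ cov N z → z ≠ t → ¬ cov N' z) ∧
      (∃ M', IsMatchingFinset G M' ∧ suppIn s M' ∧ M'.card = M.card ∧ ¬ cov M' t ∧
        ∀ w, ¬ cov M w → w ≠ u → ¬ cov M' w) := by
  classical
  obtain ⟨k, hk0, hdef, hend⟩ := walk_last hM hN hu huN
  set vt : ℕ → V := fun i => ((walk M N u i).map Prod.snd).getD u with hvt_def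
  set bt : ℕ → Bool := fun i => ((walk M N u i).map Prod.fst).getD true with hbt_def
  have hwalk : ∀ i, i ≤ k → walk M N u i = some (bt i, vt i) := by
    intro i hi
    cases hw : walk M N u i with
    | none => exact absurd hw (hdef i hi)
    | some st =>
      obtain ⟨b, v⟩ := st
      simp [hvt_def, hbt_def, hw]
  have hvt0 : vt 0 = u := by
    have : walk M N u 0 = some (true, u) := rfl
    simp [hvt_def, this]
  have hbt0 : bt 0 = true := by
    have : walk M N u 0 = some (true, u) := rfl
    simp [hbt_def, this]
  have hbt : ∀ i, i ≤ k → (bt i = true ↔ i % 2 = 0) := by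
    intro i hi
    rw [← Nat.even_iff]
    exact walk_parity hM hN i (bt i) (vt i) (hwalk i hi)
  have hpm : ∀ i, i < k → pmate (if bt i then N else M) (vt i) = some (vt (i + 1)) := by
    intro i hi
    have h1 := hwalk i (by omega)
    have h2 := hwalk (i + 1) (by omega)
    have hb : walk M N u (i + 1) = (walk M N u i).bind (mstep M N) := rfl
    rw [hb, h1, Option.bind_some, mstep_eq_some_iff] at h2
    obtain ⟨w, hw, hbw⟩ := h2
    have : w = vt (i + 1) := by
      have h3 := congrArg Prod.snd hbw; simpa using h3.symm
    rwa [this] at hw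
  have hmb : ∀ i, IsMatchingFinset G (if bt i then N else M) := by
    intro i
    cases h : bt i
    · simpa
    · simpa
  have hedge : ∀ i, i < k → s(vt i, vt (i + 1)) ∈ (if bt i then N else M) :=
    fun i hi => (pmate_eq_some_iff (hmb i)).mp (hpm i hi)
  have hedgeN : ∀ i, i < k → i % 2 = 0 → s(vt i, vt (i + 1)) ∈ N := by
    intro i hi hp
    have := hedge i hi
    rwa [if_pos ((hbt i (by omega)).mpr hp)] at this
  have hedgeM : ∀ i, i < k → ¬ i % 2 = 0 → s(vt i, vt (i + 1)) ∈ M := by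
    intro i hi hp
    have := hedge i hi
    have hb : bt i = false := by
      cases h : bt i
      · rfl
      · exact absurd ((hbt i (by omega)).mp h) hp
    rwa [hb, if_neg (by simp)] at this
  have hterm : ¬ cov (if bt k then N else M) (vt k) := by
    have hb : walk M N u (k + 1) = (walk M N u k).bind (mstep M N) := rfl
    rw [hb, hwalk k le_rfl, Option.bind_some] at hend
    unfold mstep at hend
    cases hp : pmate (if bt k then N else M) (vt k) with
    | none => exact pmate_eq_none_iff.mp hp
    | some w => rw [hp] at hend; simp at hend
  have htermN : k % 2 = 0 → ¬ cov N (vt k) := by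
    intro hke
    have := hterm
    rwa [if_pos ((hbt k le_rfl).mpr hke)] at this
  have htermM : ¬ k % 2 = 0 → ¬ cov M (vt k) := by
    intro hke
    have := hterm
    have hb : bt k = false := by
      cases h : bt k
      · rfl
      · exact absurd ((hbt k le_rfl).mp h) hke
    rwa [hb, if_neg (by simp)] at this
  have hinj : ∀ i j, i < j → j ≤ k → vt i ≠ vt j := by
    intro i j hij hj heq
    exact walk_vtx_inj hM hN hu (hwalk i (by omega)) (heq ▸ hwalk j hj) hij
  set pathN : Finset (Sym2 V) :=
    ((Finset.range k).filter (fun i => i % 2 = 0)).image (fun i => s(vt i, vt (i + 1)))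
    with hpathN_def
  set pathM : Finset (Sym2 V) :=
    ((Finset.range k).filter (fun i => ¬ i % 2 = 0)).image (fun i => s(vt i, vt (i + 1)))
    with hpathM_def
  have hmemN : ∀ e, e ∈ pathN ↔ ∃ i, i < k ∧ i % 2 = 0 ∧ e = s(vt i, vt (i + 1)) := by
    intro e
    simp only [hpathN_def, Finset.mem_image, Finset.mem_filter, Finset.mem_range]
    constructor
    · rintro ⟨i, ⟨hi, hp⟩, he⟩; exact ⟨i, hi, hp, he.symm⟩
    · rintro ⟨i, hi, hp, he⟩; exact ⟨i, ⟨hi, hp⟩, he.symm⟩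
  have hmemM : ∀ e, e ∈ pathM ↔ ∃ i, i < k ∧ ¬ i % 2 = 0 ∧ e = s(vt i, vt (i + 1)) := by
    intro e
    simp only [hpathM_def, Finset.mem_image, Finset.mem_filter, Finset.mem_range]
    constructor
    · rintro ⟨i, ⟨hi, hp⟩, he⟩; exact ⟨i, hi, hp, he.symm⟩
    · rintro ⟨i, hi, hp, he⟩; exact ⟨i, ⟨hi, hp⟩, he.symm⟩
  have hsubN : pathN ⊆ N := by
    intro e he
    obtain ⟨i, hi, hp, rfl⟩ := (hmemN e).mp he
    exact hedgeN i hi hp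
  have hsubM : pathM ⊆ M := by
    intro e he
    obtain ⟨i, hi, hp, rfl⟩ := (hmemM e).mp he
    exact hedgeM i hi hp
  -- F3 : any N-edge at a path vertex is a path edge
  have keyN : ∀ i, i ≤ k → ∀ e ∈ N, vt i ∈ e → e ∈ pathN := by
    intro i hik e he hv
    by_cases hp : i % 2 = 0
    · by_cases hik' : i = k
      · exfalso
        rw [hik'] at hv hp
        exact htermN hp ⟨e, he, hv⟩
      · have hi : i < k := by omega
        have hf := hedgeN i hi hp
        have : e = s(vt i, vt (i + 1)) := matching_unique hN he hf hv (by simp)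
        rw [this, hmemN]
        exact ⟨i, hi, hp, rfl⟩
    · have hi1 : 1 ≤ i := by omega
      have hi : i - 1 < k := by omega
      have hp' : (i - 1) % 2 = 0 := by omega
      have hf := hedgeN (i - 1) hi hp'
      have hi1' : i - 1 + 1 = i := by omega
      rw [hi1'] at hf
      have : e = s(vt (i - 1), vt i) := matching_unique hN he hf hv (by simp)
      rw [this, hmemN]
      exact ⟨i - 1, hi, hp', by rw [hi1']⟩
  -- F4 : any M-edge at a path vertex is a path edge
  have keyM : ∀ i, i ≤ k → ∀ e ∈ M, vt i ∈ e → e ∈ pathM := by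
    intro i hik e he hv
    by_cases hp : i % 2 = 0
    · by_cases hi0 : i = 0
      · exfalso
        rw [hi0, hvt0] at hv
        exact hu ⟨e, he, hv⟩
      · have hi1 : 1 ≤ i := by omega
        have hi : i - 1 < k := by omega
        have hp' : ¬ (i - 1) % 2 = 0 := by omega
        have hf := hedgeM (i - 1) hi hp'
        have hi1' : i - 1 + 1 = i := by omega
        rw [hi1'] at hf
        have : e = s(vt (i - 1), vt i) := matching_unique hM he hf hv (by simp)
        rw [this, hmemM]
        exact ⟨i - 1, hi, hp', by rw [hi1']⟩
    · by_cases hik' : i = k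
      · exfalso
        rw [hik'] at hv hp
        exact htermM hp ⟨e, he, hv⟩
      · have hi : i < k := by omega
        have hf := hedgeM i hi hp
        have : e = s(vt i, vt (i + 1)) := matching_unique hM he hf hv (by simp)
        rw [this, hmemM]
        exact ⟨i, hi, hp, rfl⟩
  -- path vertices with i < k are N-covered
  have covN : ∀ i, i ≤ k → ¬ cov N (vt i) → i = k := by
    intro i hik hnc
    by_contra hne
    have hi : i < k := by omega
    by_cases hp : i % 2 = 0
    · exact hnc ⟨s(vt i, vt (i + 1)), hedgeN i hi hp, by simp⟩
    · have hi1' : i - 1 + 1 = i := by omega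
      have hf := hedgeN (i - 1) (by omega) (by omega)
      rw [hi1'] at hf
      exact hnc ⟨s(vt (i - 1), vt i), hf, by simp⟩
  have covM : k % 2 = 0 → ∀ i, i ≤ k → ¬ cov M (vt i) → i = 0 := by
    intro hke i hik hnc
    by_contra hne
    by_cases hp : i % 2 = 0
    · have hi1' : i - 1 + 1 = i := by omega
      have hf := hedgeM (i - 1) (by omega) (by omega)
      rw [hi1'] at hf
      exact hnc ⟨s(vt (i - 1), vt i), hf, by simp⟩
    · have hi : i < k := by omega
      exact hnc ⟨s(vt i, vt (i + 1)), hedgeM i hi hp, by simp⟩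
  -- injectivity of the edge maps, cardinalities
  have hinj2 : ∀ i j, i < k → j < k → s(vt i, vt (i + 1)) = s(vt j, vt (j + 1)) → i = j := by
    intro i j hi hj heq
    rcases lt_trichotomy i j with h | h | h
    · exfalso
      rw [Sym2.eq_iff] at heq
      rcases heq with ⟨h1, _⟩ | ⟨h1, h2⟩
      · exact hinj i j h (by omega) h1
      · rcases Nat.lt_or_ge i (j + 1) with h3 | h3
        · exact hinj i (j + 1) h3 (by omega) h1
        · exact hinj j (i + 1) (by omega) (by omega) h2.symm
    · exact h
    · exfalso
      rw [Sym2.eq_iff] at heq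
      rcases heq with ⟨h1, _⟩ | ⟨h1, h2⟩
      · exact hinj j i h (by omega) h1.symm
      · exact hinj j (i + 1) (by omega) (by omega) h2.symm
  have hcardN : pathN.card = (k + 1) / 2 := by
    rw [hpathN_def, Finset.card_image_of_injOn, (count_mod k).1]
    intro i hi j hj heq
    rw [Finset.mem_coe, Finset.mem_filter, Finset.mem_range] at hi hj
    exact hinj2 i j hi.1 hj.1 heq
  have hcardM : pathM.card = k / 2 := by
    rw [hpathM_def, Finset.card_image_of_injOn, (count_mod k).2]
    intro i hi j hj heq
    rw [Finset.mem_coe, Finset.mem_filter, Finset.mem_range] at hi hj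
    exact hinj2 i j hi.1 hj.1 heq
  have hpathN_match := matching_mono hsubN hN
  have hpathM_match := matching_mono hsubM hM
  have hpathN_supp := suppIn_mono hsubN hNs
  have hpathM_supp := suppIn_mono hsubM hMs
  -- the two flips
  have hMflip := flip_matching hM hMs hpathN_match hpathN_supp hsubM
    (fun e he v hv hcov => by
      obtain ⟨f, hf, hvf⟩ := hcov
      obtain ⟨i, hi, hp, rfl⟩ := (hmemN f).mp hf
      rcases Sym2.mem_iff.mp hvf with rfl | rfl
      · exact keyM i (by omega) e he hv
      · exact keyM (i + 1) (by omega) e he hv)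
  have hNflip := flip_matching hN hNs hpathM_match hpathM_supp hsubN
    (fun e he v hv hcov => by
      obtain ⟨f, hf, hvf⟩ := hcov
      obtain ⟨i, hi, hp, rfl⟩ := (hmemM f).mp hf
      rcases Sym2.mem_iff.mp hvf with rfl | rfl
      · exact keyN i (by omega) e he hv
      · exact keyN (i + 1) (by omega) e he hv)
  -- k is even
  have hkeven : k % 2 = 0 := by
    by_contra hko
    have hcard : ((M \ pathM) ∪ pathN).card = M.card + 1 := by
      rw [hMflip.2.2, hcardM, hcardN]
      have h1 : pathM.card ≤ M.card := Finset.card_le_card hsubM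
      rw [hcardM] at h1
      omega
    have := card_le_nu hMflip.1 hMflip.2.1
    rw [hcard, ← hMmax] at this
    omega
  -- construct the results
  refine ⟨vt k, fun h => hinj 0 k hk0 le_rfl (hvt0.symm ▸ h.symm), htermN hkeven, ?_, ?_⟩
  · -- N' := (N \ pathN) ∪ pathM
    refine ⟨(N \ pathN) ∪ pathM, hNflip.1, hNflip.2.1, ?_, ?_, ?_⟩
    · rw [hNflip.2.2, hcardN, hcardM]
      have h1 : pathN.card ≤ N.card := Finset.card_le_card hsubN
      rw [hcardN] at h1
      omega
    · rintro ⟨e, he, hv⟩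
      rw [Finset.mem_union] at he
      rcases he with he | he
      · rw [Finset.mem_sdiff] at he
        exact he.2 (keyN 0 (by omega) e he.1 (hvt0.symm ▸ hv))
      · obtain ⟨i, hi, hp, rfl⟩ := (hmemM e).mp he
        rcases Sym2.mem_iff.mp hv with h | h
        · exact hinj 0 i (by omega) (by omega) (hvt0 ▸ h)
        · exact hinj 0 (i + 1) (by omega) (by omega) (hvt0 ▸ h)
    · rintro z hz hzt ⟨e, he, hv⟩
      rw [Finset.mem_union] at he
      rcases he with he | he
      · exact hz ⟨e, (Finset.mem_sdiff.mp he).1, hv⟩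
      · obtain ⟨i, hi, hp, rfl⟩ := (hmemM e).mp he
        rcases Sym2.mem_iff.mp hv with h | h
        · exact hzt (by rw [h, covN i (by omega) (h ▸ hz)])
        · exact hzt (by rw [h, covN (i + 1) (by omega) (h ▸ hz)])
  · -- M' := (M \ pathM) ∪ pathN
    refine ⟨(M \ pathM) ∪ pathN, hMflip.1, hMflip.2.1, ?_, ?_, ?_⟩
    · rw [hMflip.2.2, hcardM, hcardN]
      have h1 : pathM.card ≤ M.card := Finset.card_le_card hsubM
      rw [hcardM] at h1
      omega
    · rintro ⟨e, he, hv⟩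
      rw [Finset.mem_union] at he
      rcases he with he | he
      · rw [Finset.mem_sdiff] at he
        exact he.2 (keyM k le_rfl e he.1 hv)
      · obtain ⟨i, hi, hp, rfl⟩ := (hmemN e).mp he
        rcases Sym2.mem_iff.mp hv with h | h
        · exact hinj i k hi le_rfl h.symm
        · have : i + 1 < k := by omega
          exact hinj (i + 1) k this le_rfl h.symm
    · rintro w hw hwu ⟨e, he, hv⟩
      rw [Finset.mem_union] at he
      rcases he with he | he
      · exact hw ⟨e, (Finset.mem_sdiff.mp he).1, hv⟩
      · obtain ⟨i, hi, hp, rfl⟩ := (hmemN e).mp he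
        rcases Sym2.mem_iff.mp hv with h | h
        · exact hwu (by rw [h, covM hkeven i (by omega) (h ▸ hw), hvt0])
        · exact hwu (by rw [h, covM hkeven (i + 1) (by omega) (h ▸ hw), hvt0])


/-- The graph `G` restricted to vertex set `s` (as a graph on the same vertex type). -/
def gs (G : SimpleGraph V) (s : Finset V) : SimpleGraph V where
  Adj a b := G.Adj a b ∧ a ∈ s ∧ b ∈ s
  symm := ⟨fun a b h => ⟨h.1.symm, h.2.2, h.2.1⟩⟩
  loopless := ⟨fun a h => G.loopless.irrefl a h.1⟩

lemma insert_matching {G : SimpleGraph V} {s : Finset V} {L : Finset (Sym2 V)}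
    (hL : IsMatchingFinset G L) (hLs : suppIn s L) {u w : V} (hadj : G.Adj u w)
    (hus : u ∈ s) (hws : w ∈ s) (hu : ¬ cov L u) (hw : ¬ cov L w) :
    IsMatchingFinset G (insert s(u, w) L) ∧ suppIn s (insert s(u, w) L) ∧
      (insert s(u, w) L).card = L.card + 1 := by
  have hnotmem : s(u, w) ∉ L := fun h => hu ⟨s(u, w), h, by simp⟩
  refine ⟨⟨?_, ?_⟩, ?_, ?_⟩
  · intro e he
    rw [Finset.mem_coe, Finset.mem_insert] at he
    rcases he with rfl | he
    · rwa [SimpleGraph.mem_edgeSet]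
    · exact hL.1 he
  · intro e he f hf hne v hv
    rw [Finset.mem_insert] at he hf
    rcases he with rfl | he <;> rcases hf with rfl | hf
    · exact hne rfl
    · rcases Sym2.mem_iff.mp hv.1 with rfl | rfl
      · exact hu ⟨f, hf, hv.2⟩
      · exact hw ⟨f, hf, hv.2⟩
    · rcases Sym2.mem_iff.mp hv.2 with rfl | rfl
      · exact hu ⟨e, he, hv.1⟩
      · exact hw ⟨e, he, hv.1⟩
    · exact hL.2 e he f hf hne v hv
  · intro e he v hv
    rw [Finset.mem_insert] at he
    rcases he with rfl | he
    · rcases Sym2.mem_iff.mp hv with rfl | rfl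
      · exact hus
      · exact hws
    · exact hLs e he v hv
  · exact Finset.card_insert_of_notMem hnotmem

/-- Gallai's lemma (light form): a connected graph in which every vertex is missed
by some maximum matching has at most `2ν + 1` vertices. -/
lemma gallai {G : SimpleGraph V} {s : Finset V}
    (hconn : ∀ a b, a ∈ s → b ∈ s → (gs G s).Reachable a b)
    (hiness : ∀ v ∈ s, ∃ N, IsMatchingFinset G N ∧ suppIn s N ∧ N.card = nu G s ∧ ¬ cov N v) :
    s.card ≤ 2 * nu G s + 1 := by
  by_contra hcon
  push_neg at hcon
  obtain ⟨M, hM, hMs, hMcard⟩ := exists_max_matching G s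
  obtain ⟨u0, hu0, w0, hw0, hne0, hu0m, hw0m⟩ :=
    exists_two_exposed hM hMs (by omega)
  set P : Set ℕ := {d | ∃ u w L, u ∈ s ∧ w ∈ s ∧ u ≠ w ∧ IsMatchingFinset G L ∧
    suppIn s L ∧ L.card = nu G s ∧ ¬ cov L u ∧ ¬ cov L w ∧ (gs G s).dist u w = d} with hP
  have hPne : P.Nonempty :=
    ⟨(gs G s).dist u0 w0, u0, w0, M, hu0, hw0, hne0, hM, hMs, hMcard, hu0m, hw0m, rfl⟩
  obtain ⟨u, w, L, hus, hws, hne, hL, hLs, hLcard, hLu, hLw, hdist⟩ := Nat.sInf_mem hPne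
  set d : ℕ := sInf P with hd
  have hmin : ∀ d' ∈ P, d ≤ d' := fun d' h => Nat.sInf_le h
  have hreach : (gs G s).Reachable u w := hconn u w hus hws
  have hd1 : 1 ≤ d := by
    have := hreach.pos_dist_of_ne hne
    omega
  obtain ⟨p, hp⟩ := hreach.exists_walk_length_eq_dist
  rw [hdist] at hp
  cases p with
  | nil => rw [SimpleGraph.Walk.length_nil] at hp; omega
  | @cons _ z _ hadj q =>
    rw [SimpleGraph.Walk.length_cons] at hp
    by_cases hd2 : d = 1
    · -- u and w are adjacent: enlarge L
      have hq0 : q.length = 0 := by omega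
      have hzw : z = w := SimpleGraph.Walk.eq_of_length_eq_zero hq0
      rw [hzw] at hadj
      obtain ⟨_, _, hcard⟩ := insert_matching hL hLs hadj.1 hus hws hLu hLw
      have := card_le_nu (insert_matching hL hLs hadj.1 hus hws hLu hLw).1
        (insert_matching hL hLs hadj.1 hus hws hLu hLw).2.1
      rw [hcard, hLcard] at this
      omega
    · -- d ≥ 2 : take the second vertex z of a geodesic
      have hd2' : 2 ≤ d := by omega
      have hzs : z ∈ s := hadj.2.2
      have hzu : z ≠ u := ((gs G s).ne_of_adj hadj).symm
      have hdistuz : (gs G s).dist u z ≤ 1 := by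
        have := SimpleGraph.dist_le (SimpleGraph.Walk.cons hadj SimpleGraph.Walk.nil)
        simpa using this
      have hdistzw : (gs G s).dist z w ≤ d - 1 := by
        have := SimpleGraph.dist_le q
        omega
      have hzw : z ≠ w := by
        intro hzw
        rw [hzw] at hdistuz
        have := hmin ((gs G s).dist u w) ⟨u, w, L, hus, hws, hne, hL, hLs, hLcard,
          hLu, hLw, rfl⟩
        rw [hdist] at *
        omega
      obtain ⟨N, hN, hNs, hNcard, hNz⟩ := hiness z hzs
      by_cases hNu : cov N u
      · by_cases hNw : cov N w
        · -- flip along the alternating path from u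
          obtain ⟨t, htu, htN, ⟨N', hN', hNs', hNcard', hN'u, hN'pres⟩,
            ⟨M', hM', hMs', hMcard', hM't, hM'pres⟩⟩ :=
            flip_main hL hLs hLcard hN hNs hLu hNu
          by_cases hzt : z = t
          · -- use M' : misses w and z
            have hwz : w ≠ z := fun h => hNz (h ▸ hNw)
            have hM'w : ¬ cov M' w := hM'pres w hLw (fun h => hne h.symm)
            have hM'z : ¬ cov M' z := by rw [hzt]; exact hM't
            have hmem : (gs G s).dist w z ∈ P :=
              ⟨w, z, M', hws, hzs, hwz, hM', hMs', by rw [hMcard', hLcard], hM'w, hM'z, rfl⟩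
            have := hmin _ hmem
            rw [SimpleGraph.dist_comm] at this
            omega
          · -- use N' : misses u and z
            have hN'z : ¬ cov N' z := hN'pres z hNz hzt
            have hmem : (gs G s).dist u z ∈ P :=
              ⟨u, z, N', hus, hzs, fun h => hzu h.symm, hN', hNs',
                by rw [hNcard', hNcard], hN'u, hN'z, rfl⟩
            have := hmin _ hmem
            omega
        · -- N misses w and z
          have hmem : (gs G s).dist w z ∈ P :=
            ⟨w, z, N, hws, hzs, fun h => hzw h.symm, hN, hNs, hNcard, hNw, hNz, rfl⟩
          have := hmin _ hmem
          rw [SimpleGraph.dist_comm] at this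
          omega
      · -- N misses u and z
        have hmem : (gs G s).dist u z ∈ P :=
          ⟨u, z, N, hus, hzs, fun h => hzu h.symm, hN, hNs, hNcard, hNu, hNz, rfl⟩
        have := hmin _ hmem
        omega


lemma nu_mono {G : SimpleGraph V} {s t : Finset V} (h : s ⊆ t) : nu G s ≤ nu G t := by
  obtain ⟨M, hM, hMs, hMcard⟩ := exists_max_matching G s
  rw [← hMcard]
  exact card_le_nu hM (fun e he v hv => h (hMs e he v hv))

lemma nat_add_div_le (a b c : ℕ) : a / c + b / c ≤ (a + b) / c := by
  rcases Nat.eq_zero_or_pos c with rfl | hc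
  · simp
  · rw [Nat.le_div_iff_mul_le hc, add_mul]
    exact add_le_add (Nat.div_mul_le_self a c) (Nat.div_mul_le_self b c)

lemma union_matching {G : SimpleGraph V} {s1 s2 : Finset V} (hdisj : Disjoint s1 s2)
    {M1 M2 : Finset (Sym2 V)} (h1 : IsMatchingFinset G M1) (h1s : suppIn s1 M1)
    (h2 : IsMatchingFinset G M2) (h2s : suppIn s2 M2) :
    IsMatchingFinset G (M1 ∪ M2) ∧ (M1 ∪ M2).card = M1.card + M2.card := by
  have hdm : Disjoint M1 M2 := by
    rw [Finset.disjoint_left]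
    intro e he1 he2
    obtain ⟨v, hv⟩ := sym2_exists_mem e
    exact Finset.disjoint_left.mp hdisj (h1s e he1 v hv) (h2s e he2 v hv)
  refine ⟨⟨?_, ?_⟩, Finset.card_union_of_disjoint hdm⟩
  · intro e he
    rw [Finset.mem_coe, Finset.mem_union] at he
    rcases he with he | he
    · exact h1.1 he
    · exact h2.1 he
  · intro e he f hf hne v hv
    rw [Finset.mem_union] at he hf
    rcases he with he | he <;> rcases hf with hf | hf
    · exact h1.2 e he f hf hne v hv
    · exact Finset.disjoint_left.mp hdisj (h1s e he v hv.1) (h2s f hf v hv.2)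
    · exact Finset.disjoint_left.mp hdisj (h1s f hf v hv.2) (h2s e he v hv.1)
    · exact h2.2 e he f hf hne v hv

/-- The Chvátal–Hanson bound. -/
lemma ch_bound (G : SimpleGraph V) (D : ℕ) (hD : 2 ≤ D) (hdeg : ∀ v, G.degree v ≤ D)
    (s : Finset V) :
    (edgesIn G s).card ≤ D * nu G s + (nu G s / ((D + 1) / 2)) * (D / 2) := by
  induction s using Finset.strongInduction with
  | _ s ih =>
  rcases Finset.eq_empty_or_nonempty s with rfl | ⟨v0, hv0⟩
  · have : edgesIn G ∅ = (∅ : Finset (Sym2 V)) := by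
      rw [Finset.eq_empty_iff_forall_notMem]
      intro e he
      obtain ⟨v, hv⟩ := sym2_exists_mem e
      exact absurd ((mem_edgesIn.mp he).2 v hv) (by simp)
    simp [this]
  by_cases hess : ∃ v ∈ s, nu G (s.erase v) < nu G s
  · -- an essential vertex: delete it and recurse
    obtain ⟨v, hvs, hlt⟩ := hess
    have hih := ih (s.erase v) (Finset.erase_ssubset hvs)
    have hdeg' : degIn G s v ≤ D := le_trans (degIn_le_degree G s v) (hdeg v)
    have hmono : nu G (s.erase v) / ((D + 1) / 2) ≤ nu G s / ((D + 1) / 2) :=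
      Nat.div_le_div_right (le_of_lt hlt)
    have h1 : D * nu G (s.erase v) + D ≤ D * nu G s := by
      have : nu G (s.erase v) + 1 ≤ nu G s := hlt
      calc D * nu G (s.erase v) + D = D * (nu G (s.erase v) + 1) := by ring
        _ ≤ D * nu G s := Nat.mul_le_mul_left D this
    have h2 : (nu G (s.erase v) / ((D + 1) / 2)) * (D / 2)
        ≤ (nu G s / ((D + 1) / 2)) * (D / 2) := Nat.mul_le_mul_right _ hmono
    rw [ecard_erase G s v]
    omega
  · push_neg at hess
    have hiness : ∀ v ∈ s, ∃ N, IsMatchingFinset G N ∧ suppIn s N ∧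
        N.card = nu G s ∧ ¬ cov N v := by
      intro v hvs
      have heq : nu G (s.erase v) = nu G s :=
        le_antisymm (nu_mono (Finset.erase_subset v s)) (hess v hvs)
      obtain ⟨N, hN, hNs, hNcard⟩ := exists_max_matching G (s.erase v)
      refine ⟨N, hN, fun e he w hw => Finset.mem_of_mem_erase (hNs e he w hw),
        by rw [hNcard, heq], ?_⟩
      rintro ⟨e, he, hv⟩
      exact Finset.notMem_erase v s (hNs e he v hv)
    set s1 : Finset V := s.filter (fun a => (gs G s).Reachable v0 a) with hs1
    have hv01 : v0 ∈ s1 := Finset.mem_filter.mpr ⟨hv0, SimpleGraph.Reachable.refl v0⟩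
    by_cases hs2 : s \ s1 = ∅
    · -- connected case
      have hconn : ∀ a b, a ∈ s → b ∈ s → (gs G s).Reachable a b := by
        intro a b ha hb
        have hmem : ∀ x, x ∈ s → x ∈ s1 := by
          intro x hx
          by_contra hx1
          exact absurd (Finset.mem_sdiff.mpr ⟨hx, hx1⟩) (by rw [hs2]; simp)
        have h1 := (Finset.mem_filter.mp (hmem a ha)).2
        have h2 := (Finset.mem_filter.mp (hmem b hb)).2
        exact h1.symm.trans h2
      have hcard := gallai hconn hiness
      set ν : ℕ := nu G s with hν
      have h2a : 2 * (edgesIn G s).card ≤ s.card * D := by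
        rw [← handshake]
        calc ∑ v ∈ s, degIn G s v ≤ ∑ v ∈ s, D :=
              Finset.sum_le_sum (fun v _ => le_trans (degIn_le_degree G s v) (hdeg v))
          _ = s.card * D := by rw [Finset.sum_const, smul_eq_mul]
      have h2b : 2 * (edgesIn G s).card ≤ s.card * (s.card - 1) := by
        rw [← handshake]
        calc ∑ v ∈ s, degIn G s v ≤ ∑ v ∈ s, (s.card - 1) := by
              refine Finset.sum_le_sum (fun v hv => ?_)
              have := degIn_le_erase_card G s v
              rwa [Finset.card_erase_of_mem hv] at this
          _ = s.card * (s.card - 1) := by rw [Finset.sum_const, smul_eq_mul]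
      by_cases hsmall : ν + 1 ≤ (D + 1) / 2
      · -- small component : at most a clique on ≤ D vertices
        have hDb : 2 * ν + 1 ≤ D := by omega
        have hb1 : 2 * (edgesIn G s).card ≤ (2 * ν + 1) * (2 * ν) := by
          calc 2 * (edgesIn G s).card ≤ s.card * (s.card - 1) := h2b
            _ ≤ (2 * ν + 1) * (2 * ν) := Nat.mul_le_mul hcard (by omega)
        have hb2 : (2 * ν + 1) * (2 * ν) = 2 * (ν * (2 * ν + 1)) := by ring
        have hb3 : (edgesIn G s).card ≤ ν * (2 * ν + 1) := by omega
        have hb4 : ν * (2 * ν + 1) ≤ ν * D := Nat.mul_le_mul_left ν hDb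
        have hb5 : ν * D = D * ν := by ring
        omega
      · -- big component : use the D/2 slack
        have hc1 : 1 ≤ (D + 1) / 2 := by omega
        have hbig : (D + 1) / 2 ≤ ν := by omega
        have hdiv : 1 ≤ ν / ((D + 1) / 2) := (Nat.one_le_div_iff hc1).mpr hbig
        have hslack : D / 2 ≤ (ν / ((D + 1) / 2)) * (D / 2) :=
          le_mul_of_one_le_left (Nat.zero_le _) hdiv
        have hb1 : 2 * (edgesIn G s).card ≤ (2 * ν + 1) * D :=
          le_trans h2a (Nat.mul_le_mul_right D hcard)
        have hb2 : (2 * ν + 1) * D = 2 * (D * ν) + D := by ring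
        omega
    · -- disconnected case : split into s1 and s \ s1
      obtain ⟨w0, hw0⟩ := Finset.nonempty_iff_ne_empty.mpr hs2
      have hs1sub : s1 ⊆ s := Finset.filter_subset _ s
      have hs2sub : s \ s1 ⊆ s := Finset.sdiff_subset
      have hs1ss : s1 ⊂ s := by
        refine Finset.ssubset_iff_of_subset hs1sub |>.mpr ?_
        obtain ⟨hw0s, hw0s1⟩ := Finset.mem_sdiff.mp hw0
        exact ⟨w0, hw0s, hw0s1⟩
      have hs2ss : s \ s1 ⊂ s := by
        refine Finset.ssubset_iff_of_subset hs2sub |>.mpr ?_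
        exact ⟨v0, hv0, fun h => (Finset.mem_sdiff.mp h).2 hv01⟩
      have hdisj : Disjoint s1 (s \ s1) := Finset.disjoint_sdiff
      -- every edge of G[s] is within s1 or within s \ s1
      have hedges : edgesIn G s ⊆ edgesIn G s1 ∪ edgesIn G (s \ s1) := by
        intro e he
        rw [mem_edgesIn] at he
        obtain ⟨he1, he2⟩ := he
        induction e with
        | _ a b =>
          have hadj : G.Adj a b := (SimpleGraph.mem_edgeSet G).mp he1
          have has : a ∈ s := he2 a (by simp)
          have hbs : b ∈ s := he2 b (by simp)
          have hadj' : (gs G s).Adj a b := ⟨hadj, has, hbs⟩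
          rw [Finset.mem_union]
          by_cases ha1 : a ∈ s1
          · left
            rw [mem_edgesIn]
            refine ⟨he1, fun v hv => ?_⟩
            have hb1 : b ∈ s1 := Finset.mem_filter.mpr
              ⟨hbs, ((Finset.mem_filter.mp ha1).2).trans hadj'.reachable⟩
            rcases Sym2.mem_iff.mp hv with rfl | rfl
            · exact ha1
            · exact hb1
          · right
            rw [mem_edgesIn]
            refine ⟨he1, fun v hv => ?_⟩
            have hb1 : b ∉ s1 := by
              intro hb1
              exact ha1 (Finset.mem_filter.mpr
                ⟨has, ((Finset.mem_filter.mp hb1).2).trans hadj'.symm.reachable⟩)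
            rcases Sym2.mem_iff.mp hv with rfl | rfl
            · exact Finset.mem_sdiff.mpr ⟨has, ha1⟩
            · exact Finset.mem_sdiff.mpr ⟨hbs, hb1⟩
      have hecard : (edgesIn G s).card ≤ (edgesIn G s1).card + (edgesIn G (s \ s1)).card :=
        le_trans (Finset.card_le_card hedges) (Finset.card_union_le _ _)
      have hnusum : nu G s1 + nu G (s \ s1) ≤ nu G s := by
        obtain ⟨M1, hM1, hM1s, hM1card⟩ := exists_max_matching G s1
        obtain ⟨M2, hM2, hM2s, hM2card⟩ := exists_max_matching G (s \ s1)
        obtain ⟨hu, hucard⟩ := union_matching hdisj hM1 hM1s hM2 hM2s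
        rw [← hM1card, ← hM2card, ← hucard]
        refine card_le_nu hu ?_
        intro e he v hv
        rw [Finset.mem_union] at he
        rcases he with he | he
        · exact hs1sub (hM1s e he v hv)
        · exact hs2sub (hM2s e he v hv)
      have hih1 := ih s1 hs1ss
      have hih2 := ih (s \ s1) hs2ss
      set c : ℕ := (D + 1) / 2
      set f : ℕ := D / 2
      set ν1 : ℕ := nu G s1
      set ν2 : ℕ := nu G (s \ s1)
      have hdivsum : ν1 / c + ν2 / c ≤ nu G s / c :=
        le_trans (nat_add_div_le ν1 ν2 c) (Nat.div_le_div_right hnusum)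
      have hfin1 : D * ν1 + D * ν2 ≤ D * nu G s := by
        rw [← Nat.mul_add]
        exact Nat.mul_le_mul_left D hnusum
      have hfin2 : (ν1 / c) * f + (ν2 / c) * f ≤ (nu G s / c) * f := by
        rw [← Nat.add_mul]
        exact Nat.mul_le_mul_right f hdivsum
      omega


lemma map_matching {W : Type*} {G1 : SimpleGraph V} {G2 : SimpleGraph W}
    (g : V → W) {M : Finset (Sym2 V)} (hM : IsMatchingFinset G1 M) (t : Set V)
    (hsupp : ∀ e ∈ M, ∀ v, v ∈ e → v ∈ t) (hinj : Set.InjOn g t)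
    (hadj : ∀ a b, a ∈ t → b ∈ t → G1.Adj a b → G2.Adj (g a) (g b)) :
    IsMatchingFinset G2 (M.image (Sym2.map g)) ∧ (M.image (Sym2.map g)).card = M.card := by
  classical
  refine ⟨⟨?_, ?_⟩, ?_⟩
  · intro f hf
    rw [Finset.mem_coe, Finset.mem_image] at hf
    obtain ⟨e, he, rfl⟩ := hf
    induction e with
    | _ a b =>
      rw [Sym2.map_pair_eq, SimpleGraph.mem_edgeSet]
      exact hadj a b (hsupp _ he a (by simp)) (hsupp _ he b (by simp))
        ((SimpleGraph.mem_edgeSet G1).mp (hM.1 he))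
  · intro f1 hf1 f2 hf2 hne w hw
    rw [Finset.mem_image] at hf1 hf2
    obtain ⟨e1, he1, rfl⟩ := hf1
    obtain ⟨e2, he2, rfl⟩ := hf2
    obtain ⟨a, ha, hga⟩ := Sym2.mem_map.mp hw.1
    obtain ⟨b, hb, hgb⟩ := Sym2.mem_map.mp hw.2
    have hab : a = b := hinj (hsupp _ he1 a ha) (hsupp _ he2 b hb) (by rw [hga, hgb])
    rw [hab] at ha
    exact hne (by rw [matching_unique hM he1 he2 ha hb])
  · apply Finset.card_image_of_injOn
    intro e1 he1 e2 he2 heq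
    rw [Finset.mem_coe] at he1 he2
    obtain ⟨a, ha⟩ := sym2_exists_mem e1
    have hga : g a ∈ Sym2.map g e2 := by rw [← heq]; exact Sym2.mem_map.mpr ⟨a, ha, rfl⟩
    obtain ⟨b, hb, hgb⟩ := Sym2.mem_map.mp hga
    have hab : b = a := hinj (hsupp _ he2 b hb) (hsupp _ he1 a ha) hgb
    rw [hab] at hb
    exact matching_unique hM he1 he2 ha hb

lemma card_le_matchingNumber {G : SimpleGraph V} {M : Finset (Sym2 V)}
    (hM : IsMatchingFinset G M) : M.card ≤ matchingNumber G := by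
  rw [matchingNumber_eq_nu_univ]
  exact card_le_nu hM (fun e _ v _ => Finset.mem_univ v)

lemma delVert_le_nu (G : SimpleGraph V) (x : V) :
    matchingNumber (delVert G x) ≤ nu G (Finset.univ.erase x) := by
  rw [matchingNumber_eq_nu_univ]
  obtain ⟨M, hM, _, hMcard⟩ := exists_max_matching (delVert G x) Finset.univ
  rw [← hMcard]
  have h := map_matching (G1 := delVert G x) (G2 := G) (Subtype.val) hM Set.univ
    (fun e _ v _ => Set.mem_univ v) (Set.injOn_of_injective Subtype.val_injective)
    (fun a b _ _ hadj => hadj)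
  rw [← h.2]
  refine card_le_nu h.1 ?_
  intro e he v hv
  rw [Finset.mem_image] at he
  obtain ⟨e', he', rfl⟩ := he
  obtain ⟨a, _, rfl⟩ := Sym2.mem_map.mp hv
  exact Finset.mem_erase.mpr ⟨a.2, Finset.mem_univ _⟩

lemma nu_le_delVert (G : SimpleGraph V) (x : V) :
    nu G (Finset.univ.erase x) ≤ matchingNumber (delVert G x) := by
  obtain ⟨M, hM, hMs, hMcard⟩ := exists_max_matching G (Finset.univ.erase x)
  rw [← hMcard]
  rcases Finset.eq_empty_or_nonempty M with rfl | ⟨e0, he0⟩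
  · simp
  · obtain ⟨y0, hy0⟩ := sym2_exists_mem e0
    have hy0x : y0 ≠ x := (Finset.mem_erase.mp (hMs e0 he0 y0 hy0)).1
    set g : V → {v : V // v ≠ x} := fun v => if h : v = x then ⟨y0, hy0x⟩ else ⟨v, h⟩ with hg
    have hgval : ∀ (v : V) (h : v ≠ x), g v = ⟨v, h⟩ := by
      intro v h; simp [hg, dif_neg h]
    have h := map_matching (G1 := G) (G2 := delVert G x) g hM {v : V | v ≠ x}
      (fun e he v hv => (Finset.mem_erase.mp (hMs e he v hv)).1)
      (fun a ha b hb heq => by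
        rw [hgval a ha, hgval b hb] at heq
        exact congrArg Subtype.val heq)
      (fun a b ha hb hadj => by
        rw [hgval a ha, hgval b hb]
        exact hadj)
    rw [← h.2]
    exact card_le_matchingNumber h.1

lemma edgesIn_univ (G : SimpleGraph V) : edgesIn G Finset.univ = G.edgeFinset := by
  unfold edgesIn
  exact Finset.filter_true_of_mem (fun e _ => fun v _ => Finset.mem_univ v)

end CH

namespace CH

lemma div_pred (c m ν ν'' : ℕ) (hc : 1 ≤ c) (hm : 1 ≤ m) (hν : ν = c * m)
    (hlt : ν'' < ν) : ν'' / c ≤ m - 1 := by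
  have hsub : ν - 1 = c * (m - 1) + (c - 1) := by
    obtain ⟨m0, rfl⟩ : ∃ m0, m = m0 + 1 := ⟨m - 1, by omega⟩
    have h1 : c * (m0 + 1) = c * m0 + c := by ring
    have h2 : m0 + 1 - 1 = m0 := by omega
    rw [h2]
    omega
  have hdiv : (ν - 1) / c = m - 1 := by
    rw [hsub, Nat.mul_add_div (by omega), Nat.div_eq_of_lt (by omega)]
    omega
  calc ν'' / c ≤ (ν - 1) / c := Nat.div_le_div_right (by omega)
    _ = m - 1 := hdiv

lemma final_arith (D f ν ν'' m q E ec dx : ℕ)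
    (hf1 : 1 ≤ f) (hm1 : 1 ≤ m) (hν1 : 1 ≤ ν)
    (hq : q ≤ m - 1) (hlt : ν'' ≤ ν - 1)
    (hE : E = D * ν + m * f)
    (hch : ec ≤ D * ν'' + q * f)
    (hdecomp : E = ec + dx) (hdx : dx ≤ D) : False := by
  have h1 : D * ν'' ≤ D * (ν - 1) := Nat.mul_le_mul_left D hlt
  have h2 : q * f ≤ (m - 1) * f := Nat.mul_le_mul_right f hq
  have h3 : D * (ν - 1) + D = D * ν := by
    obtain ⟨ν0, rfl⟩ : ∃ ν0, ν = ν0 + 1 := ⟨ν - 1, by omega⟩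
    have e : ν0 + 1 - 1 = ν0 := by omega
    rw [e]
    ring
  have h4 : (m - 1) * f + f = m * f := by
    obtain ⟨m0, rfl⟩ : ∃ m0, m = m0 + 1 := ⟨m - 1, by omega⟩
    have e : m0 + 1 - 1 = m0 := by omega
    rw [e]
    ring
  omega

end CH

theorem stmt_6 {V : Type*} [Fintype V] (G : SimpleGraph V) (hΔ : 2 ≤ G.maxDegree)
    (hiso : ∀ v : V, 0 < G.degree v)
    (hdvd : (G.maxDegree + 1) / 2 ∣ matchingNumber G)
    (hE : G.edgeFinset.card =
      G.maxDegree * matchingNumber G +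
        (matchingNumber G / ((G.maxDegree + 1) / 2)) * (G.maxDegree / 2)) :
    ∀ x : V, matchingNumber (delVert G x) = matchingNumber G := by
  classical
  intro x
  have hν1 : 1 ≤ matchingNumber G := by
    have hdx := hiso x
    rw [← SimpleGraph.card_neighborFinset_eq_degree, Finset.card_pos] at hdx
    obtain ⟨y, hy⟩ := hdx
    rw [SimpleGraph.mem_neighborFinset] at hy
    have hone : IsMatchingFinset G {s(x, y)} := by
      constructor
      · intro e he
        rw [Finset.coe_singleton, Set.mem_singleton_iff] at he
        rw [he, SimpleGraph.mem_edgeSet]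
        exact hy
      · intro e he f' hf' hne v
        rw [Finset.mem_singleton] at he hf'
        exact absurd (he.trans hf'.symm) hne
    have := CH.card_le_matchingNumber hone
    rwa [Finset.card_singleton] at this
  obtain ⟨m, hm⟩ := hdvd
  have hm1 : 1 ≤ m := by
    rcases Nat.eq_zero_or_pos m with rfl | h
    · rw [Nat.mul_zero] at hm
      omega
    · exact h
  have hνdivc : matchingNumber G / ((G.maxDegree + 1) / 2) = m := by
    rw [hm]
    exact Nat.mul_div_cancel_left m (by omega)
  have heq : matchingNumber (delVert G x) = CH.nu G (Finset.univ.erase x) :=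
    le_antisymm (CH.delVert_le_nu G x) (CH.nu_le_delVert G x)
  have hle : CH.nu G (Finset.univ.erase x) ≤ matchingNumber G := by
    rw [CH.matchingNumber_eq_nu_univ]
    exact CH.nu_mono (Finset.erase_subset x Finset.univ)
  rw [heq]
  by_contra hlt'
  have hlt : CH.nu G (Finset.univ.erase x) < matchingNumber G := lt_of_le_of_ne hle hlt'
  have hch := CH.ch_bound G G.maxDegree hΔ (fun v => SimpleGraph.degree_le_maxDegree G v)
    (Finset.univ.erase x)
  have hdecomp := CH.ecard_erase G Finset.univ x
  rw [CH.edgesIn_univ] at hdecomp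
  have hdegx : CH.degIn G Finset.univ x ≤ G.maxDegree :=
    le_trans (CH.degIn_le_degree G Finset.univ x) (SimpleGraph.degree_le_maxDegree G x)
  have hq : CH.nu G (Finset.univ.erase x) / ((G.maxDegree + 1) / 2) ≤ m - 1 :=
    CH.div_pred ((G.maxDegree + 1) / 2) m (matchingNumber G) _ (by omega) hm1 hm hlt
  rw [hνdivc] at hE
  exact CH.final_arith G.maxDegree (G.maxDegree / 2) (matchingNumber G)
    (CH.nu G (Finset.univ.erase x)) m
    (CH.nu G (Finset.univ.erase x) / ((G.maxDegree + 1) / 2))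
    G.edgeFinset.card (CH.edgesIn G (Finset.univ.erase x)).card
    (CH.degIn G Finset.univ x)
    (by omega) hm1 hν1 hq (by omega) hE hch hdecomp hdegx
end

section
/- Let G₁ be a simple graph with ν(G₁) ≥ 2, Δ(G₁) ≥ 2, and |E(G₁)| = Δ(G₁)ν(G₁) + ⌊ν(G₁)/⌈Δ(G₁)/2⌉⌋·⌊Δ(G₁)/2⌋. If ⌈Δ(G₁)/2⌉ does not divide ν(G₁), then there exists a simple graph G₂ with |E(G₂)| = |E(G₁)|, ν(G₂) = ν(G₁), Δ(G₂) = Δ(G₁), and G₂ not isomorphic to G₁. -/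
open scoped Classical

section gen
variable {α β : Type*} {V : Type*}

/-- Disjoint union of two graphs. -/
def sumG (G : SimpleGraph α) (H : SimpleGraph β) : SimpleGraph (α ⊕ β) where
  Adj x y := match x, y with
    | .inl a, .inl b => G.Adj a b
    | .inr a, .inr b => H.Adj a b
    | _, _ => False
  symm := ⟨by rintro (a|a) (b|b) h <;> simp_all <;> exact h.symm⟩
  loopless := ⟨by rintro (a|a) h <;> simp_all <;> exact G.loopless a h⟩

@[simp] lemma sumG_adj_ll {G : SimpleGraph α} {H : SimpleGraph β} {a b : α} :
    (sumG G H).Adj (.inl a) (.inl b) ↔ G.Adj a b := Iff.rfl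
@[simp] lemma sumG_adj_rr {G : SimpleGraph α} {H : SimpleGraph β} {a b : β} :
    (sumG G H).Adj (.inr a) (.inr b) ↔ H.Adj a b := Iff.rfl
@[simp] lemma sumG_adj_lr {G : SimpleGraph α} {H : SimpleGraph β} {a : α} {b : β} :
    ¬ (sumG G H).Adj (.inl a) (.inr b) := fun h => h
@[simp] lemma sumG_adj_rl {G : SimpleGraph α} {H : SimpleGraph β} {a : β} {b : α} :
    ¬ (sumG G H).Adj (.inr a) (.inl b) := fun h => h

/-- `k` disjoint copies of a graph. -/
def copies (k : ℕ) (H : SimpleGraph β) : SimpleGraph (Fin k × β) where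
  Adj x y := x.1 = y.1 ∧ H.Adj x.2 y.2
  symm := ⟨by rintro ⟨i,a⟩ ⟨j,b⟩ ⟨h1,h2⟩; exact ⟨h1.symm, h2.symm⟩⟩
  loopless := ⟨by rintro ⟨i,a⟩ ⟨_,h⟩; exact H.loopless.irrefl a h⟩

@[simp] lemma copies_adj {k : ℕ} {H : SimpleGraph β} {x y : Fin k × β} :
    (copies k H).Adj x y ↔ x.1 = y.1 ∧ H.Adj x.2 y.2 := Iff.rfl

variable [Fintype α] [Fintype β]

lemma degree_sumG_inl (G : SimpleGraph α) (H : SimpleGraph β) (a : α) :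
    (sumG G H).degree (.inl a) = G.degree a := by
  classical
  have : (sumG G H).neighborFinset (.inl a)
      = (G.neighborFinset a).map ⟨Sum.inl, Sum.inl_injective⟩ := by
    ext x; cases x <;> simp [SimpleGraph.mem_neighborFinset]
  rw [SimpleGraph.degree, this, Finset.card_map, SimpleGraph.degree]

lemma degree_sumG_inr (G : SimpleGraph α) (H : SimpleGraph β) (b : β) :
    (sumG G H).degree (.inr b) = H.degree b := by
  classical
  have : (sumG G H).neighborFinset (.inr b)
      = (H.neighborFinset b).map ⟨Sum.inr, Sum.inr_injective⟩ := by
    ext x; cases x <;> simp [SimpleGraph.mem_neighborFinset]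
  rw [SimpleGraph.degree, this, Finset.card_map, SimpleGraph.degree]

lemma degree_copies (k : ℕ) (H : SimpleGraph β) (x : Fin k × β) :
    (copies k H).degree x = H.degree x.2 := by
  classical
  have : (copies k H).neighborFinset x
      = (H.neighborFinset x.2).map
        ⟨fun w => (x.1, w), fun u v h => by simpa using congrArg Prod.snd h⟩ := by
    ext ⟨j, w⟩
    simp only [SimpleGraph.mem_neighborFinset, copies_adj, Finset.mem_map,
      Function.Embedding.coeFn_mk, Prod.mk.injEq]
    constructor
    · rintro ⟨h1, h2⟩; exact ⟨w, h2, Prod.ext h1 rfl⟩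
    · rintro ⟨u, hu, h⟩; obtain ⟨h1, rfl⟩ := Prod.mk.inj h; exact ⟨h1, hu⟩
  rw [SimpleGraph.degree, this, Finset.card_map, SimpleGraph.degree]

/-- lower bound on the matching number from a family of disjoint edges -/
lemma le_matchingNumber {ι : Type*} [Fintype ι] [Fintype V] (G : SimpleGraph V)
    (m : ι → Sym2 V) (h1 : ∀ t, m t ∈ G.edgeSet)
    (h2 : ∀ t t', t ≠ t' → ∀ v, ¬(v ∈ m t ∧ v ∈ m t')) :
    Fintype.card ι ≤ matchingNumber G := by
  classical
  have hinj : Function.Injective m := by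
    intro t t' h
    by_contra hne
    exact h2 t t' hne (m t).out.1 ⟨Sym2.out_fst_mem _, h ▸ Sym2.out_fst_mem _⟩
  apply le_csSup
  · refine ⟨Fintype.card (Sym2 V), ?_⟩
    rintro n ⟨M, _, rfl⟩
    exact Finset.card_le_univ M
  · refine ⟨Finset.univ.image m, ⟨?_, ?_⟩, ?_⟩
    · intro e he
      simp only [Finset.coe_image, Set.mem_image] at he
      obtain ⟨t, _, rfl⟩ := he
      exact h1 t
    · intro e he f hf hne v
      simp only [Finset.mem_image] at he hf
      obtain ⟨t, _, rfl⟩ := he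
      obtain ⟨t', _, rfl⟩ := hf
      exact h2 t t' (fun h => hne (by rw [h])) v
    · rw [Finset.card_image_of_injective _ hinj, Finset.card_univ]

lemma matchingNumber_le [Fintype V] (G : SimpleGraph V) (n : ℕ)
    (h : ∀ M, IsMatchingFinset G M → M.card ≤ n) : matchingNumber G ≤ n := by
  apply csSup_le
  · exact ⟨0, ∅, ⟨by simp, by simp⟩, by simp⟩
  · rintro m ⟨M, hM, rfl⟩; exact h M hM

/-- cover/size bound for the part of a matching satisfying `P` -/
lemma matching_filter_bound [Fintype V] {G : SimpleGraph V} {M : Finset (Sym2 V)}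
    (hM : IsMatchingFinset G M) (P : Sym2 V → Prop) [DecidablePred P] (cov S' : Finset V) (s : ℕ)
    (hsplit : ∀ e ∈ M, P e → (∃ v ∈ cov, v ∈ e) ∨ (∀ v ∈ e, v ∈ S'))
    (hS : S'.card ≤ 2 * s + 1) :
    (M.filter P).card ≤ cov.card + s := by
  classical
  set F := M.filter P with hF
  have hsub : ∀ e ∈ F, e ∈ M := fun e he => (Finset.mem_filter.mp he).1
  have key : F.card = (F.filter (fun e => ∃ v, v ∈ cov ∧ v ∈ e)).card
      + (F.filter (fun e => ¬ ∃ v, v ∈ cov ∧ v ∈ e)).card :=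
    (Finset.card_filter_add_card_filter_not _).symm
  set φ : Sym2 V → V := fun e =>
    if h : ∃ v, v ∈ cov ∧ v ∈ e then Classical.choose h else e.out.1 with hφ
  have h1 : (F.filter (fun e => ∃ v, v ∈ cov ∧ v ∈ e)).card ≤ cov.card := by
    apply Finset.card_le_card_of_injOn φ
    · intro e he
      obtain ⟨-, hex⟩ := Finset.mem_filter.mp he
      rw [hφ]; simp only [dif_pos hex]
      exact (Classical.choose_spec hex).1
    · intro e he f hf hef
      obtain ⟨heF, hex⟩ := Finset.mem_filter.mp he
      obtain ⟨hfF, hfx⟩ := Finset.mem_filter.mp hf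
      by_contra hne
      refine hM.2 e (hsub e heF) f (hsub f hfF) hne (φ e) ⟨?_, ?_⟩
      · rw [hφ]; simp only [dif_pos hex]; exact (Classical.choose_spec hex).2
      · rw [hef, hφ]; simp only [dif_pos hfx]; exact (Classical.choose_spec hfx).2
  have h2 : (F.filter (fun e => ¬ ∃ v, v ∈ cov ∧ v ∈ e)).card ≤ s := by
    set F₂ := F.filter (fun e => ¬ ∃ v, v ∈ cov ∧ v ∈ e) with hF₂
    have hend : ∀ e ∈ F₂, ∀ v ∈ e, v ∈ S' := by
      intro e he v hv
      obtain ⟨heF, hnex⟩ := Finset.mem_filter.mp he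
      obtain ⟨heM, hP⟩ := Finset.mem_filter.mp heF
      rcases hsplit e heM hP with ⟨w, hw1, hw2⟩ | h
      · exact absurd ⟨w, hw1, hw2⟩ hnex
      · exact h v hv
    have hsubS : F₂.biUnion (fun e => S'.filter (· ∈ e)) ⊆ S' :=
      Finset.biUnion_subset.mpr (fun e _ => Finset.filter_subset _ _)
    have hdisj : ∀ e ∈ F₂, ∀ f ∈ F₂, e ≠ f →
        Disjoint (S'.filter (· ∈ e)) (S'.filter (· ∈ f)) := by
      intro e he f hf hne
      rw [Finset.disjoint_left]
      intro v hv hv'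
      exact hM.2 e (hsub e (Finset.mem_filter.mp he).1) f (hsub f (Finset.mem_filter.mp hf).1)
        hne v ⟨(Finset.mem_filter.mp hv).2, (Finset.mem_filter.mp hv').2⟩
    have hcard2 : ∀ e ∈ F₂, (S'.filter (· ∈ e)).card = 2 := by
      intro e he
      induction e using Sym2.inductionOn with
      | hf a b =>
        have heM := hsub _ (Finset.mem_filter.mp he).1
        have hadj : G.Adj a b := (SimpleGraph.mem_edgeSet G).mp (hM.1 heM)
        have hne := hadj.ne
        have hset : S'.filter (· ∈ s(a, b)) = {a, b} := by
          ext v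
          simp only [Finset.mem_filter, Finset.mem_insert, Finset.mem_singleton, Sym2.mem_iff]
          constructor
          · rintro ⟨-, hv⟩; exact hv
          · rintro (rfl | rfl)
            · exact ⟨hend _ he _ (by simp), by simp⟩
            · exact ⟨hend _ he _ (by simp), by simp⟩
        rw [hset, Finset.card_insert_of_notMem (by simpa using hne), Finset.card_singleton]
    have hbig : 2 * F₂.card ≤ S'.card := by
      calc 2 * F₂.card = ∑ e ∈ F₂, (S'.filter (· ∈ e)).card := by
            rw [Finset.sum_congr rfl hcard2, Finset.sum_const, smul_eq_mul, mul_comm]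
        _ = (F₂.biUnion (fun e => S'.filter (· ∈ e))).card :=
            (Finset.card_biUnion hdisj).symm
        _ ≤ S'.card := Finset.card_le_card hsubS
    omega
  omega

end gen

section master

/-- A packaged "gadget" graph on `Fin n` with all facts needed. -/
structure Pkg (Δ : ℕ) where
  n : ℕ
  G : SimpleGraph (Fin n)
  ν : ℕ
  degsum : ℕ
  hdeg_le : ∀ v, G.degree v ≤ Δ
  hdeg_pos : ∀ v, 0 < G.degree v
  hdeg_max : ∃ v, G.degree v = Δ
  hdegsum : ∑ v, G.degree v = degsum
  mlow : Fin ν → Sym2 (Fin n)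
  mlow_mem : ∀ t, mlow t ∈ G.edgeSet
  mlow_disj : ∀ t t', t ≠ t' → ∀ v, ¬(v ∈ mlow t ∧ v ∈ mlow t')
  cov : Finset (Fin n)
  S' : Finset (Fin n)
  sz : ℕ
  hν_eq : ν = cov.card + sz
  hS'card : S'.card ≤ 2 * sz + 1
  hsplit : ∀ e ∈ G.edgeSet, (∃ v ∈ cov, v ∈ e) ∨ (∀ v ∈ e, v ∈ S')

variable {Δ : ℕ} (k b : ℕ) (P S X : Pkg Δ)

/-- The assembled graph: `k` copies of `P`, `b` copies of `S`, one copy of `X`. -/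
def asm : SimpleGraph ((Fin k × Fin P.n) ⊕ ((Fin b × Fin S.n) ⊕ Fin X.n)) :=
  sumG (copies k P.G) (sumG (copies b S.G) X.G)

lemma asm_card :
    Fintype.card ((Fin k × Fin P.n) ⊕ ((Fin b × Fin S.n) ⊕ Fin X.n))
      = k * P.n + (b * S.n + X.n) := by
  simp

lemma asm_degree (w : (Fin k × Fin P.n) ⊕ ((Fin b × Fin S.n) ⊕ Fin X.n)) :
    (asm k b P S X).degree w = match w with
      | .inl x => P.G.degree x.2
      | .inr (.inl x) => S.G.degree x.2
      | .inr (.inr v) => X.G.degree v := by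
  match w with
  | .inl x => rw [asm, degree_sumG_inl, degree_copies]
  | .inr (.inl x) => rw [asm, degree_sumG_inr, degree_sumG_inl, degree_copies]
  | .inr (.inr v) => rw [asm, degree_sumG_inr, degree_sumG_inr]

lemma asm_deg_pos (w) : 0 < (asm k b P S X).degree w := by
  rw [asm_degree]
  match w with
  | .inl x => exact P.hdeg_pos x.2
  | .inr (.inl x) => exact S.hdeg_pos x.2
  | .inr (.inr v) => exact X.hdeg_pos v

lemma asm_maxDegree : (asm k b P S X).maxDegree = Δ := by
  classical
  apply le_antisymm
  · apply SimpleGraph.maxDegree_le_of_forall_degree_le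
    intro w
    rw [asm_degree]
    match w with
    | .inl x => exact P.hdeg_le x.2
    | .inr (.inl x) => exact S.hdeg_le x.2
    | .inr (.inr v) => exact X.hdeg_le v
  · obtain ⟨v, hv⟩ := X.hdeg_max
    calc Δ = (asm k b P S X).degree (.inr (.inr v)) := by rw [asm_degree]; exact hv.symm
      _ ≤ _ := SimpleGraph.degree_le_maxDegree _ _

lemma asm_edge_card :
    2 * (asm k b P S X).edgeFinset.card = k * P.degsum + (b * S.degsum + X.degsum) := by
  classical
  rw [← SimpleGraph.sum_degrees_eq_twice_card_edges]
  rw [Fintype.sum_sum_type, Fintype.sum_sum_type]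
  congr 1
  · rw [Fintype.sum_prod_type]
    have : ∀ i : Fin k, ∑ v : Fin P.n, (asm k b P S X).degree (.inl (i, v)) = P.degsum := by
      intro i
      rw [← P.hdegsum]
      exact Finset.sum_congr rfl (fun v _ => by rw [asm_degree])
    rw [Finset.sum_congr rfl (fun i _ => this i), Finset.sum_const, Finset.card_univ,
      Fintype.card_fin, smul_eq_mul]
  congr 1
  · rw [Fintype.sum_prod_type]
    have : ∀ i : Fin b, ∑ v : Fin S.n, (asm k b P S X).degree (.inr (.inl (i, v))) = S.degsum := by
      intro i
      rw [← S.hdegsum]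
      exact Finset.sum_congr rfl (fun v _ => by rw [asm_degree])
    rw [Finset.sum_congr rfl (fun i _ => this i), Finset.sum_const, Finset.card_univ,
      Fintype.card_fin, smul_eq_mul]
  · rw [← X.hdegsum]
    exact Finset.sum_congr rfl (fun v _ => by rw [asm_degree])

lemma asm_nu : matchingNumber (asm k b P S X) = k * P.ν + (b * S.ν + X.ν) := by
  classical
  apply le_antisymm
  · -- upper bound
    apply matchingNumber_le
    intro M hM
    have hedge : ∀ e ∈ M, e ∈ (asm k b P S X).edgeSet := fun e he => hM.1 he
    set f : (Fin k × Fin P.n) ⊕ ((Fin b × Fin S.n) ⊕ Fin X.n) → Fin k ⊕ (Fin b ⊕ Unit) := fun w => match w with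
      | .inl x => .inl x.1
      | .inr (.inl x) => .inr (.inl x.1)
      | .inr (.inr _) => .inr (.inr ()) with hfdef
    set g : Sym2 ((Fin k × Fin P.n) ⊕ ((Fin b × Fin S.n) ⊕ Fin X.n)) → Fin k ⊕ (Fin b ⊕ Unit) := fun e => f e.out.1 with hgdef
    have hfib : M.card = ∑ i : Fin k ⊕ (Fin b ⊕ Unit),
        (M.filter (fun e => g e = i)).card := by
      exact Finset.card_eq_sum_card_fiberwise (fun e _ => Finset.mem_univ (g e))
    -- labels are edge-constant
    have hlabel : ∀ e ∈ M, ∀ v, v ∈ e → g e = f v := by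
      intro e heM v hv
      have heE := hedge e heM
      induction e using Sym2.inductionOn with
      | hf x y =>
        have hadj : (asm k b P S X).Adj x y := (SimpleGraph.mem_edgeSet _).mp heE
        have hxy : f x = f y := by
          match x, y with
          | .inl a, .inl c =>
              have h : a.1 = c.1 := (show (copies k P.G).Adj a c from hadj).1
              simp only [hfdef]; rw [h]
          | .inr (.inl a), .inr (.inl c) =>
              have h : a.1 = c.1 := (show (copies b S.G).Adj a c from hadj).1
              simp only [hfdef]; rw [h]
          | .inr (.inr a), .inr (.inr c) => simp [hfdef]
          | .inl a, .inr c => exact False.elim hadj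
          | .inr a, .inl c => exact False.elim hadj
          | .inr (.inl a), .inr (.inr c) => exact False.elim hadj
          | .inr (.inr a), .inr (.inl c) => exact False.elim hadj
        have hout : (s(x, y) : Sym2 ((Fin k × Fin P.n) ⊕ ((Fin b × Fin S.n) ⊕ Fin X.n))).out.1 ∈ s(x, y) := Sym2.out_fst_mem _
        rcases Sym2.mem_iff.mp hout with h | h <;>
          rcases Sym2.mem_iff.mp hv with h' | h' <;>
          simp only [hgdef, h, h', hxy]
    rw [hfib, Fintype.sum_sum_type, Fintype.sum_sum_type]
    have hmapcard : ∀ (n : ℕ) (T : Finset (Fin n)) (emb : Fin n ↪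
        ((Fin k × Fin P.n) ⊕ ((Fin b × Fin S.n) ⊕ Fin X.n))), (T.map emb).card = T.card :=
      fun n T emb => Finset.card_map emb
    have hbound : ∀ i : Fin k ⊕ (Fin b ⊕ Unit), (M.filter (fun e => g e = i)).card
        ≤ (match i with
           | .inl _ => P.ν
           | .inr (.inl _) => S.ν
           | .inr (.inr _) => X.ν) := by
      intro i
      match i with
      | .inl i₀ =>
        have hb := matching_filter_bound hM (fun e => g e = .inl i₀)
          (P.cov.map ⟨fun v => .inl (i₀, v), fun u v h => by simpa using h⟩)
          (P.S'.map ⟨fun v => .inl (i₀, v), fun u v h => by simpa using h⟩) P.sz ?_ ?_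
        · rw [Finset.card_map] at hb
          calc (M.filter (fun e => g e = .inl i₀)).card ≤ P.cov.card + P.sz := hb
            _ = P.ν := P.hν_eq.symm
        · intro e heM hge
          have heE := hedge e heM
          have hlab := hlabel e heM
          clear hfib
          induction e using Sym2.inductionOn with
          | hf x y =>
            have hadj : (asm k b P S X).Adj x y := (SimpleGraph.mem_edgeSet _).mp heE
            match x, y with
            | .inl a, .inl c =>
              have hcop : (copies k P.G).Adj a c := hadj
              have hi : a.1 = i₀ := by
                have h1 := hlab (.inl a) (by simp)
                rw [hge] at h1
                simpa [hfdef] using h1.symm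
              have hi' : c.1 = i₀ := hcop.1 ▸ hi
              have hPE : s(a.2, c.2) ∈ P.G.edgeSet :=
                (SimpleGraph.mem_edgeSet _).mpr hcop.2
              rcases P.hsplit _ hPE with ⟨v, hv1, hv2⟩ | hall
              · left
                refine ⟨.inl (i₀, v), Finset.mem_map.mpr ⟨v, hv1, rfl⟩, ?_⟩
                rcases Sym2.mem_iff.mp hv2 with rfl | rfl
                · rw [Sym2.mem_iff]; left; subst hi; rfl
                · rw [Sym2.mem_iff]; right; subst hi'; rfl
              · right
                intro v hv
                rcases Sym2.mem_iff.mp hv with rfl | rfl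
                · exact Finset.mem_map.mpr ⟨a.2, hall a.2 (by simp), by subst hi; rfl⟩
                · exact Finset.mem_map.mpr ⟨c.2, hall c.2 (by simp), by subst hi'; rfl⟩
            | .inr (.inl a), .inr (.inl c) =>
              exfalso
              have h1 := hlab (.inr (.inl a)) (by simp)
              rw [hge] at h1
              simp [hfdef] at h1
            | .inr (.inr a), .inr (.inr c) =>
              exfalso
              have h1 := hlab (.inr (.inr a)) (by simp)
              rw [hge] at h1
              simp [hfdef] at h1
            | .inl a, .inr c => exact False.elim hadj
            | .inr a, .inl c => exact False.elim hadj
            | .inr (.inl a), .inr (.inr c) => exact False.elim hadj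
            | .inr (.inr a), .inr (.inl c) => exact False.elim hadj
        · rw [Finset.card_map]; exact P.hS'card
      | .inr (.inl j₀) =>
        have hb := matching_filter_bound hM (fun e => g e = .inr (.inl j₀))
          (S.cov.map ⟨fun v => .inr (.inl (j₀, v)), fun u v h => by simpa using h⟩)
          (S.S'.map ⟨fun v => .inr (.inl (j₀, v)), fun u v h => by simpa using h⟩) S.sz ?_ ?_
        · rw [Finset.card_map] at hb
          calc (M.filter (fun e => g e = .inr (.inl j₀))).card ≤ S.cov.card + S.sz := hb
            _ = S.ν := S.hν_eq.symm
        · intro e heM hge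
          have heE := hedge e heM
          have hlab := hlabel e heM
          clear hfib
          induction e using Sym2.inductionOn with
          | hf x y =>
            have hadj : (asm k b P S X).Adj x y := (SimpleGraph.mem_edgeSet _).mp heE
            match x, y with
            | .inr (.inl a), .inr (.inl c) =>
              have hcop : (copies b S.G).Adj a c := hadj
              have hi : a.1 = j₀ := by
                have h1 := hlab (.inr (.inl a)) (by simp)
                rw [hge] at h1
                simpa [hfdef] using h1.symm
              have hi' : c.1 = j₀ := hcop.1 ▸ hi
              have hPE : s(a.2, c.2) ∈ S.G.edgeSet :=
                (SimpleGraph.mem_edgeSet _).mpr hcop.2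
              rcases S.hsplit _ hPE with ⟨v, hv1, hv2⟩ | hall
              · left
                refine ⟨.inr (.inl (j₀, v)), Finset.mem_map.mpr ⟨v, hv1, rfl⟩, ?_⟩
                rcases Sym2.mem_iff.mp hv2 with rfl | rfl
                · rw [Sym2.mem_iff]; left; subst hi; rfl
                · rw [Sym2.mem_iff]; right; subst hi'; rfl
              · right
                intro v hv
                rcases Sym2.mem_iff.mp hv with rfl | rfl
                · exact Finset.mem_map.mpr ⟨a.2, hall a.2 (by simp), by subst hi; rfl⟩
                · exact Finset.mem_map.mpr ⟨c.2, hall c.2 (by simp), by subst hi'; rfl⟩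
            | .inl a, .inl c =>
              exfalso
              have h1 := hlab (.inl a) (by simp)
              rw [hge] at h1
              simp [hfdef] at h1
            | .inr (.inr a), .inr (.inr c) =>
              exfalso
              have h1 := hlab (.inr (.inr a)) (by simp)
              rw [hge] at h1
              simp [hfdef] at h1
            | .inl a, .inr c => exact False.elim hadj
            | .inr a, .inl c => exact False.elim hadj
            | .inr (.inl a), .inr (.inr c) => exact False.elim hadj
            | .inr (.inr a), .inr (.inl c) => exact False.elim hadj
        · rw [Finset.card_map]; exact S.hS'card
      | .inr (.inr u) =>
        have hb := matching_filter_bound hM (fun e => g e = .inr (.inr u))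
          (X.cov.map ⟨fun v => .inr (.inr v), fun a v h => by simpa using h⟩)
          (X.S'.map ⟨fun v => .inr (.inr v), fun a v h => by simpa using h⟩) X.sz ?_ ?_
        · rw [Finset.card_map] at hb
          calc (M.filter (fun e => g e = .inr (.inr u))).card ≤ X.cov.card + X.sz := hb
            _ = X.ν := X.hν_eq.symm
        · intro e heM hge
          have heE := hedge e heM
          have hlab := hlabel e heM
          clear hfib
          induction e using Sym2.inductionOn with
          | hf x y =>
            have hadj : (asm k b P S X).Adj x y := (SimpleGraph.mem_edgeSet _).mp heE
            match x, y with
            | .inr (.inr a), .inr (.inr c) =>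
              have hcop : X.G.Adj a c := hadj
              have hPE : s(a, c) ∈ X.G.edgeSet :=
                (SimpleGraph.mem_edgeSet _).mpr hcop
              rcases X.hsplit _ hPE with ⟨v, hv1, hv2⟩ | hall
              · left
                refine ⟨.inr (.inr v), Finset.mem_map.mpr ⟨v, hv1, rfl⟩, ?_⟩
                rcases Sym2.mem_iff.mp hv2 with rfl | rfl
                · rw [Sym2.mem_iff]; left; rfl
                · rw [Sym2.mem_iff]; right; rfl
              · right
                intro v hv
                rcases Sym2.mem_iff.mp hv with rfl | rfl
                · exact Finset.mem_map.mpr ⟨a, hall a (by simp), rfl⟩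
                · exact Finset.mem_map.mpr ⟨c, hall c (by simp), rfl⟩
            | .inl a, .inl c =>
              exfalso
              have h1 := hlab (.inl a) (by simp)
              rw [hge] at h1
              simp [hfdef] at h1
            | .inr (.inl a), .inr (.inl c) =>
              exfalso
              have h1 := hlab (.inr (.inl a)) (by simp)
              rw [hge] at h1
              simp [hfdef] at h1
            | .inl a, .inr c => exact False.elim hadj
            | .inr a, .inl c => exact False.elim hadj
            | .inr (.inl a), .inr (.inr c) => exact False.elim hadj
            | .inr (.inr a), .inr (.inl c) => exact False.elim hadj
        · rw [Finset.card_map]; exact X.hS'card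
    have s1 : ∑ i : Fin k, (M.filter (fun e => g e = .inl i)).card ≤ k * P.ν := by
      calc ∑ i : Fin k, (M.filter (fun e => g e = .inl i)).card
          ≤ ∑ _i : Fin k, P.ν := Finset.sum_le_sum (fun i _ => hbound (.inl i))
        _ = k * P.ν := by simp [mul_comm]
    have s2 : ∑ j : Fin b, (M.filter (fun e => g e = .inr (.inl j))).card ≤ b * S.ν := by
      calc ∑ j : Fin b, (M.filter (fun e => g e = .inr (.inl j))).card
          ≤ ∑ _j : Fin b, S.ν := Finset.sum_le_sum (fun j _ => hbound (.inr (.inl j)))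
        _ = b * S.ν := by simp [mul_comm]
    have s3 : ∑ u : Unit, (M.filter (fun e => g e = .inr (.inr u))).card ≤ X.ν := by
      simpa using hbound (.inr (.inr ()))
    omega
  · -- lower bound
    have hmapedge : ∀ {W' : Type} [Fintype W'] (G' : SimpleGraph W')
        {n : ℕ} (G0 : SimpleGraph (Fin n)) (fv : Fin n → W')
        (hf : ∀ a c, G0.Adj a c → G'.Adj (fv a) (fv c))
        (e : Sym2 (Fin n)), e ∈ G0.edgeSet → e.map fv ∈ G'.edgeSet := by
      intro W' _ G' n G0 fv hf e he
      induction e using Sym2.inductionOn with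
      | hf a c =>
        rw [Sym2.map_pair_eq]
        exact (SimpleGraph.mem_edgeSet _).mpr (hf a c ((SimpleGraph.mem_edgeSet _).mp he))
    set m : (Fin k × Fin P.ν) ⊕ ((Fin b × Fin S.ν) ⊕ Fin X.ν)
        → Sym2 ((Fin k × Fin P.n) ⊕ ((Fin b × Fin S.n) ⊕ Fin X.n)) := fun t =>
      match t with
      | .inl (i, t₀) => (P.mlow t₀).map (fun v => .inl (i, v))
      | .inr (.inl (j, t₀)) => (S.mlow t₀).map (fun v => .inr (.inl (j, v)))
      | .inr (.inr t₀) => (X.mlow t₀).map (fun v => .inr (.inr v)) with hmdef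
    have hcard : Fintype.card ((Fin k × Fin P.ν) ⊕ ((Fin b × Fin S.ν) ⊕ Fin X.ν))
        = k * P.ν + (b * S.ν + X.ν) := by simp
    rw [← hcard]
    apply le_matchingNumber (asm k b P S X) m
    · intro t
      match t with
      | .inl (i, t₀) =>
        exact hmapedge (asm k b P S X) P.G (fun v => .inl (i, v))
          (fun a c h => by exact ⟨rfl, h⟩) _ (P.mlow_mem t₀)
      | .inr (.inl (j, t₀)) =>
        exact hmapedge (asm k b P S X) S.G (fun v => .inr (.inl (j, v)))
          (fun a c h => by exact ⟨rfl, h⟩) _ (S.mlow_mem t₀)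
      | .inr (.inr t₀) =>
        exact hmapedge (asm k b P S X) X.G (fun v => .inr (.inr v))
          (fun a c h => by exact h) _ (X.mlow_mem t₀)
    · intro t t' hne v ⟨hv1, hv2⟩
      match t, t' with
      | .inl (i, t₀), .inl (i', t₀') =>
        obtain ⟨a, ha, rfl⟩ := Sym2.mem_map.mp hv1
        obtain ⟨c, hc, hac⟩ := Sym2.mem_map.mp hv2
        obtain ⟨hii, hac2⟩ : i' = i ∧ c = a := by
          have h1 : (Sum.inl ((i', c)) : (Fin k × Fin P.n) ⊕ ((Fin b × Fin S.n) ⊕ Fin X.n))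
              = .inl ((i, a)) := hac
          simp only [Sum.inl.injEq, Prod.mk.injEq] at h1
          exact h1
        subst hii
        subst hac2
        have ht : t₀ ≠ t₀' := fun h => hne (by rw [h])
        exact P.mlow_disj t₀ t₀' ht c ⟨ha, hc⟩
      | .inr (.inl (j, t₀)), .inr (.inl (j', t₀')) =>
        obtain ⟨a, ha, rfl⟩ := Sym2.mem_map.mp hv1
        obtain ⟨c, hc, hac⟩ := Sym2.mem_map.mp hv2
        obtain ⟨hii, hac2⟩ : j' = j ∧ c = a := by
          have h1 : (Sum.inr (Sum.inl (j', c)) : (Fin k × Fin P.n) ⊕ ((Fin b × Fin S.n) ⊕ Fin X.n)) = .inr (.inl (j, a)) := hac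
          simp only [Sum.inr.injEq, Sum.inl.injEq, Prod.mk.injEq] at h1
          exact h1
        subst hii
        subst hac2
        have ht : t₀ ≠ t₀' := fun h => hne (by rw [h])
        exact S.mlow_disj t₀ t₀' ht c ⟨ha, hc⟩
      | .inr (.inr t₀), .inr (.inr t₀') =>
        obtain ⟨a, ha, rfl⟩ := Sym2.mem_map.mp hv1
        obtain ⟨c, hc, hac⟩ := Sym2.mem_map.mp hv2
        have hac2 : c = a := by simpa using hac
        subst hac2
        have ht : t₀ ≠ t₀' := fun h => hne (by rw [h])
        exact X.mlow_disj t₀ t₀' ht c ⟨ha, hc⟩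
      | .inl (i, t₀), .inr (.inl (j, t₀')) =>
        obtain ⟨a, ha, rfl⟩ := Sym2.mem_map.mp hv1
        obtain ⟨c, hc, hac⟩ := Sym2.mem_map.mp hv2
        exact absurd hac (by simp)
      | .inl (i, t₀), .inr (.inr t₀') =>
        obtain ⟨a, ha, rfl⟩ := Sym2.mem_map.mp hv1
        obtain ⟨c, hc, hac⟩ := Sym2.mem_map.mp hv2
        exact absurd hac (by simp)
      | .inr (.inl (j, t₀')), .inl (i, t₀) =>
        obtain ⟨a, ha, rfl⟩ := Sym2.mem_map.mp hv2
        obtain ⟨c, hc, hac⟩ := Sym2.mem_map.mp hv1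
        exact absurd hac (by simp)
      | .inr (.inr t₀'), .inl (i, t₀) =>
        obtain ⟨a, ha, rfl⟩ := Sym2.mem_map.mp hv2
        obtain ⟨c, hc, hac⟩ := Sym2.mem_map.mp hv1
        exact absurd hac (by simp)
      | .inr (.inl (j, t₀)), .inr (.inr t₀') =>
        obtain ⟨a, ha, rfl⟩ := Sym2.mem_map.mp hv1
        obtain ⟨c, hc, hac⟩ := Sym2.mem_map.mp hv2
        exact absurd hac (by simp)
      | .inr (.inr t₀), .inr (.inl (j, t₀')) =>
        obtain ⟨a, ha, rfl⟩ := Sym2.mem_map.mp hv1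
        obtain ⟨c, hc, hac⟩ := Sym2.mem_map.mp hv2
        exact absurd hac (by simp)

end master

section gadgets

lemma degree_eq_of_nbr {n : ℕ} (G : SimpleGraph (Fin n)) (v : Fin n) (T : Finset (Fin n))
    (h : ∀ w, G.Adj v w ↔ w ∈ T) : G.degree v = T.card := by
  classical
  rw [SimpleGraph.degree]
  congr 1
  ext w
  simp [SimpleGraph.mem_neighborFinset, h]

lemma card_val_lt (n m : ℕ) (h : m ≤ n) :
    ((Finset.univ : Finset (Fin n)).filter (fun v => v.val < m)).card = m := by
  have he : (Finset.univ : Finset (Fin n)).filter (fun v => v.val < m)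
      = (Finset.range m).attachFin (fun x hx => lt_of_lt_of_le (Finset.mem_range.mp hx) h) := by
    ext v; simp [Finset.mem_attachFin]
  rw [he, Finset.card_attachFin, Finset.card_range]

/-- The star `K_{1,Δ}`. -/
def starG (Δ : ℕ) : SimpleGraph (Fin (Δ+1)) where
  Adj v w := v ≠ w ∧ (v.val = 0 ∨ w.val = 0)
  symm := ⟨by intro v w ⟨h1, h2⟩; exact ⟨h1.symm, h2.symm⟩⟩
  loopless := ⟨by intro v ⟨h1, _⟩; exact h1 rfl⟩

lemma starG_degree (Δ : ℕ) (v : Fin (Δ+1)) :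
    (starG Δ).degree v = if v.val = 0 then Δ else 1 := by
  classical
  by_cases hv : v.val = 0
  · rw [if_pos hv, degree_eq_of_nbr _ v (Finset.univ \ {v})
      (by intro w; constructor
          · rintro ⟨h1, _⟩; simp [Ne.symm h1]
          · intro hw
            simp only [Finset.mem_sdiff, Finset.mem_singleton] at hw
            exact ⟨fun h => hw.2 h.symm, Or.inl hv⟩)]
    rw [Finset.card_sdiff_of_subset (by simp)]
    simp
  · rw [if_neg hv, degree_eq_of_nbr _ v ({⟨0, by omega⟩} : Finset (Fin (Δ+1)))
      (by intro w; constructor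
          · rintro ⟨h1, (h2 | h2)⟩
            · exact absurd h2 hv
            · simp only [Finset.mem_singleton, Fin.ext_iff]; exact h2
          · intro hw
            simp only [Finset.mem_singleton] at hw
            subst hw
            exact ⟨fun h => hv (by rw [h]), Or.inr rfl⟩)]
    simp

noncomputable def starPkg (Δ : ℕ) (hΔ : 3 ≤ Δ) : Pkg Δ where
  n := Δ + 1
  G := starG Δ
  ν := 1
  degsum := 2 * Δ
  hdeg_le := by
    intro v; rw [starG_degree]; split <;> omega
  hdeg_pos := by
    intro v; rw [starG_degree]; split <;> omega
  hdeg_max := ⟨⟨0, by omega⟩, by rw [starG_degree]; rfl⟩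
  hdegsum := by
    classical
    have h0 : ((⟨0, by omega⟩ : Fin (Δ+1)) : Fin (Δ+1)) ∈ (Finset.univ : Finset (Fin (Δ+1))) :=
      Finset.mem_univ _
    rw [← Finset.add_sum_erase _ _ h0, starG_degree]
    simp only [if_pos]
    have : ∀ v ∈ (Finset.univ : Finset (Fin (Δ+1))).erase ⟨0, by omega⟩,
        (starG Δ).degree v = 1 := by
      intro v hv
      rw [starG_degree, if_neg]
      intro h
      exact (Finset.mem_erase.mp hv).1 (Fin.ext h)
    rw [Finset.sum_congr rfl this, Finset.sum_const, smul_eq_mul, mul_one,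
      Finset.card_erase_of_mem h0]
    simp only [Finset.card_univ, Fintype.card_fin]
    omega
  mlow := fun _ => s((⟨0, by omega⟩ : Fin (Δ+1)), ⟨1, by omega⟩)
  mlow_mem := by
    intro t
    rw [SimpleGraph.mem_edgeSet]
    exact ⟨by simp [Fin.ext_iff], Or.inl rfl⟩
  mlow_disj := by
    intro t t' hne
    exact absurd (Subsingleton.elim t t') hne
  cov := {⟨0, by omega⟩}
  S' := ∅
  sz := 0
  hν_eq := by simp
  hS'card := by simp
  hsplit := by
    intro e he
    left
    induction e using Sym2.inductionOn with
    | hf a b =>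
      have hadj : (starG Δ).Adj a b := (SimpleGraph.mem_edgeSet _).mp he
      rcases hadj.2 with h | h
      · exact ⟨a, by simp [Fin.ext_iff, h], by simp⟩
      · exact ⟨b, by simp [Fin.ext_iff, h], by simp⟩

end gadgets

section gadgets2

/-- Block for even `Δ`: the complete graph `K_{Δ+1}`. -/
def blockEG (Δ : ℕ) : SimpleGraph (Fin (Δ+1)) where
  Adj v w := v ≠ w
  symm := ⟨fun v w h => h.symm⟩
  loopless := ⟨fun v h => h rfl⟩

lemma blockEG_degree (Δ : ℕ) (v : Fin (Δ+1)) : (blockEG Δ).degree v = Δ := by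
  classical
  rw [degree_eq_of_nbr _ v (Finset.univ \ {v})
    (by intro w; constructor
        · intro h1; simp [Ne.symm h1]
        · intro hw
          simp only [Finset.mem_sdiff, Finset.mem_singleton] at hw
          exact fun h => hw.2 h.symm)]
  rw [Finset.card_sdiff_of_subset (by simp)]
  simp

noncomputable def blockEPkg (Δ : ℕ) (hΔ : 3 ≤ Δ) (hpar : Δ % 2 = 0) : Pkg Δ where
  n := Δ + 1
  G := blockEG Δ
  ν := Δ / 2
  degsum := (Δ + 1) * Δ
  hdeg_le := fun v => le_of_eq (blockEG_degree Δ v)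
  hdeg_pos := fun v => by rw [blockEG_degree]; omega
  hdeg_max := ⟨⟨0, by omega⟩, blockEG_degree Δ _⟩
  hdegsum := by
    rw [Finset.sum_congr rfl (fun v _ => blockEG_degree Δ v), Finset.sum_const, smul_eq_mul]
    simp
  mlow := fun t => s((⟨2 * t.val, by omega⟩ : Fin (Δ+1)), ⟨2 * t.val + 1, by omega⟩)
  mlow_mem := by
    intro t
    rw [SimpleGraph.mem_edgeSet]
    simp only [blockEG, ne_eq, Fin.ext_iff]
    omega
  mlow_disj := by
    intro t t' hne v ⟨h1, h2⟩
    have hne' : t.val ≠ t'.val := fun h => hne (Fin.ext h)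
    rw [Sym2.mem_iff] at h1 h2
    simp only [Fin.ext_iff] at h1 h2
    omega
  cov := ∅
  S' := Finset.univ
  sz := Δ / 2
  hν_eq := by simp
  hS'card := by simp; omega
  hsplit := fun e _ => Or.inr (fun v _ => Finset.mem_univ v)

/-- Block for odd `Δ`: `K_{Δ+2}` minus a near-perfect matching minus one edge. -/
def blockOG (Δ : ℕ) : SimpleGraph (Fin (Δ+2)) where
  Adj v w := v ≠ w ∧ v.val / 2 ≠ w.val / 2 ∧
    ¬(v.val = 0 ∧ w.val = Δ + 1) ∧ ¬(w.val = 0 ∧ v.val = Δ + 1)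
  symm := ⟨by intro v w ⟨h1, h2, h3, h4⟩; exact ⟨h1.symm, h2.symm, h4, h3⟩⟩
  loopless := ⟨by intro v ⟨h1, _⟩; exact h1 rfl⟩

lemma blockOG_degree (Δ : ℕ) (hΔ : 3 ≤ Δ) (hpar : Δ % 2 = 1) (v : Fin (Δ+2)) :
    (blockOG Δ).degree v = if v.val = 0 then Δ - 1 else Δ := by
  classical
  have hv2 := v.isLt
  by_cases hv : v.val = 0
  · rw [if_pos hv, degree_eq_of_nbr _ v
      (Finset.univ \ {v, ⟨1, by omega⟩, ⟨Δ+1, by omega⟩})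
      (by intro w
          simp only [blockOG, Finset.mem_sdiff, Finset.mem_univ, true_and,
            Finset.mem_insert, Finset.mem_singleton, ne_eq, Fin.ext_iff]
          omega)]
    rw [Finset.card_sdiff_of_subset (by simp)]
    have : ({v, ⟨1, by omega⟩, ⟨Δ+1, by omega⟩} : Finset (Fin (Δ+2))).card = 3 := by
      rw [Finset.card_insert_of_notMem (by simp [Fin.ext_iff]; omega),
        Finset.card_insert_of_notMem (by simp [Fin.ext_iff]; omega),
        Finset.card_singleton]
    rw [this]
    simp only [Finset.card_univ, Fintype.card_fin]
    omega
  · by_cases hv1 : v.val = Δ + 1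
    · rw [if_neg hv, degree_eq_of_nbr _ v (Finset.univ \ {v, ⟨0, by omega⟩})
        (by intro w
            simp only [blockOG, Finset.mem_sdiff, Finset.mem_univ, true_and,
              Finset.mem_insert, Finset.mem_singleton, ne_eq, Fin.ext_iff]
            omega)]
      rw [Finset.card_sdiff_of_subset (by simp)]
      have : ({v, ⟨0, by omega⟩} : Finset (Fin (Δ+2))).card = 2 := by
        rw [Finset.card_insert_of_notMem (by simp only [Finset.mem_singleton, Fin.ext_iff]; omega),
          Finset.card_singleton]
      rw [this]
      simp only [Finset.card_univ, Fintype.card_fin]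
      omega
    · -- partner vertex
      have hpl : (if v.val % 2 = 0 then v.val + 1 else v.val - 1) < Δ + 2 := by
        split <;> omega
      rw [if_neg hv, degree_eq_of_nbr _ v
        (Finset.univ \ {v, ⟨if v.val % 2 = 0 then v.val + 1 else v.val - 1, hpl⟩})
        (by intro w
            simp only [blockOG, Finset.mem_sdiff, Finset.mem_univ, true_and,
              Finset.mem_insert, Finset.mem_singleton, ne_eq, Fin.ext_iff]
            split <;> omega)]
      rw [Finset.card_sdiff_of_subset (by simp)]
      have : ({v, ⟨if v.val % 2 = 0 then v.val + 1 else v.val - 1, hpl⟩} :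
          Finset (Fin (Δ+2))).card = 2 := by
        rw [Finset.card_insert_of_notMem (by simp [Fin.ext_iff]; split <;> omega),
          Finset.card_singleton]
      rw [this]
      simp only [Finset.card_univ, Fintype.card_fin]
      omega

noncomputable def blockOPkg (Δ : ℕ) (hΔ : 3 ≤ Δ) (hpar : Δ % 2 = 1) : Pkg Δ where
  n := Δ + 2
  G := blockOG Δ
  ν := (Δ + 1) / 2
  degsum := (Δ + 2) * Δ - 1
  hdeg_le := fun v => by rw [blockOG_degree Δ hΔ hpar]; split <;> omega
  hdeg_pos := fun v => by rw [blockOG_degree Δ hΔ hpar]; split <;> omega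
  hdeg_max := ⟨⟨1, by omega⟩, by rw [blockOG_degree Δ hΔ hpar]; simp⟩
  hdegsum := by
    classical
    have h0 : ((⟨0, by omega⟩ : Fin (Δ+2))) ∈ (Finset.univ : Finset (Fin (Δ+2))) :=
      Finset.mem_univ _
    rw [← Finset.add_sum_erase _ _ h0, blockOG_degree Δ hΔ hpar]
    simp only [if_pos]
    have : ∀ v ∈ (Finset.univ : Finset (Fin (Δ+2))).erase ⟨0, by omega⟩,
        (blockOG Δ).degree v = Δ := by
      intro v hv
      rw [blockOG_degree Δ hΔ hpar, if_neg]
      intro h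
      exact (Finset.mem_erase.mp hv).1 (Fin.ext h)
    rw [Finset.sum_congr rfl this, Finset.sum_const, smul_eq_mul,
      Finset.card_erase_of_mem h0]
    simp only [Finset.card_univ, Fintype.card_fin]
    have e1 : (Δ + 2 - 1) * Δ = (Δ + 1) * Δ := by norm_num
    have e2 : (Δ + 2) * Δ = (Δ + 1) * Δ + Δ := by ring
    omega
  mlow := fun t => s((⟨2 * t.val + 1, by omega⟩ : Fin (Δ+2)), ⟨2 * t.val + 2, by omega⟩)
  mlow_mem := by
    intro t
    have ht := t.isLt
    rw [SimpleGraph.mem_edgeSet]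
    simp only [blockOG, ne_eq, Fin.ext_iff]
    refine ⟨by omega, by omega, by omega, by omega⟩
  mlow_disj := by
    intro t t' hne v ⟨h1, h2⟩
    have hne' : t.val ≠ t'.val := fun h => hne (Fin.ext h)
    rw [Sym2.mem_iff] at h1 h2
    simp only [Fin.ext_iff] at h1 h2
    omega
  cov := ∅
  S' := Finset.univ
  sz := (Δ + 1) / 2
  hν_eq := by simp
  hS'card := by simp; omega
  hsplit := fun e _ => Or.inr (fun v _ => Finset.mem_univ v)

end gadgets2

section gadgets3

lemma card_val_set (n : ℕ) (s : Finset ℕ) (h : ∀ x ∈ s, x < n) :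
    ((Finset.univ : Finset (Fin n)).filter (fun v => v.val ∈ s)).card = s.card := by
  have he : (Finset.univ : Finset (Fin n)).filter (fun v => v.val ∈ s)
      = s.attachFin h := by
    ext v; simp [Finset.mem_attachFin]
  rw [he, Finset.card_attachFin]

lemma degree_eq_valset {n : ℕ} (G : SimpleGraph (Fin n)) (v : Fin n) (s : Finset ℕ)
    (hs : ∀ x ∈ s, x < n) (h : ∀ w : Fin n, G.Adj v w ↔ w.val ∈ s) :
    G.degree v = s.card := by
  rw [degree_eq_of_nbr G v ((Finset.univ : Finset (Fin n)).filter (fun w => w.val ∈ s))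
    (by intro w; rw [h]; simp), card_val_set n s hs]

/-- Two stars sharing one leaf: centers `0, 1`, shared leaf `2`. -/
def dblG (Δ : ℕ) : SimpleGraph (Fin (2*Δ+1)) where
  Adj v w := (v.val = 0 ∧ 2 ≤ w.val ∧ w.val ≤ Δ+1) ∨ (w.val = 0 ∧ 2 ≤ v.val ∧ v.val ≤ Δ+1)
    ∨ (v.val = 1 ∧ (w.val = 2 ∨ Δ+2 ≤ w.val)) ∨ (w.val = 1 ∧ (v.val = 2 ∨ Δ+2 ≤ v.val))
  symm := ⟨by intro v w h; tauto⟩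
  loopless := ⟨by intro v h; omega⟩

lemma dblG_degree (Δ : ℕ) (hΔ : 3 ≤ Δ) (v : Fin (2*Δ+1)) :
    (dblG Δ).degree v = if v.val ≤ 1 then Δ else if v.val = 2 then 2 else 1 := by
  have hv := v.isLt
  by_cases h0 : v.val = 0
  · rw [degree_eq_valset _ v (Finset.Ico 2 (Δ+2))
      (fun x hx => by simp only [Finset.mem_Ico] at hx; omega)
      (by intro w; simp only [dblG, Finset.mem_Ico]; omega)]
    rw [Nat.card_Ico, if_pos (show v.val ≤ 1 by omega)]; omega
  · by_cases h1 : v.val = 1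
    · rw [degree_eq_valset _ v (insert 2 (Finset.Ico (Δ+2) (2*Δ+1)))
        (fun x hx => by simp only [Finset.mem_insert, Finset.mem_Ico] at hx; omega)
        (by intro w; simp only [dblG, Finset.mem_insert, Finset.mem_Ico]; omega)]
      rw [Finset.card_insert_of_notMem (by simp only [Finset.mem_Ico]; omega), Nat.card_Ico,
        if_pos (show v.val ≤ 1 by omega)]
      omega
    · by_cases h2 : v.val = 2
      · rw [degree_eq_valset _ v ({0, 1} : Finset ℕ)
          (fun x hx => by simp only [Finset.mem_insert, Finset.mem_singleton] at hx; omega)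
          (by intro w; simp only [dblG, Finset.mem_insert, Finset.mem_singleton]; omega)]
        rw [if_neg (by omega), if_pos h2, Finset.card_insert_of_notMem (by norm_num),
          Finset.card_singleton]
      · by_cases h3 : v.val ≤ Δ + 1
        · rw [degree_eq_valset _ v ({0} : Finset ℕ)
            (fun x hx => by simp only [Finset.mem_singleton] at hx; omega)
            (by intro w; simp only [dblG, Finset.mem_singleton]; omega)]
          rw [Finset.card_singleton, if_neg (by omega), if_neg (by omega)]
        · rw [degree_eq_valset _ v ({1} : Finset ℕ)
            (fun x hx => by simp only [Finset.mem_singleton] at hx; omega)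
            (by intro w; simp only [dblG, Finset.mem_singleton]; omega)]
          rw [Finset.card_singleton, if_neg (by omega), if_neg (by omega)]

noncomputable def dblPkg (Δ : ℕ) (hΔ : 3 ≤ Δ) : Pkg Δ where
  n := 2*Δ+1
  G := dblG Δ
  ν := 2
  degsum := 4*Δ
  hdeg_le := fun v => by rw [dblG_degree Δ hΔ]; split_ifs <;> omega
  hdeg_pos := fun v => by rw [dblG_degree Δ hΔ]; split_ifs <;> omega
  hdeg_max := ⟨⟨0, by omega⟩, by rw [dblG_degree Δ hΔ]; norm_num⟩
  hdegsum := by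
    have hpt : ∀ v : Fin (2*Δ+1), (dblG Δ).degree v
        = (fun x => if x ≤ 1 then Δ else if x = 2 then 2 else 1) v.val :=
      fun v => dblG_degree Δ hΔ v
    rw [Finset.sum_congr rfl (fun v _ => hpt v),
      Fin.sum_univ_eq_sum_range (fun x => if x ≤ 1 then Δ else if x = 2 then 2 else 1) (2*Δ+1)]
    rw [Finset.range_eq_Ico, ← Finset.sum_Ico_consecutive _ (by omega : 0 ≤ 3) (by omega : 3 ≤ 2*Δ+1)]
    have e1 : ∑ x ∈ Finset.Ico 0 3, (if x ≤ 1 then Δ else if x = 2 then 2 else 1) = 2*Δ + 2 := by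
      rw [← Finset.range_eq_Ico]
      rw [Finset.sum_range_succ, Finset.sum_range_succ, Finset.sum_range_one]
      norm_num; omega
    have e2 : ∑ x ∈ Finset.Ico 3 (2*Δ+1), (if x ≤ 1 then Δ else if x = 2 then 2 else 1)
        = 2*Δ - 2 := by
      rw [Finset.sum_congr rfl (fun x hx => by
        simp only [Finset.mem_Ico] at hx
        rw [if_neg (by omega), if_neg (by omega)]), Finset.sum_const, smul_eq_mul, mul_one,
        Nat.card_Ico]
      omega
    rw [e1, e2]; omega
  mlow := fun t => if t.val = 0 then s((⟨0, by omega⟩ : Fin (2*Δ+1)), ⟨3, by omega⟩)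
    else s((⟨1, by omega⟩ : Fin (2*Δ+1)), ⟨2, by omega⟩)
  mlow_mem := by
    intro t
    by_cases ht : t.val = 0
    · rw [if_pos ht, SimpleGraph.mem_edgeSet]
      exact Or.inl ⟨rfl, (show (2:ℕ) ≤ 3 by omega), (show (3:ℕ) ≤ Δ+1 by omega)⟩
    · rw [if_neg ht, SimpleGraph.mem_edgeSet]
      exact Or.inr (Or.inr (Or.inl ⟨rfl, Or.inl rfl⟩))
  mlow_disj := by
    intro t t' hne v ⟨h1, h2⟩
    have hne' : t.val ≠ t'.val := fun h => hne (Fin.ext h)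
    have hlt := t.isLt
    have hlt' := t'.isLt
    by_cases ht : t.val = 0 <;> by_cases ht' : t'.val = 0
    · omega
    · rw [if_pos ht] at h1
      rw [if_neg ht'] at h2
      rw [Sym2.mem_iff] at h1 h2
      have e1 : v.val = 0 ∨ v.val = 3 := by
        rcases h1 with rfl | rfl
        exacts [Or.inl rfl, Or.inr rfl]
      have e2 : v.val = 1 ∨ v.val = 2 := by
        rcases h2 with rfl | rfl
        exacts [Or.inl rfl, Or.inr rfl]
      omega
    · rw [if_neg ht] at h1
      rw [if_pos ht'] at h2
      rw [Sym2.mem_iff] at h1 h2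
      have e1 : v.val = 1 ∨ v.val = 2 := by
        rcases h1 with rfl | rfl
        exacts [Or.inl rfl, Or.inr rfl]
      have e2 : v.val = 0 ∨ v.val = 3 := by
        rcases h2 with rfl | rfl
        exacts [Or.inl rfl, Or.inr rfl]
      omega
    · omega
  cov := {⟨0, by omega⟩, ⟨1, by omega⟩}
  S' := ∅
  sz := 0
  hν_eq := by
    have hmem : ((⟨0, by omega⟩ : Fin (2*Δ+1)))
        ∉ ({⟨1, by omega⟩} : Finset (Fin (2*Δ+1))) := by
      rw [Finset.mem_singleton]
      intro h
      exact absurd (congrArg Fin.val h) (by norm_num)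
    rw [Finset.card_insert_of_notMem hmem, Finset.card_singleton]
  hS'card := by simp
  hsplit := by
    intro e he
    left
    induction e using Sym2.inductionOn with
    | hf a b =>
      have hadj : (dblG Δ).Adj a b := (SimpleGraph.mem_edgeSet _).mp he
      rcases hadj with ⟨h, -⟩ | ⟨h, -⟩ | ⟨h, -⟩ | ⟨h, -⟩
      · exact ⟨a, by simp [Fin.ext_iff, h], by simp⟩
      · exact ⟨b, by simp [Fin.ext_iff, h], by simp⟩
      · exact ⟨a, by simp [Fin.ext_iff, h], by simp⟩
      · exact ⟨b, by simp [Fin.ext_iff, h], by simp⟩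

end gadgets3

section gadgets4

/-- Odd block with a pendant star attached at vertex `0`; center `Δ+2`, leaves `≥ Δ+3`. -/
def bpG (Δ : ℕ) : SimpleGraph (Fin (2*Δ+2)) where
  Adj v w := (v.val ≤ Δ+1 ∧ w.val ≤ Δ+1 ∧ v.val ≠ w.val ∧ v.val / 2 ≠ w.val / 2 ∧
      ¬(v.val = 0 ∧ w.val = Δ + 1) ∧ ¬(w.val = 0 ∧ v.val = Δ + 1))
    ∨ (v.val = Δ+2 ∧ (w.val = 0 ∨ Δ+3 ≤ w.val))
    ∨ (w.val = Δ+2 ∧ (v.val = 0 ∨ Δ+3 ≤ v.val))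
  symm := ⟨by intro v w h; tauto⟩
  loopless := ⟨by intro v h; omega⟩

lemma bpG_degree (Δ : ℕ) (hΔ : 3 ≤ Δ) (hpar : Δ % 2 = 1) (v : Fin (2*Δ+2)) :
    (bpG Δ).degree v = if v.val < Δ+3 then Δ else 1 := by
  have hv := v.isLt
  by_cases h0 : v.val = 0
  · rw [degree_eq_valset _ v (insert (Δ+2) (Finset.Ico 2 (Δ+1)))
      (fun x hx => by simp only [Finset.mem_insert, Finset.mem_Ico] at hx; omega)
      (by intro w; simp only [bpG, Finset.mem_insert, Finset.mem_Ico]; omega)]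
    rw [Finset.card_insert_of_notMem (by simp only [Finset.mem_Ico]; omega), Nat.card_Ico,
      if_pos (by omega)]
    omega
  · by_cases hc : v.val = Δ+2
    · rw [degree_eq_valset _ v (insert 0 (Finset.Ico (Δ+3) (2*Δ+2)))
        (fun x hx => by simp only [Finset.mem_insert, Finset.mem_Ico] at hx; omega)
        (by intro w; simp only [bpG, Finset.mem_insert, Finset.mem_Ico]; omega)]
      rw [Finset.card_insert_of_notMem (by simp only [Finset.mem_Ico]; omega), Nat.card_Ico,
        if_pos (by omega)]
      omega
    · by_cases hl : Δ+3 ≤ v.val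
      · rw [degree_eq_valset _ v ({Δ+2} : Finset ℕ)
          (fun x hx => by simp only [Finset.mem_singleton] at hx; omega)
          (by intro w; simp only [bpG, Finset.mem_singleton]; omega)]
        rw [Finset.card_singleton, if_neg (by omega)]
      · -- block vertex, 1 ≤ v.val ≤ Δ+1
        have hb : 1 ≤ v.val ∧ v.val ≤ Δ+1 := by omega
        set p : ℕ := if v.val = Δ+1 then 0 else (if v.val % 2 = 0 then v.val + 1 else v.val - 1)
          with hp
        have hpbound : p < 2*Δ+2 := by rw [hp]; split_ifs <;> omega
        have hpne : p ≠ v.val := by rw [hp]; split_ifs <;> omega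
        rw [degree_eq_valset _ v ((Finset.range (Δ+2)) \ {v.val, p})
          (fun x hx => by simp only [Finset.mem_sdiff, Finset.mem_range] at hx; omega)
          (by intro w
              simp only [bpG, Finset.mem_sdiff, Finset.mem_range, Finset.mem_insert,
                Finset.mem_singleton]
              rw [hp]
              split_ifs <;> omega)]
        rw [Finset.card_sdiff_of_subset (by
          intro x hx
          simp only [Finset.mem_insert, Finset.mem_singleton] at hx
          simp only [Finset.mem_range]
          rcases hx with rfl | rfl
          · omega
          · rw [hp]; split_ifs <;> omega)]
        rw [Finset.card_insert_of_notMem (by simp only [Finset.mem_singleton]; omega),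
          Finset.card_singleton, Finset.card_range, if_pos (by omega)]
        omega

noncomputable def bpPkg (Δ : ℕ) (hΔ : 3 ≤ Δ) (hpar : Δ % 2 = 1) : Pkg Δ where
  n := 2*Δ+2
  G := bpG Δ
  ν := (Δ+1)/2 + 1
  degsum := (Δ+3)*Δ + (Δ-1)
  hdeg_le := fun v => by rw [bpG_degree Δ hΔ hpar]; split_ifs <;> omega
  hdeg_pos := fun v => by rw [bpG_degree Δ hΔ hpar]; split_ifs <;> omega
  hdeg_max := ⟨⟨0, by omega⟩, by
    rw [bpG_degree Δ hΔ hpar, if_pos (show (0:ℕ) < Δ+3 by omega)]⟩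
  hdegsum := by
    have hpt : ∀ v : Fin (2*Δ+2), (bpG Δ).degree v
        = (fun x => if x < Δ+3 then Δ else 1) v.val :=
      fun v => bpG_degree Δ hΔ hpar v
    rw [Finset.sum_congr rfl (fun v _ => hpt v),
      Fin.sum_univ_eq_sum_range (fun x => if x < Δ+3 then Δ else 1) (2*Δ+2),
      Finset.range_eq_Ico,
      ← Finset.sum_Ico_consecutive _ (by omega : 0 ≤ Δ+3) (by omega : Δ+3 ≤ 2*Δ+2)]
    have e1 : ∑ x ∈ Finset.Ico 0 (Δ+3), (if x < Δ+3 then Δ else 1) = (Δ+3)*Δ := by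
      rw [Finset.sum_congr rfl (fun x hx => by
        simp only [Finset.mem_Ico] at hx
        rw [if_pos (by omega)]), Finset.sum_const, smul_eq_mul, Nat.card_Ico]
      norm_num
    have e2 : ∑ x ∈ Finset.Ico (Δ+3) (2*Δ+2), (if x < Δ+3 then Δ else 1) = Δ - 1 := by
      rw [Finset.sum_congr rfl (fun x hx => by
        simp only [Finset.mem_Ico] at hx
        rw [if_neg (by omega)]), Finset.sum_const, smul_eq_mul, mul_one, Nat.card_Ico]
      omega
    rw [e1, e2]
  mlow := fun t => if h : t.val < (Δ+1)/2
    then s((⟨2*t.val+1, by omega⟩ : Fin (2*Δ+2)), ⟨2*t.val+2, by omega⟩)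
    else s((⟨Δ+2, by omega⟩ : Fin (2*Δ+2)), ⟨0, by omega⟩)
  mlow_mem := by
    intro t
    by_cases h : t.val < (Δ+1)/2
    · rw [dif_pos h, SimpleGraph.mem_edgeSet]
      have hq := hpar
      exact Or.inl ⟨show 2*t.val+1 ≤ Δ+1 by omega, show 2*t.val+2 ≤ Δ+1 by omega,
        show 2*t.val+1 ≠ 2*t.val+2 by omega,
        show (2*t.val+1)/2 ≠ (2*t.val+2)/2 by omega,
        show ¬(2*t.val+1 = 0 ∧ 2*t.val+2 = Δ+1) by omega,
        show ¬(2*t.val+2 = 0 ∧ 2*t.val+1 = Δ+1) by omega⟩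
    · rw [dif_neg h, SimpleGraph.mem_edgeSet]
      exact Or.inr (Or.inl ⟨rfl, Or.inl rfl⟩)
  mlow_disj := by
    intro t t' hne v ⟨h1, h2⟩
    have hne' : t.val ≠ t'.val := fun h => hne (Fin.ext h)
    have hlt := t.isLt
    have hlt' := t'.isLt
    by_cases ht : t.val < (Δ+1)/2 <;> by_cases ht' : t'.val < (Δ+1)/2
    · rw [dif_pos ht] at h1
      rw [dif_pos ht'] at h2
      rw [Sym2.mem_iff] at h1 h2
      have e1 : v.val = 2*t.val+1 ∨ v.val = 2*t.val+2 := by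
        rcases h1 with rfl | rfl
        exacts [Or.inl rfl, Or.inr rfl]
      have e2 : v.val = 2*t'.val+1 ∨ v.val = 2*t'.val+2 := by
        rcases h2 with rfl | rfl
        exacts [Or.inl rfl, Or.inr rfl]
      omega
    · rw [dif_pos ht] at h1
      rw [dif_neg ht'] at h2
      rw [Sym2.mem_iff] at h1 h2
      have e1 : v.val = 2*t.val+1 ∨ v.val = 2*t.val+2 := by
        rcases h1 with rfl | rfl
        exacts [Or.inl rfl, Or.inr rfl]
      have e2 : v.val = Δ+2 ∨ v.val = 0 := by
        rcases h2 with rfl | rfl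
        exacts [Or.inl rfl, Or.inr rfl]
      omega
    · rw [dif_neg ht] at h1
      rw [dif_pos ht'] at h2
      rw [Sym2.mem_iff] at h1 h2
      have e1 : v.val = Δ+2 ∨ v.val = 0 := by
        rcases h1 with rfl | rfl
        exacts [Or.inl rfl, Or.inr rfl]
      have e2 : v.val = 2*t'.val+1 ∨ v.val = 2*t'.val+2 := by
        rcases h2 with rfl | rfl
        exacts [Or.inl rfl, Or.inr rfl]
      omega
    · omega
  cov := {⟨Δ+2, by omega⟩}
  S' := (Finset.univ : Finset (Fin (2*Δ+2))).filter (fun w => w.val < Δ+2)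
  sz := (Δ+1)/2
  hν_eq := by rw [Finset.card_singleton]; omega
  hS'card := by rw [card_val_lt _ _ (by omega)]; omega
  hsplit := by
    intro e he
    induction e using Sym2.inductionOn with
    | hf a b =>
      have hadj : (bpG Δ).Adj a b := (SimpleGraph.mem_edgeSet _).mp he
      rcases hadj with ⟨ha, hb, -⟩ | ⟨ha, -⟩ | ⟨hb, -⟩
      · right
        intro v hv
        rw [Sym2.mem_iff] at hv
        simp only [Finset.mem_filter, Finset.mem_univ, true_and]
        rcases hv with rfl | rfl <;> omega
      · left
        exact ⟨a, by rw [Finset.mem_singleton]; exact Fin.ext ha, by simp⟩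
      · left
        exact ⟨b, by rw [Finset.mem_singleton]; exact Fin.ext hb, by simp⟩

/-- Complement of a `(Δ+3)`-cycle, for even `Δ`: a `Δ`-regular graph on `Δ+3` vertices. -/
def qG (Δ : ℕ) : SimpleGraph (Fin (Δ+3)) where
  Adj v w := v.val ≠ w.val ∧
    ¬(w.val = v.val + 1 ∨ v.val = w.val + 1 ∨ (v.val = 0 ∧ w.val = Δ+2) ∨
      (w.val = 0 ∧ v.val = Δ+2))
  symm := ⟨by intro v w h; constructor <;> omega⟩
  loopless := ⟨by intro v h; omega⟩

lemma qG_degree (Δ : ℕ) (hΔ : 3 ≤ Δ) (v : Fin (Δ+3)) : (qG Δ).degree v = Δ := by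
  have hv := v.isLt
  set x : ℕ := if v.val = Δ+2 then 0 else v.val + 1 with hx
  set y : ℕ := if v.val = 0 then Δ+2 else v.val - 1 with hy
  rw [degree_eq_valset _ v ((Finset.range (Δ+3)) \ {v.val, x, y})
    (fun z hz => by simp only [Finset.mem_sdiff, Finset.mem_range] at hz; omega)
    (by intro w
        simp only [qG, Finset.mem_sdiff, Finset.mem_range, Finset.mem_insert,
          Finset.mem_singleton]
        rw [hx, hy]
        split_ifs <;> omega)]
  rw [Finset.card_sdiff_of_subset (by
    intro z hz
    simp only [Finset.mem_insert, Finset.mem_singleton] at hz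
    simp only [Finset.mem_range]
    rcases hz with rfl | rfl | rfl
    · omega
    · rw [hx]; split_ifs <;> omega
    · rw [hy]; split_ifs <;> omega)]
  have hc : ({v.val, x, y} : Finset ℕ).card = 3 := by
    rw [Finset.card_insert_of_notMem (by
          simp only [Finset.mem_insert, Finset.mem_singleton]
          rw [hx, hy]; split_ifs <;> omega),
      Finset.card_insert_of_notMem (by
          simp only [Finset.mem_singleton]
          rw [hx, hy]; split_ifs <;> omega),
      Finset.card_singleton]
  rw [hc, Finset.card_range]
  omega

noncomputable def qPkg (Δ : ℕ) (hΔ : 3 ≤ Δ) (hpar : Δ % 2 = 0) : Pkg Δ where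
  n := Δ+3
  G := qG Δ
  ν := (Δ+2)/2
  degsum := (Δ+3)*Δ
  hdeg_le := fun v => le_of_eq (qG_degree Δ hΔ v)
  hdeg_pos := fun v => by rw [qG_degree Δ hΔ]; omega
  hdeg_max := ⟨⟨0, by omega⟩, qG_degree Δ hΔ _⟩
  hdegsum := by
    rw [Finset.sum_congr rfl (fun v _ => qG_degree Δ hΔ v), Finset.sum_const, smul_eq_mul]
    simp [mul_comm]
  mlow := fun t => s((⟨t.val, by omega⟩ : Fin (Δ+3)), ⟨t.val + (Δ+2)/2, by omega⟩)
  mlow_mem := by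
    intro t
    have hlt := t.isLt
    rw [SimpleGraph.mem_edgeSet]
    exact ⟨show t.val ≠ t.val + (Δ+2)/2 by omega,
      show ¬(t.val + (Δ+2)/2 = t.val + 1 ∨ t.val = (t.val + (Δ+2)/2) + 1 ∨
        (t.val = 0 ∧ t.val + (Δ+2)/2 = Δ+2) ∨ (t.val + (Δ+2)/2 = 0 ∧ t.val = Δ+2)) by omega⟩
  mlow_disj := by
    intro t t' hne v ⟨h1, h2⟩
    have hne' : t.val ≠ t'.val := fun h => hne (Fin.ext h)
    have hlt := t.isLt
    have hlt' := t'.isLt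
    rw [Sym2.mem_iff] at h1 h2
    have e1 : v.val = t.val ∨ v.val = t.val + (Δ+2)/2 := by
      rcases h1 with rfl | rfl
      exacts [Or.inl rfl, Or.inr rfl]
    have e2 : v.val = t'.val ∨ v.val = t'.val + (Δ+2)/2 := by
      rcases h2 with rfl | rfl
      exacts [Or.inl rfl, Or.inr rfl]
    omega
  cov := ∅
  S' := Finset.univ
  sz := (Δ+2)/2
  hν_eq := by simp
  hS'card := by simp; omega
  hsplit := fun e _ => Or.inr (fun v _ => Finset.mem_univ v)

end gadgets4

section final

lemma card_ne_of_no_iso {V W : Type} [Fintype V] [Fintype W] (G₁ : SimpleGraph V)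
    (G₂ : SimpleGraph W) (h : Fintype.card V ≠ Fintype.card W) : ¬ Nonempty (G₁ ≃g G₂) := by
  rintro ⟨iso⟩
  exact h (Fintype.card_congr iso.toEquiv)

lemma final_step {V : Type} [Fintype V] (G₁ : SimpleGraph V) {Δ : ℕ} (k b : ℕ)
    (P S X : Pkg Δ)
    (hδ : G₁.maxDegree = Δ)
    (hν : matchingNumber G₁ = k * P.ν + (b * S.ν + X.ν))
    (hE : 2 * G₁.edgeFinset.card = k * P.degsum + (b * S.degsum + X.degsum))
    (hcard : Fintype.card V ≠ k * P.n + (b * S.n + X.n)) :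
    ∃ (W : Type) (_ : Fintype W) (G₂ : SimpleGraph W),
      (∀ w : W, 0 < G₂.degree w) ∧
      G₂.edgeFinset.card = G₁.edgeFinset.card ∧
      matchingNumber G₂ = matchingNumber G₁ ∧
      G₂.maxDegree = G₁.maxDegree ∧
      ¬ Nonempty (G₁ ≃g G₂) := by
  classical
  refine ⟨_, _, asm k b P S X, asm_deg_pos k b P S X, ?_, ?_, ?_, ?_⟩
  · have h1 := asm_edge_card k b P S X
    omega
  · rw [asm_nu, hν]
  · rw [asm_maxDegree, hδ]
  · apply card_ne_of_no_iso
    rw [asm_card]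
    exact hcard

end final

section main

lemma main_core {V : Type} [Fintype V] (G₁ : SimpleGraph V) (Δ ν₀ : ℕ)
    (hδ : G₁.maxDegree = Δ) (hν : matchingNumber G₁ = ν₀)
    (hν2 : 2 ≤ ν₀) (hΔ3 : 3 ≤ Δ)
    (hE : 2 * G₁.edgeFinset.card = 2 * (Δ * ν₀ + (ν₀ / ((Δ+1)/2)) * (Δ / 2)))
    (hndvd : ¬ ((Δ+1)/2 ∣ ν₀)) :
    ∃ (W : Type) (_ : Fintype W) (G₂ : SimpleGraph W),
      (∀ w : W, 0 < G₂.degree w) ∧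
      G₂.edgeFinset.card = G₁.edgeFinset.card ∧
      matchingNumber G₂ = matchingNumber G₁ ∧
      G₂.maxDegree = G₁.maxDegree ∧
      ¬ Nonempty (G₁ ≃g G₂) := by
  classical
  have hc2 : 2 ≤ (Δ+1)/2 := by omega
  obtain ⟨k, hk⟩ : ∃ k, ν₀ / ((Δ+1)/2) = k := ⟨_, rfl⟩
  obtain ⟨r, hr⟩ : ∃ r, ν₀ % ((Δ+1)/2) = r := ⟨_, rfl⟩
  have hn : ν₀ = ((Δ+1)/2) * k + r := by rw [← hk, ← hr, Nat.div_add_mod]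
  have hr1 : 1 ≤ r := by
    rcases Nat.eq_zero_or_pos r with h | h
    · exact absurd (Nat.dvd_of_mod_eq_zero (by omega)) hndvd
    · exact h
  have hrc : r < (Δ+1)/2 := by rw [← hr]; exact Nat.mod_lt _ (by omega)
  rw [hk] at hE
  rcases Nat.mod_two_eq_zero_or_one Δ with hp | hp
  · -- Δ even
    obtain ⟨d, hdd⟩ : ∃ d, Δ = 2 * d := ⟨Δ/2, by omega⟩
    have hd2 : 2 ≤ d := by omega
    have hcd : (Δ+1)/2 = d := by omega
    have hd21 : Δ/2 = d := by omega
    rw [hcd] at hn hrc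
    have hmc : k * d = d * k := Nat.mul_comm k d
    by_cases hre : 2 ≤ r
    · obtain ⟨r2, hr2⟩ : ∃ r2, r = r2 + 2 := ⟨r - 2, by omega⟩
      by_cases hveq : Fintype.card V = k * (Δ+1) + ((r-1) * (Δ+1) + (Δ+1))
      · -- use B = k blocks + (r-2) stars + double star
        apply final_step G₁ k (r-2) (blockEPkg Δ hΔ3 hp) (starPkg Δ hΔ3) (dblPkg Δ hΔ3) hδ
        · rw [hν]
          show ν₀ = k * (Δ/2) + ((r-2) * 1 + 2)
          rw [hd21]
          omega
        · show 2 * G₁.edgeFinset.card = k * ((Δ+1)*Δ) + ((r-2) * (2*Δ) + 4*Δ)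
          rw [hE, hn, hd21, hr2, hdd]
          have hs : r2 + 2 - 2 = r2 := by omega
          rw [hs]
          ring
        · show Fintype.card V ≠ k * (Δ+1) + ((r-2) * (Δ+1) + (2*Δ+1))
          rw [hveq, hr2]
          have e0 : r2 + 2 - 1 = r2 + 1 := by omega
          have e0' : r2 + 2 - 2 = r2 := by omega
          rw [e0, e0']
          have e1 : (r2+1)*(Δ+1) = r2*(Δ+1) + (Δ+1) := by ring
          omega
      · -- use A = k blocks + (r-1) stars + star
        apply final_step G₁ k (r-1) (blockEPkg Δ hΔ3 hp) (starPkg Δ hΔ3) (starPkg Δ hΔ3) hδ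
        · rw [hν]
          show ν₀ = k * (Δ/2) + ((r-1) * 1 + 1)
          rw [hd21]
          omega
        · show 2 * G₁.edgeFinset.card = k * ((Δ+1)*Δ) + ((r-1) * (2*Δ) + 2*Δ)
          rw [hE, hn, hd21, hr2, hdd]
          have hs : r2 + 2 - 1 = r2 + 1 := by omega
          rw [hs]
          ring
        · exact hveq
    · -- r = 1
      have hre1 : r = 1 := by omega
      have hk1 : 1 ≤ k := by
        rcases Nat.eq_zero_or_pos k with h | h
        · rw [h, Nat.mul_zero] at hn; omega
        · exact h
      obtain ⟨k1, hk1e⟩ : ∃ k1, k = k1 + 1 := ⟨k - 1, by omega⟩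
      by_cases hveq : Fintype.card V = k * (Δ+1) + (0 * (Δ+1) + (Δ+1))
      · -- use B = (k-1) blocks + 0 stars + Q
        apply final_step G₁ (k-1) 0 (blockEPkg Δ hΔ3 hp) (starPkg Δ hΔ3) (qPkg Δ hΔ3 hp) hδ
        · rw [hν]
          show ν₀ = (k-1) * (Δ/2) + (0 * 1 + (Δ+2)/2)
          rw [hd21, hk1e]
          rw [hk1e] at hn
          have hs : k1 + 1 - 1 = k1 := by omega
          have e2 : (Δ+2)/2 = d + 1 := by omega
          rw [hs, e2]
          have e3 : d * (k1+1) = d * k1 + d := by ring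
          have hmc2 : k1 * d = d * k1 := Nat.mul_comm k1 d
          omega
        · show 2 * G₁.edgeFinset.card = (k-1) * ((Δ+1)*Δ) + (0 * (2*Δ) + (Δ+3)*Δ)
          rw [hE, hn, hd21, hre1, hdd, hk1e]
          have hs : k1 + 1 - 1 = k1 := by omega
          rw [hs]
          ring
        · show Fintype.card V ≠ (k-1) * (Δ+1) + (0 * (Δ+1) + (Δ+3))
          rw [hveq, hk1e]
          have hs : k1 + 1 - 1 = k1 := by omega
          rw [hs]
          have e1 : (k1+1)*(Δ+1) = k1*(Δ+1) + (Δ+1) := by ring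
          omega
      · -- use A = k blocks + 0 stars + star
        apply final_step G₁ k 0 (blockEPkg Δ hΔ3 hp) (starPkg Δ hΔ3) (starPkg Δ hΔ3) hδ
        · rw [hν]
          show ν₀ = k * (Δ/2) + (0 * 1 + 1)
          rw [hd21]
          omega
        · show 2 * G₁.edgeFinset.card = k * ((Δ+1)*Δ) + (0 * (2*Δ) + 2*Δ)
          rw [hE, hn, hd21, hre1, hdd]
          ring
        · exact hveq
  · -- Δ odd
    obtain ⟨d, hdd⟩ : ∃ d, Δ = 2 * d + 1 := ⟨Δ/2, by omega⟩
    have hd1 : 1 ≤ d := by omega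
    have hcd : (Δ+1)/2 = d + 1 := by omega
    have hd21 : Δ/2 = d := by omega
    rw [hcd] at hn hrc
    have hmc : k * (d+1) = (d+1) * k := Nat.mul_comm _ _
    have hbo : (Δ+2)*Δ - 1 = 4*d*d+8*d+2 := by
      have h1 : (Δ+2)*Δ = (2*d+1+2)*(2*d+1) := by rw [hdd]
      have h2 : (2*d+1+2)*(2*d+1) = 4*d*d+8*d+3 := by ring
      omega
    by_cases hre : 2 ≤ r
    · obtain ⟨r2, hr2⟩ : ∃ r2, r = r2 + 2 := ⟨r - 2, by omega⟩
      by_cases hveq : Fintype.card V = k * (Δ+2) + ((r-1) * (Δ+1) + (Δ+1))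
      · -- B = k blocks + (r-2) stars + double star
        apply final_step G₁ k (r-2) (blockOPkg Δ hΔ3 hp) (starPkg Δ hΔ3) (dblPkg Δ hΔ3) hδ
        · rw [hν]
          show ν₀ = k * ((Δ+1)/2) + ((r-2) * 1 + 2)
          rw [hcd]
          omega
        · show 2 * G₁.edgeFinset.card = k * ((Δ+2)*Δ-1) + ((r-2) * (2*Δ) + 4*Δ)
          rw [hE, hn, hd21, hr2, hbo, hdd]
          have hs : r2 + 2 - 2 = r2 := by omega
          rw [hs]
          ring
        · show Fintype.card V ≠ k * (Δ+2) + ((r-2) * (Δ+1) + (2*Δ+1))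
          rw [hveq, hr2]
          have e0 : r2 + 2 - 1 = r2 + 1 := by omega
          have e0' : r2 + 2 - 2 = r2 := by omega
          rw [e0, e0']
          have e1 : (r2+1)*(Δ+1) = r2*(Δ+1) + (Δ+1) := by ring
          omega
      · -- A = k blocks + (r-1) stars + star
        apply final_step G₁ k (r-1) (blockOPkg Δ hΔ3 hp) (starPkg Δ hΔ3) (starPkg Δ hΔ3) hδ
        · rw [hν]
          show ν₀ = k * ((Δ+1)/2) + ((r-1) * 1 + 1)
          rw [hcd]
          omega
        · show 2 * G₁.edgeFinset.card = k * ((Δ+2)*Δ-1) + ((r-1) * (2*Δ) + 2*Δ)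
          rw [hE, hn, hd21, hr2, hbo, hdd]
          have hs : r2 + 2 - 1 = r2 + 1 := by omega
          rw [hs]
          ring
        · exact hveq
    · -- r = 1
      have hre1 : r = 1 := by omega
      have hk1 : 1 ≤ k := by
        rcases Nat.eq_zero_or_pos k with h | h
        · rw [h, Nat.mul_zero] at hn; omega
        · exact h
      obtain ⟨k1, hk1e⟩ : ∃ k1, k = k1 + 1 := ⟨k - 1, by omega⟩
      by_cases hveq : Fintype.card V = k * (Δ+2) + (0 * (Δ+1) + (Δ+1))
      · -- B = (k-1) blocks + 0 stars + block-with-pendant-star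
        apply final_step G₁ (k-1) 0 (blockOPkg Δ hΔ3 hp) (starPkg Δ hΔ3) (bpPkg Δ hΔ3 hp) hδ
        · rw [hν]
          show ν₀ = (k-1) * ((Δ+1)/2) + (0 * 1 + ((Δ+1)/2 + 1))
          rw [hcd, hk1e]
          rw [hk1e] at hn
          have hs : k1 + 1 - 1 = k1 := by omega
          rw [hs]
          have e3 : (d+1) * (k1+1) = (d+1) * k1 + (d+1) := by ring
          have hmc2 : k1 * (d+1) = (d+1) * k1 := Nat.mul_comm _ _
          omega
        · show 2 * G₁.edgeFinset.card
            = (k-1) * ((Δ+2)*Δ-1) + (0 * (2*Δ) + ((Δ+3)*Δ + (Δ-1)))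
          rw [hE, hn, hd21, hre1, hbo, hk1e, hdd]
          have hs : k1 + 1 - 1 = k1 := by omega
          have hs2 : 2*d+1-1 = 2*d := by omega
          rw [hs, hs2]
          ring
        · show Fintype.card V ≠ (k-1) * (Δ+2) + (0 * (Δ+1) + (2*Δ+2))
          rw [hveq, hk1e]
          have hs : k1 + 1 - 1 = k1 := by omega
          rw [hs]
          have e1 : (k1+1)*(Δ+2) = k1*(Δ+2) + (Δ+2) := by ring
          omega
      · -- A = k blocks + 0 stars + star
        apply final_step G₁ k 0 (blockOPkg Δ hΔ3 hp) (starPkg Δ hΔ3) (starPkg Δ hΔ3) hδ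
        · rw [hν]
          show ν₀ = k * ((Δ+1)/2) + (0 * 1 + 1)
          rw [hcd]
          omega
        · show 2 * G₁.edgeFinset.card = k * ((Δ+2)*Δ-1) + (0 * (2*Δ) + 2*Δ)
          rw [hE, hn, hd21, hre1, hbo, hdd]
          ring
        · exact hveq

end main

theorem stmt_8 {V : Type} [Fintype V] (G₁ : SimpleGraph V)
    (hiso : ∀ v : V, 0 < G₁.degree v)
    (hν : 2 ≤ matchingNumber G₁) (hΔ : 2 ≤ G₁.maxDegree)
    (hE : G₁.edgeFinset.card =
      G₁.maxDegree * matchingNumber G₁ +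
        (matchingNumber G₁ / ((G₁.maxDegree + 1) / 2)) * (G₁.maxDegree / 2))
    (hndvd : ¬ ((G₁.maxDegree + 1) / 2 ∣ matchingNumber G₁)) :
    ∃ (W : Type) (_ : Fintype W) (G₂ : SimpleGraph W),
      (∀ w : W, 0 < G₂.degree w) ∧
      G₂.edgeFinset.card = G₁.edgeFinset.card ∧
      matchingNumber G₂ = matchingNumber G₁ ∧
      G₂.maxDegree = G₁.maxDegree ∧
      ¬ Nonempty (G₁ ≃g G₂) := by
  have hΔ3 : 3 ≤ G₁.maxDegree := by
    rcases Nat.lt_or_ge G₁.maxDegree 3 with h | h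
    · exfalso
      apply hndvd
      have : (G₁.maxDegree + 1)/2 = 1 := by omega
      rw [this]
      exact one_dvd _
    · exact h
  exact main_core G₁ G₁.maxDegree (matchingNumber G₁) rfl rfl hν hΔ3 (by rw [hE]) hndvd
end
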